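/- arXiv:1812.04874 — 11 statements merged into one kernel-verified Lean document; each statement's English description precedes it below -/
import Mathlib

section
/- Let f be a C² function positive on a closed interval I ⊆ ℝ, with 0 < m ≤ inf{f(t) : t ∈ I} and |f'(t)| ≤ D, |f''(t)| ≤ D for t ∈ I. If p² ≤ 4q and N > D/(2m) + D²/(2m²), then the function φ(t) = e^{N(t²+pt+q)} f(t) satisfies φ''(t) ≥ -D²/m - D + 2Nm > 0 for all t ∈ I; in particular φ is strongly convex on I. -/
open Real Set

private lemma expquad_hasDerivAt (N p q t : ℝ) :
    HasDerivAt (fun t : ℝ => Real.exp (N * (t ^ 2 + p * t + q)))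
      (Real.exp (N * (t ^ 2 + p * t + q)) * (N * (2 * t + p))) t := by
  have hg : HasDerivAt (fun t : ℝ => N * (t ^ 2 + p * t + q)) (N * (2 * t + p)) t := by
    have h1 : HasDerivAt (fun t : ℝ => t ^ 2) (2 * t) t := by
      simpa using hasDerivAt_pow 2 t
    have h2 : HasDerivAt (fun t : ℝ => p * t) p t := by
      simpa using (hasDerivAt_id t).const_mul p
    have : HasDerivAt (fun t : ℝ => t ^ 2 + p * t + q) (2 * t + p) t := by
      simpa using (h1.add h2).add_const q
    exact this.const_mul N
  exact hg.exp

private lemma phi1_hasDerivAt (f : ℝ → ℝ) (hfd : Differentiable ℝ f) (N p q t : ℝ) :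
    HasDerivAt (fun t : ℝ => Real.exp (N * (t ^ 2 + p * t + q)) * f t)
      (Real.exp (N * (t ^ 2 + p * t + q)) * ((N * (2 * t + p)) * f t + deriv f t)) t := by
  have h := (expquad_hasDerivAt N p q t).fun_mul (hfd t).hasDerivAt
  refine h.congr_deriv ?_
  ring

private lemma phi2_hasDerivAt (f : ℝ → ℝ) (hfd : Differentiable ℝ f)
    (hfd1 : Differentiable ℝ (deriv f)) (N p q t : ℝ) :
    HasDerivAt (fun t : ℝ =>
        Real.exp (N * (t ^ 2 + p * t + q)) * ((N * (2 * t + p)) * f t + deriv f t))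
      (Real.exp (N * (t ^ 2 + p * t + q)) * ((N * (2 * t + p)) ^ 2 * f t
        + 2 * (N * (2 * t + p)) * deriv f t + 2 * N * f t + deriv (deriv f) t)) t := by
  have hl : HasDerivAt (fun t : ℝ => N * (2 * t + p)) (N * 2) t := by
    have h0 : HasDerivAt (fun t : ℝ => 2 * t + p) 2 t := by
      simpa using ((hasDerivAt_id t).const_mul 2).add_const p
    exact h0.const_mul N
  have hu : HasDerivAt (fun t : ℝ => (N * (2 * t + p)) * f t + deriv f t)
      ((N * 2) * f t + (N * (2 * t + p)) * deriv f t + deriv (deriv f) t) t :=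
    (hl.mul (hfd t).hasDerivAt).add (hfd1 t).hasDerivAt
  have h := (expquad_hasDerivAt N p q t).fun_mul hu
  refine h.congr_deriv ?_
  ring

/-- For a `C²` function `f` positive on a closed interval `I ⊆ ℝ`, with
`0 < m ≤ inf f(I)`, `|f'| ≤ D`, `|f''| ≤ D` on `I`, if `p² ≤ 4q` and
`N > D/(2m) + D²/(2m²)`, then `φ(t) = e^{N(t²+pt+q)} f(t)` satisfies
`φ'' ≥ -D²/m - D + 2Nm > 0` on `I`; in particular `φ` is strongly convex on `I`. -/
theorem stmt0 (f : ℝ → ℝ) (I : Set ℝ) (hIcl : IsClosed I) (hIcon : Convex ℝ I)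
    (hf : ContDiff ℝ 2 f) (m D N p q : ℝ) (hD : 0 < D) (hm : 0 < m)
    (hmf : ∀ t ∈ I, m ≤ f t)
    (hf' : ∀ t ∈ I, |deriv f t| ≤ D)
    (hf'' : ∀ t ∈ I, |deriv (deriv f) t| ≤ D)
    (hpq : p ^ 2 ≤ 4 * q)
    (hN : D / (2 * m) + D ^ 2 / (2 * m ^ 2) < N) :
    (∀ t ∈ I,
      -D ^ 2 / m - D + 2 * N * m ≤
        deriv (deriv (fun t => Real.exp (N * (t ^ 2 + p * t + q)) * f t)) t) ∧
    0 < -D ^ 2 / m - D + 2 * N * m ∧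
    StrongConvexOn I (-D ^ 2 / m - D + 2 * N * m)
      (fun t => Real.exp (N * (t ^ 2 + p * t + q)) * f t) := by
  have hN0 : 0 < N := lt_trans (by positivity) hN
  have hc0 : 0 < -D ^ 2 / m - D + 2 * N * m := by
    have h2 : (D * m + D ^ 2) / (2 * m ^ 2) < N := by
      rw [show (D * m + D ^ 2) / (2 * m ^ 2) = D / (2 * m) + D ^ 2 / (2 * m ^ 2) by
        field_simp]
      exact hN
    rw [div_lt_iff₀ (by positivity)] at h2
    rw [show -D ^ 2 / m - D + 2 * N * m = (2 * N * m ^ 2 - D * m - D ^ 2) / m by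
      field_simp; ring]
    apply div_pos _ hm
    linarith
  have hfd : Differentiable ℝ f := hf.differentiable (by norm_num)
  have hfd1 : ContDiff ℝ 1 (deriv f) :=
    ((contDiff_succ_iff_deriv (n := 1)).mp (by exact_mod_cast hf)).2.2
  have hfd1' : Differentiable ℝ (deriv f) := hfd1.differentiable one_ne_zero
  have hderivφ : deriv (fun t : ℝ => Real.exp (N * (t ^ 2 + p * t + q)) * f t)
      = fun t : ℝ => Real.exp (N * (t ^ 2 + p * t + q)) * ((N * (2 * t + p)) * f t + deriv f t) :=
    funext fun t => (phi1_hasDerivAt f hfd N p q t).deriv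
  have hderiv2 : ∀ t : ℝ,
      deriv (deriv (fun t : ℝ => Real.exp (N * (t ^ 2 + p * t + q)) * f t)) t
      = Real.exp (N * (t ^ 2 + p * t + q)) * ((N * (2 * t + p)) ^ 2 * f t
        + 2 * (N * (2 * t + p)) * deriv f t + 2 * N * f t + deriv (deriv f) t) := by
    intro t
    rw [hderivφ]
    exact (phi2_hasDerivAt f hfd hfd1' N p q t).deriv
  -- main pointwise bound
  have key : ∀ t ∈ I, -D ^ 2 / m - D + 2 * N * m ≤
      Real.exp (N * (t ^ 2 + p * t + q)) * ((N * (2 * t + p)) ^ 2 * f t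
        + 2 * (N * (2 * t + p)) * deriv f t + 2 * N * f t + deriv (deriv f) t) := by
    intro t ht
    have hft := hmf t ht
    have hft' := abs_le.mp (hf' t ht)
    have hft'' := abs_le.mp (hf'' t ht)
    set x : ℝ := N * (2 * t + p) with hx
    have habs : |x| ^ 2 = x ^ 2 := sq_abs x
    have hinner : -D ^ 2 / m - D + 2 * N * m ≤
        x ^ 2 * f t + 2 * x * deriv f t + 2 * N * f t + deriv (deriv f) t := by
      have h1 : -(2 * |x| * D) ≤ 2 * x * deriv f t := by
        rcases le_or_gt 0 x with hx0 | hx0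
        · rw [abs_of_nonneg hx0]
          nlinarith [mul_nonneg hx0 (show (0:ℝ) ≤ deriv f t + D by linarith [hft'.1])]
        · rw [abs_of_neg hx0]
          nlinarith [mul_nonneg (show (0:ℝ) ≤ -x by linarith)
            (show (0:ℝ) ≤ D - deriv f t by linarith [hft'.2])]
      have h2 : -D ^ 2 / m ≤ m * x ^ 2 - 2 * D * |x| := by
        rw [neg_div, neg_le, ← sub_nonneg]
        have : D ^ 2 / m - -(m * x ^ 2 - 2 * D * |x|) = (m * |x| - D) ^ 2 / m := by
          field_simp; rw [← habs]; ring
        rw [this]; positivity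
      have h3 : x ^ 2 * m ≤ x ^ 2 * f t := by nlinarith [sq_nonneg x]
      have h4 : 2 * N * m ≤ 2 * N * f t := by nlinarith
      have h5 : -D ≤ deriv (deriv f) t := hft''.1
      linarith [h1, h2, h3, h4, h5]
    have hA1 : 1 ≤ Real.exp (N * (t ^ 2 + p * t + q)) := by
      apply Real.one_le_exp
      have : 0 ≤ t ^ 2 + p * t + q := by nlinarith [sq_nonneg (t + p / 2)]
      positivity
    calc -D ^ 2 / m - D + 2 * N * m
        ≤ x ^ 2 * f t + 2 * x * deriv f t + 2 * N * f t + deriv (deriv f) t := hinner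
      _ ≤ Real.exp (N * (t ^ 2 + p * t + q))
          * (x ^ 2 * f t + 2 * x * deriv f t + 2 * N * f t + deriv (deriv f) t) :=
          le_mul_of_one_le_left (le_trans hc0.le hinner) hA1
  refine ⟨fun t ht => by rw [hderiv2 t]; exact key t ht, hc0, ?_⟩
  -- strong convexity
  rw [strongConvexOn_iff_convex]
  have hψeq : (fun x : ℝ => Real.exp (N * (x ^ 2 + p * x + q)) * f x
      - (-D ^ 2 / m - D + 2 * N * m) / 2 * ‖x‖ ^ 2)
      = fun x : ℝ => Real.exp (N * (x ^ 2 + p * x + q)) * f x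
      - (-D ^ 2 / m - D + 2 * N * m) / 2 * x ^ 2 := by
    funext x; rw [Real.norm_eq_abs, sq_abs]
  rw [hψeq]
  set c : ℝ := -D ^ 2 / m - D + 2 * N * m with hcdef
  have hq1 : ∀ x : ℝ, HasDerivAt (fun x : ℝ => Real.exp (N * (x ^ 2 + p * x + q)) * f x
      - c / 2 * x ^ 2)
      (Real.exp (N * (x ^ 2 + p * x + q)) * ((N * (2 * x + p)) * f x + deriv f x) - c * x)
      x := by
    intro x
    have h := (phi1_hasDerivAt f hfd N p q x).sub ((hasDerivAt_pow 2 x).const_mul (c / 2))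
    refine h.congr_deriv ?_
    simp; ring
  have hq2 : ∀ x : ℝ, HasDerivAt (fun x : ℝ =>
      Real.exp (N * (x ^ 2 + p * x + q)) * ((N * (2 * x + p)) * f x + deriv f x) - c * x)
      (Real.exp (N * (x ^ 2 + p * x + q)) * ((N * (2 * x + p)) ^ 2 * f x
        + 2 * (N * (2 * x + p)) * deriv f x + 2 * N * f x + deriv (deriv f) x) - c) x := by
    intro x
    have h := (phi2_hasDerivAt f hfd hfd1' N p q x).fun_sub ((hasDerivAt_id x).const_mul c)
    simpa using h
  have hdq1 : deriv (fun x : ℝ => Real.exp (N * (x ^ 2 + p * x + q)) * f x - c / 2 * x ^ 2)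
      = fun x : ℝ => Real.exp (N * (x ^ 2 + p * x + q)) * ((N * (2 * x + p)) * f x + deriv f x)
        - c * x :=
    funext fun x => (hq1 x).deriv
  apply convexOn_of_deriv2_nonneg hIcon
  · exact fun x _ => (hq1 x).continuousAt.continuousWithinAt
  · exact fun x _ => ((hq1 x).differentiableAt).differentiableWithinAt
  · rw [hdq1]
    exact fun x _ => ((hq2 x).differentiableAt).differentiableWithinAt
  · intro x hx
    have hxI : x ∈ I := interior_subset hx
    simp only [Function.iterate_succ, Function.iterate_zero, Function.comp_apply, id_eq]
    rw [hdq1, (hq2 x).deriv]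
    have := key x hxI
    linarith
end

section
/- Let f be a C² function on a closed interval I ⊆ ℝ with m < inf{f(t) : t ∈ I}, and |f'(t)| ≤ D, |f''(t)| ≤ D on I. Then for every ξ ∈ ℝ and every N ≥ 1, the function ψ(t) = e^{N(t-ξ)²} (f(t) - m + D) is strongly convex on I. -/
open Real Set

/-- For a `C²` function `f` on a closed interval `I ⊆ ℝ` with
`m < inf f(I)` and `|f'| ≤ D`, `|f''| ≤ D` on `I`, for every `ξ ∈ ℝ` and `N ≥ 1`
the function `ψ(t) = e^{N(t-ξ)²}(f(t) - m + D)` is strongly convex on `I`. -/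
theorem stmt1 (f : ℝ → ℝ) (I : Set ℝ) (hIcl : IsClosed I) (hIcon : Convex ℝ I)
    (hf : ContDiff ℝ 2 f) (m D : ℝ) (hD : 0 < D)
    (hmf : ∃ m', m < m' ∧ ∀ t ∈ I, m' ≤ f t)
    (hf' : ∀ t ∈ I, |deriv f t| ≤ D)
    (hf'' : ∀ t ∈ I, |deriv (deriv f) t| ≤ D) :
    ∀ ξ : ℝ, ∀ N : ℝ, 1 ≤ N →
      ∃ μ > 0, StrongConvexOn I μ
        (fun t => Real.exp (N * (t - ξ) ^ 2) * (f t - m + D)) := by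
  intro ξ N hN
  obtain ⟨m', hmm', hm'⟩ := hmf
  set ε := m' - m with hεdef
  have hε : 0 < ε := by simp [hεdef]; linarith
  have hfd : Differentiable ℝ f := hf.differentiable (by norm_num)
  have hfd2 : Differentiable ℝ (deriv f) := by
    have h2 : ContDiff ℝ ((1:ℕ∞)+1) f := by exact_mod_cast hf
    exact (contDiff_succ_iff_deriv.mp h2).2.2.differentiable (by norm_num)
  set ψ : ℝ → ℝ := fun t => Real.exp (N * (t - ξ) ^ 2) * (f t - m + D) with hψ
  set ψ' : ℝ → ℝ := fun t =>
    Real.exp (N * (t - ξ) ^ 2) * (2 * N * (t - ξ) * (f t - m + D) + deriv f t) with hψ'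
  have hexp : ∀ t : ℝ, HasDerivAt (fun t => Real.exp (N * (t - ξ) ^ 2))
      (2 * N * (t - ξ) * Real.exp (N * (t - ξ) ^ 2)) t := by
    intro t
    have h1 : HasDerivAt (fun t : ℝ => N * (t - ξ) ^ 2) (2 * N * (t - ξ)) t := by
      have := (((hasDerivAt_id t).sub_const ξ).pow 2).const_mul N
      convert this using 1 <;> (try rfl) <;> (try simp only [id_eq]) <;> try ring
    simpa [mul_comm] using h1.exp
  have key1 : ∀ t : ℝ, HasDerivAt ψ (ψ' t) t := by
    intro t
    have hg : HasDerivAt (fun t => f t - m + D) (deriv f t) t :=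
      ((hfd t).hasDerivAt.sub_const m).add_const D
    have := (hexp t).mul hg
    convert this using 1 <;> try rfl
    simp [hψ']; ring
  have hderiv1 : deriv ψ = ψ' := funext fun t => (key1 t).deriv
  have key2 : ∀ t : ℝ, HasDerivAt ψ'
      (Real.exp (N * (t - ξ) ^ 2) * ((2 * N + 4 * N ^ 2 * (t - ξ) ^ 2) * (f t - m + D)
        + 4 * N * (t - ξ) * deriv f t + deriv (deriv f) t)) t := by
    intro t
    have hg : HasDerivAt (fun t => 2 * N * (t - ξ) * (f t - m + D) + deriv f t)
        (2 * N * (f t - m + D) + 2 * N * (t - ξ) * deriv f t + deriv (deriv f) t) t := by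
      have h1 : HasDerivAt (fun t : ℝ => 2 * N * (t - ξ)) (2 * N) t := by
        simpa using ((hasDerivAt_id t).sub_const ξ).const_mul (2 * N)
      have h2 : HasDerivAt (fun t => f t - m + D) (deriv f t) t :=
        ((hfd t).hasDerivAt.sub_const m).add_const D
      have := (h1.mul h2).add (hfd2 t).hasDerivAt
      convert this using 1 <;> (try rfl) <;> (try simp only [id_eq]) <;> try ring
    have := (hexp t).mul hg
    convert this using 1 <;> try rfl
    ring
  refine ⟨ε, hε, ?_⟩
  rw [strongConvexOn_iff_convex]
  have hfun : (fun x => ψ x - ε / 2 * ‖x‖ ^ 2) = fun x => ψ x - ε / 2 * x ^ 2 := by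
    funext x; rw [Real.norm_eq_abs, sq_abs]
  rw [hfun]
  set h : ℝ → ℝ := fun x => ψ x - ε / 2 * x ^ 2 with hh
  have keyh : ∀ t : ℝ, HasDerivAt h (ψ' t - ε * t) t := by
    intro t
    have : HasDerivAt (fun x : ℝ => ε / 2 * x ^ 2) (ε * t) t := by
      have := ((hasDerivAt_id t).pow 2).const_mul (ε / 2)
      convert this using 1 <;> (try rfl) <;> (try simp only [id_eq]) <;> try ring
    exact (key1 t).sub this
  have hderivh : deriv h = fun t => ψ' t - ε * t := funext fun t => (keyh t).deriv
  have keyh2 : ∀ t : ℝ, HasDerivAt (deriv h)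
      (Real.exp (N * (t - ξ) ^ 2) * ((2 * N + 4 * N ^ 2 * (t - ξ) ^ 2) * (f t - m + D)
        + 4 * N * (t - ξ) * deriv f t + deriv (deriv f) t) - ε) t := by
    intro t
    rw [hderivh]
    convert (key2 t).sub ((hasDerivAt_id t).const_mul ε) using 1 <;> try rfl
    ring
  apply convexOn_of_deriv2_nonneg' hIcon
  · exact fun t _ => ((keyh t).differentiableAt).differentiableWithinAt
  · exact fun t _ => ((keyh2 t).differentiableAt).differentiableWithinAt
  · intro t ht
    have h2 : deriv^[2] h t = Real.exp (N * (t - ξ) ^ 2) *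
        ((2 * N + 4 * N ^ 2 * (t - ξ) ^ 2) * (f t - m + D)
          + 4 * N * (t - ξ) * deriv f t + deriv (deriv f) t) - ε := by
      show deriv (deriv h) t = _
      exact (keyh2 t).deriv
    rw [h2]
    have hft : m' ≤ f t := hm' t ht
    have h1 := abs_le.mp (hf' t ht)
    have h2' := abs_le.mp (hf'' t ht)
    have hbr : ε ≤ (2 * N + 4 * N ^ 2 * (t - ξ) ^ 2) * (f t - m + D)
        + 4 * N * (t - ξ) * deriv f t + deriv (deriv f) t := by
      have hg : D + ε ≤ f t - m + D := by simp [hεdef]; linarith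
      nlinarith [sq_nonneg (2 * N * (t - ξ) - 1), sq_nonneg (2 * N * (t - ξ) + 1),
        sq_nonneg (t - ξ), mul_pos (mul_pos (by linarith : (0:ℝ) < 4 * N) (by linarith : (0:ℝ) < N)) hε,
        mul_nonneg (mul_nonneg (by positivity : (0:ℝ) ≤ 4 * N ^ 2) (sq_nonneg (t - ξ))) hε.le,
        mul_nonneg (by linarith : (0:ℝ) ≤ 2 * N - 2) hD.le]
    have hexp1 : (1:ℝ) ≤ Real.exp (N * (t - ξ) ^ 2) :=
      Real.one_le_exp (by positivity)
    nlinarith [mul_le_mul_of_nonneg_left hbr (by positivity : (0:ℝ) ≤ Real.exp (N * (t - ξ) ^ 2))]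
end

section
/- Let f ∈ ℝ[x₁,…,xₙ] be a polynomial positive on a compact convex set X ⊆ ℝⁿ, let R = max{|x| : x ∈ X}, and 0 < m ≤ min{f(x) : x ∈ X}. Write f = Σ_{j=0}^{d} Σ_{|ν|=j} a_ν x^ν and set D_n(f,R) = max{1, Σ_{j=1}^{d} Σ_{|ν|=j} j|a_ν| R^{j-1}, Σ_{j=1}^{d} Σ_{|ν|=j} j(j-1)|a_ν| R^{j-2}}. Then for any ξ ∈ ℝⁿ, any D ≥ D_n(f,R), and any real N > D/(2m) + D²/(2m²), the function φ(x) = e^{N|x-ξ|²} f(x) is strongly convex on X. -/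
open Real Set MvPolynomial

/-- The degree `|ν|` of a multi-index. -/
noncomputable def mdeg {n : ℕ} (ν : Fin n →₀ ℕ) : ℕ := ν.sum fun _ e => e

/-- `D_n(f,R) = max {1, Σ j|a_ν|R^{j-1}, Σ j(j-1)|a_ν|R^{j-2}}`. -/
noncomputable def Dn {n : ℕ} (f : MvPolynomial (Fin n) ℝ) (R : ℝ) : ℝ :=
  max 1 (max
    (∑ ν ∈ f.support, (mdeg ν : ℝ) * |f.coeff ν| * R ^ (mdeg ν - 1))
    (∑ ν ∈ f.support, (mdeg ν : ℝ) * ((mdeg ν : ℝ) - 1) * |f.coeff ν| * R ^ (mdeg ν - 2)))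

lemma hasDerivAt_eval_line {n : ℕ} (f : MvPolynomial (Fin n) ℝ) (x v : Fin n → ℝ) (t : ℝ) :
    HasDerivAt (fun s => MvPolynomial.eval (fun i => x i + s * v i) f)
      (∑ i, v i * MvPolynomial.eval (fun i => x i + t * v i) (pderiv i f)) t := by
  induction f using MvPolynomial.induction_on with
  | C a =>
      simp only [eval_C, pderiv_C, map_zero, mul_zero, Finset.sum_const_zero]
      exact hasDerivAt_const t a
  | add p q hp hq =>
      simp only [map_add, mul_add, Finset.sum_add_distrib]
      exact hp.add hq
  | mul_X p i hp =>
      have hx : HasDerivAt (fun s : ℝ => x i + s * v i) (v i) t := by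
        simpa using ((hasDerivAt_id t).mul_const (v i)).const_add (x i)
      have hmul := hp.fun_mul hx
      simp only [eval_mul, eval_X]
      refine hmul.congr_deriv (Eq.symm ?_)
      classical
      simp only [pderiv_mul, eval_add, eval_mul, eval_X, pderiv_X]
      rw [Finset.sum_congr rfl (fun k _ => by rw [mul_add])]
      rw [Finset.sum_add_distrib]
      congr 1
      · rw [Finset.sum_mul]
        exact Finset.sum_congr rfl fun k _ => by ring
      · rw [Finset.sum_eq_single i]
        · simp [mul_comm]
        · intro k _ hki
          simp [Pi.single_eq_of_ne (Ne.symm hki)]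
        · simp

lemma mdeg_eq_sum {n : ℕ} (ν : Fin n →₀ ℕ) : mdeg ν = ∑ i, ν i :=
  Finsupp.sum_fintype _ _ (fun _ => rfl)

lemma mdeg_add {n : ℕ} (a b : Fin n →₀ ℕ) : mdeg (a + b) = mdeg a + mdeg b := by
  simp [mdeg_eq_sum, Finsupp.add_apply, Finset.sum_add_distrib]

lemma mdeg_single {n : ℕ} (i : Fin n) : mdeg (Finsupp.single i 1) = 1 := by
  simp [mdeg, Finsupp.sum_single_index]

lemma mdeg_sub_single_add {n : ℕ} (ν : Fin n →₀ ℕ) (i : Fin n) (h : ν i ≠ 0) :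
    mdeg (ν - Finsupp.single i 1) + 1 = mdeg ν := by
  have hle : Finsupp.single i 1 ≤ ν := by
    rw [Finsupp.single_le_iff]; omega
  conv_rhs => rw [← tsub_add_cancel_of_le hle]
  rw [mdeg_add, mdeg_single]

lemma abs_eval_monomial_le {n : ℕ} (ν : Fin n →₀ ℕ) (a : ℝ) (y : Fin n → ℝ) (R : ℝ)
    (hR : 0 ≤ R) (hy : ∀ i, |y i| ≤ R) :
    |MvPolynomial.eval y (monomial ν a)| ≤ |a| * R ^ mdeg ν := by
  rw [eval_monomial, abs_mul]
  gcongr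
  show |∏ i ∈ ν.support, y i ^ ν i| ≤ R ^ mdeg ν
  calc |∏ i ∈ ν.support, y i ^ ν i| = ∏ i ∈ ν.support, |y i| ^ ν i := by
        rw [Finset.abs_prod]; simp [abs_pow]
    _ ≤ ∏ i ∈ ν.support, R ^ ν i :=
        Finset.prod_le_prod (fun i _ => by positivity)
          (fun i _ => pow_le_pow_left₀ (abs_nonneg _) (hy i) _)
    _ = R ^ ∑ i ∈ ν.support, ν i := Finset.prod_pow_eq_pow_sum _ _ _
    _ = R ^ mdeg ν := rfl

lemma abs_deriv1_monomial_le {n : ℕ} (ν : Fin n →₀ ℕ) (a : ℝ) (y v : Fin n → ℝ)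
    (R V : ℝ) (hR : 0 ≤ R) (hy : ∀ i, |y i| ≤ R) (hV : 0 ≤ V) (hv : ∀ i, |v i| ≤ V) :
    |∑ i, v i * MvPolynomial.eval y (pderiv i (monomial ν a))|
      ≤ (mdeg ν : ℝ) * |a| * R ^ (mdeg ν - 1) * V := by
  have key : ∀ i : Fin n, |v i * MvPolynomial.eval y (pderiv i (monomial ν a))|
      ≤ (ν i : ℝ) * (|a| * R ^ (mdeg ν - 1) * V) := by
    intro i
    rw [abs_mul, pderiv_monomial]
    by_cases h : ν i = 0
    · simp only [h, Nat.cast_zero, mul_zero, map_zero, abs_zero, zero_mul]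
      positivity
    · have hb := abs_eval_monomial_le (ν - Finsupp.single i 1) (a * (ν i : ℝ)) y R hR hy
      have hm : mdeg (ν - Finsupp.single i 1) = mdeg ν - 1 := by
        have := mdeg_sub_single_add ν i h
        omega
      rw [hm, abs_mul, Nat.abs_cast] at hb
      refine le_trans (mul_le_mul (hv i) hb (abs_nonneg _) hV) (le_of_eq (by ring))
  calc |∑ i, v i * MvPolynomial.eval y (pderiv i (monomial ν a))|
      ≤ ∑ i, |v i * MvPolynomial.eval y (pderiv i (monomial ν a))| :=
        Finset.abs_sum_le_sum_abs _ _
    _ ≤ ∑ i, (ν i : ℝ) * (|a| * R ^ (mdeg ν - 1) * V) := Finset.sum_le_sum fun i _ => key i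
    _ = (mdeg ν : ℝ) * |a| * R ^ (mdeg ν - 1) * V := by
        rw [← Finset.sum_mul, mdeg_eq_sum]
        push_cast
        ring

lemma abs_deriv2_monomial_le {n : ℕ} (ν : Fin n →₀ ℕ) (a : ℝ) (y v : Fin n → ℝ)
    (R V : ℝ) (hR : 0 ≤ R) (hy : ∀ i, |y i| ≤ R) (hV : 0 ≤ V) (hv : ∀ i, |v i| ≤ V) :
    |∑ i, v i * ∑ k, v k * MvPolynomial.eval y (pderiv k (pderiv i (monomial ν a)))|
      ≤ (mdeg ν : ℝ) * ((mdeg ν : ℝ) - 1) * |a| * R ^ (mdeg ν - 2) * V ^ 2 := by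
  by_cases hj : mdeg ν = 0
  · have hz : ∀ i : Fin n, ν i = 0 := by
      intro i
      have h0 : ∑ i, ν i = 0 := by rw [← mdeg_eq_sum, hj]
      exact (Finset.sum_eq_zero_iff.mp h0) i (Finset.mem_univ i)
    have hzz : ∀ i : Fin n, v i * ∑ k, v k *
        MvPolynomial.eval y (pderiv k (pderiv i (monomial ν a))) = 0 := by
      intro i
      simp [pderiv_monomial, hz i]
    rw [Finset.sum_congr rfl (fun i _ => hzz i)]
    simp [hj]
  · set j := mdeg ν with hjdef
    set C := |a| * R ^ (j - 2) * V ^ 2 with hC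
    have hC0 : 0 ≤ C := by positivity
    have key : ∀ i k : Fin n,
        |v i * (v k * MvPolynomial.eval y (pderiv k (pderiv i (monomial ν a))))|
          ≤ (ν i : ℝ) * ((ν - Finsupp.single i 1 : Fin n →₀ ℕ) k : ℝ) * C := by
      intro i k
      rw [pderiv_monomial, pderiv_monomial]
      by_cases h1 : ν i = 0
      · simp only [h1, Nat.cast_zero, mul_zero, zero_mul, map_zero, abs_zero]
        positivity
      · by_cases h2 : (ν - Finsupp.single i 1 : Fin n →₀ ℕ) k = 0
        · simp only [h2, Nat.cast_zero, mul_zero, zero_mul, map_zero, abs_zero]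
          positivity
        · have hm2 : mdeg (ν - Finsupp.single i 1 - Finsupp.single k 1) = j - 2 := by
            have e1 := mdeg_sub_single_add ν i h1
            have e2 := mdeg_sub_single_add (ν - Finsupp.single i 1) k h2
            omega
          have hb := abs_eval_monomial_le (ν - Finsupp.single i 1 - Finsupp.single k 1)
            (a * (ν i : ℝ) * ((ν - Finsupp.single i 1 : Fin n →₀ ℕ) k : ℝ)) y R hR hy
          rw [hm2, abs_mul, abs_mul, Nat.abs_cast, Nat.abs_cast] at hb
          rw [abs_mul, abs_mul]
          have h2' := mul_le_mul (hv k) hb (abs_nonneg _) hV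
          have h3 := mul_le_mul (hv i) h2' (by positivity) hV
          refine le_trans h3 (le_of_eq ?_)
          rw [hC]; ring
    have keysum : ∀ i : Fin n,
        |v i * ∑ k, v k * MvPolynomial.eval y (pderiv k (pderiv i (monomial ν a)))|
          ≤ (ν i : ℝ) * ((j : ℝ) - 1) * C := by
      intro i
      rw [Finset.mul_sum]
      refine le_trans (Finset.abs_sum_le_sum_abs _ _) ?_
      refine le_trans (Finset.sum_le_sum fun k _ => key i k) ?_
      by_cases h1 : ν i = 0
      · simp [h1]
      · have hmm : ((mdeg (ν - Finsupp.single i 1) : ℕ) : ℝ) = (j : ℝ) - 1 := by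
          have h4 := mdeg_sub_single_add ν i h1
          have h5 := congrArg (fun t : ℕ => (t : ℝ)) h4
          push_cast at h5
          rw [hjdef]
          linarith
        refine le_of_eq ?_
        rw [← Finset.sum_mul, ← Finset.mul_sum, ← Nat.cast_sum, ← mdeg_eq_sum, hmm]
    refine le_trans (Finset.abs_sum_le_sum_abs _ _) ?_
    refine le_trans (Finset.sum_le_sum fun i _ => keysum i) (le_of_eq ?_)
    rw [← Finset.sum_mul, ← Finset.sum_mul, ← Nat.cast_sum, ← mdeg_eq_sum, ← hjdef, hC]
    ring

lemma abs_deriv1_le {n : ℕ} (f : MvPolynomial (Fin n) ℝ) (y v : Fin n → ℝ)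
    (R V : ℝ) (hR : 0 ≤ R) (hy : ∀ i, |y i| ≤ R) (hV : 0 ≤ V) (hv : ∀ i, |v i| ≤ V) :
    |∑ i, v i * MvPolynomial.eval y (pderiv i f)|
      ≤ (∑ ν ∈ f.support, (mdeg ν : ℝ) * |f.coeff ν| * R ^ (mdeg ν - 1)) * V := by
  conv_lhs => rw [← support_sum_monomial_coeff f]
  simp only [map_sum, Finset.mul_sum]
  rw [Finset.sum_comm]
  refine le_trans (Finset.abs_sum_le_sum_abs _ _) ?_
  rw [Finset.sum_mul]
  exact Finset.sum_le_sum fun ν _ => abs_deriv1_monomial_le ν (f.coeff ν) y v R V hR hy hV hv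

lemma abs_deriv2_le {n : ℕ} (f : MvPolynomial (Fin n) ℝ) (y v : Fin n → ℝ)
    (R V : ℝ) (hR : 0 ≤ R) (hy : ∀ i, |y i| ≤ R) (hV : 0 ≤ V) (hv : ∀ i, |v i| ≤ V) :
    |∑ i, v i * ∑ k, v k * MvPolynomial.eval y (pderiv k (pderiv i f))|
      ≤ (∑ ν ∈ f.support,
          (mdeg ν : ℝ) * ((mdeg ν : ℝ) - 1) * |f.coeff ν| * R ^ (mdeg ν - 2)) * V ^ 2 := by
  have step : ∀ i : Fin n, v i * ∑ k, v k * MvPolynomial.eval y (pderiv k (pderiv i f))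
      = ∑ ν ∈ f.support, v i * ∑ k, v k *
          MvPolynomial.eval y (pderiv k (pderiv i (monomial ν (f.coeff ν)))) := by
    intro i
    conv_lhs => rw [← support_sum_monomial_coeff f]
    simp only [map_sum, Finset.mul_sum]
    rw [Finset.sum_comm]
  rw [Finset.sum_congr rfl (fun i _ => step i), Finset.sum_comm]
  refine le_trans (Finset.abs_sum_le_sum_abs _ _) ?_
  rw [Finset.sum_mul]
  exact Finset.sum_le_sum fun ν _ => abs_deriv2_monomial_le ν (f.coeff ν) y v R V hR hy hV hv

lemma euclid_coord_abs_le {n : ℕ} (w : EuclideanSpace ℝ (Fin n)) (i : Fin n) :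
    |w i| ≤ ‖w‖ := by
  have h1 : |w i| = Real.sqrt (|w i| ^ 2) := (Real.sqrt_sq (abs_nonneg _)).symm
  rw [h1, EuclideanSpace.norm_eq]
  apply Real.sqrt_le_sqrt
  have h2 : |w i| ^ 2 = ‖w i‖ ^ 2 := by rw [Real.norm_eq_abs]
  rw [h2]
  exact Finset.single_le_sum (f := fun j => ‖w j‖ ^ 2) (fun j _ => by positivity)
    (Finset.mem_univ i)

lemma lin_hasDeriv (c0 c1 t : ℝ) : HasDerivAt (fun s => c0 + c1 * s) c1 t := by
  simpa using ((hasDerivAt_id t).const_mul c1).const_add c0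

lemma quad_hasDeriv (c0 c1 c2 t : ℝ) :
    HasDerivAt (fun s => c0 + c1 * s + c2 * s ^ 2) (c1 + 2 * c2 * t) t := by
  have h1 : HasDerivAt (fun s : ℝ => c0 + c1 * s) c1 t := lin_hasDeriv c0 c1 t
  have h2 : HasDerivAt (fun s : ℝ => c2 * s ^ 2) (c2 * (2 * t)) t := by
    simpa using (hasDerivAt_pow 2 t).const_mul c2
  have e : c1 + 2 * c2 * t = c1 + c2 * (2 * t) := by ring
  rw [e]
  exact h1.add h2

set_option maxHeartbeats 1000000 in
/-- If a real polynomial `f` is positive on a compact convex `X ⊆ ℝⁿ`,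
`R = max{|x| : x ∈ X}` and `0 < m ≤ min f(X)`, then for any `ξ ∈ ℝⁿ`, any
`D ≥ D_n(f,R)` and any `N > D/(2m) + D²/(2m²)`, the function
`φ(x) = e^{N|x-ξ|²} f(x)` is strongly convex on `X`. -/
theorem stmt2 {n : ℕ} (X : Set (EuclideanSpace ℝ (Fin n)))
    (hXc : IsCompact X) (hXcon : Convex ℝ X)
    (f : MvPolynomial (Fin n) ℝ)
    (hpos : ∀ x ∈ X, 0 < MvPolynomial.eval (fun i => x i) f)
    (R : ℝ) (hR : IsGreatest ((fun x => ‖x‖) '' X) R)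
    (m : ℝ) (hm : 0 < m) (hmf : ∀ x ∈ X, m ≤ MvPolynomial.eval (fun i => x i) f) :
    ∀ ξ : EuclideanSpace ℝ (Fin n), ∀ D : ℝ, Dn f R ≤ D →
      ∀ N : ℝ, D / (2 * m) + D ^ 2 / (2 * m ^ 2) < N →
        ∃ μ > 0, StrongConvexOn X μ
          (fun x => Real.exp (N * ‖x - ξ‖ ^ 2) * MvPolynomial.eval (fun i => x i) f) := by
  intro ξ D hD N hN
  obtain ⟨⟨x₀, hx₀, hx₀R⟩, hub'⟩ := hR
  have hub : ∀ z ∈ X, ‖z‖ ≤ R := fun z hz => hub' ⟨z, hz, rfl⟩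
  have hR0 : 0 ≤ R := hx₀R ▸ norm_nonneg x₀
  have hD1 : 1 ≤ D := le_trans (le_max_left _ _) hD
  have hDpos : 0 < D := lt_of_lt_of_le one_pos hD1
  have hS1 : (∑ ν ∈ f.support, (mdeg ν : ℝ) * |f.coeff ν| * R ^ (mdeg ν - 1)) ≤ D :=
    le_trans (le_trans (le_max_left _ _) (le_max_right _ _)) hD
  have hS2 : (∑ ν ∈ f.support,
      (mdeg ν : ℝ) * ((mdeg ν : ℝ) - 1) * |f.coeff ν| * R ^ (mdeg ν - 2)) ≤ D :=
    le_trans (le_trans (le_max_right _ _) (le_max_right _ _)) hD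
  have hN0 : 0 < N := by
    have : (0:ℝ) < D / (2 * m) + D ^ 2 / (2 * m ^ 2) := by positivity
    linarith
  set μ : ℝ := 2 * N * m - D - D ^ 2 / m with hμdef
  have hμkey : μ = 2 * m * (N - (D / (2 * m) + D ^ 2 / (2 * m ^ 2))) := by
    rw [hμdef]; field_simp; ring
  have hμpos : 0 < μ := by
    rw [hμkey]
    exact mul_pos (by linarith) (sub_pos.mpr hN)
  refine ⟨μ, hμpos, ?_⟩
  rw [strongConvexOn_iff_convex]
  refine ⟨hXcon, fun x hx y hy a b ha hb hab => ?_⟩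
  simp only
  set v : EuclideanSpace ℝ (Fin n) := y - x with hv
  set w : EuclideanSpace ℝ (Fin n) := x - ξ with hw
  set xf : Fin n → ℝ := fun i => x i with hxf
  set vf : Fin n → ℝ := fun i => v i with hvf
  set p : ℝ → ℝ := fun t => MvPolynomial.eval (fun i => xf i + t * vf i) f with hp
  set p1 : ℝ → ℝ := fun t =>
    ∑ i, vf i * MvPolynomial.eval (fun i => xf i + t * vf i) (pderiv i f) with hp1
  set p2 : ℝ → ℝ := fun t =>
    ∑ i, vf i * ∑ k, vf k *
      MvPolynomial.eval (fun i => xf i + t * vf i) (pderiv k (pderiv i f)) with hp2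
  set q : ℝ → ℝ := fun t => ‖w‖ ^ 2 + 2 * (inner ℝ w v : ℝ) * t + ‖v‖ ^ 2 * t ^ 2 with hq
  set q1 : ℝ → ℝ := fun t => 2 * (inner ℝ w v : ℝ) + 2 * ‖v‖ ^ 2 * t with hq1
  set r : ℝ → ℝ := fun t => ‖x‖ ^ 2 + 2 * (inner ℝ x v : ℝ) * t + ‖v‖ ^ 2 * t ^ 2 with hr
  set r1 : ℝ → ℝ := fun t => 2 * (inner ℝ x v : ℝ) + 2 * ‖v‖ ^ 2 * t with hr1
  set γ : ℝ → ℝ := fun t => Real.exp (N * q t) * p t - μ / 2 * r t with hγ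
  set γ1 : ℝ → ℝ := fun t =>
    Real.exp (N * q t) * (N * q1 t * p t + p1 t) - μ / 2 * r1 t with hγ1
  set γ2 : ℝ → ℝ := fun t =>
    Real.exp (N * q t) *
      ((N * (2 * ‖v‖ ^ 2) + (N * q1 t) ^ 2) * p t + 2 * (N * q1 t) * p1 t + p2 t)
      - μ * ‖v‖ ^ 2 with hγ2
  have hcoord : ∀ t : ℝ, (fun i => (x + t • v) i) = fun i => xf i + t * vf i := by
    intro t; funext i
    simp [hxf, hvf]
  have hqval : ∀ t : ℝ, ‖x + t • v - ξ‖ ^ 2 = q t := by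
    intro t
    have h1 : x + t • v - ξ = w + t • v := by rw [hw]; abel
    rw [h1, norm_add_sq_real, real_inner_smul_right, norm_smul, Real.norm_eq_abs, mul_pow,
      sq_abs, hq]
    ring
  have hrval : ∀ t : ℝ, ‖x + t • v‖ ^ 2 = r t := by
    intro t
    rw [norm_add_sq_real, real_inner_smul_right, norm_smul, Real.norm_eq_abs, mul_pow,
      sq_abs, hr]
    ring
  have hγval : ∀ t : ℝ, γ t = Real.exp (N * ‖x + t • v - ξ‖ ^ 2) *
      MvPolynomial.eval (fun i => (x + t • v) i) f - μ / 2 * ‖x + t • v‖ ^ 2 := by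
    intro t
    rw [hqval t, hrval t, hcoord t]
  -- derivatives
  have hqd : ∀ t : ℝ, HasDerivAt q (q1 t) t := by
    intro t
    simp only [hq, hq1]
    exact quad_hasDeriv _ _ _ t
  have hrd : ∀ t : ℝ, HasDerivAt r (r1 t) t := by
    intro t
    simp only [hr, hr1]
    exact quad_hasDeriv _ _ _ t
  have hq1d : ∀ t : ℝ, HasDerivAt q1 (2 * ‖v‖ ^ 2) t := by
    intro t
    simp only [hq1]
    exact lin_hasDeriv _ _ t
  have hr1d : ∀ t : ℝ, HasDerivAt r1 (2 * ‖v‖ ^ 2) t := by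
    intro t
    simp only [hr1]
    exact lin_hasDeriv _ _ t
  have hpd : ∀ t : ℝ, HasDerivAt p (p1 t) t := by
    intro t
    simp only [hp, hp1]
    exact hasDerivAt_eval_line f xf vf t
  have hp1d : ∀ t : ℝ, HasDerivAt p1 (p2 t) t := by
    intro t
    simp only [hp1, hp2]
    exact HasDerivAt.fun_sum fun i _ =>
      (hasDerivAt_eval_line (pderiv i f) xf vf t).const_mul (vf i)
  have hEd : ∀ t : ℝ, HasDerivAt (fun s => Real.exp (N * q s))
      (Real.exp (N * q t) * (N * q1 t)) t := fun t => ((hqd t).const_mul N).exp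
  have hγd : ∀ t : ℝ, HasDerivAt γ (γ1 t) t := by
    intro t
    have h1 := ((hEd t).fun_mul (hpd t)).fun_sub ((hrd t).const_mul (μ / 2))
    simp only [hγ, hγ1]
    refine h1.congr_deriv ?_
    ring
  have hγ1d : ∀ t : ℝ, HasDerivAt γ1 (γ2 t) t := by
    intro t
    have hg : HasDerivAt (fun s => N * q1 s * p s + p1 s)
        (N * (2 * ‖v‖ ^ 2) * p t + N * q1 t * p1 t + p2 t) t :=
      (((hq1d t).const_mul N).fun_mul (hpd t)).fun_add (hp1d t)
    have h1 := ((hEd t).fun_mul hg).fun_sub ((hr1d t).const_mul (μ / 2))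
    simp only [hγ1, hγ2]
    refine h1.congr_deriv ?_
    ring
  clear_value μ v w xf vf p p1 p2 q q1 r r1 γ γ1 γ2
  -- second derivative is nonnegative on the interior
  have hγ2nonneg : ∀ t ∈ interior (Icc (0:ℝ) 1), 0 ≤ γ2 t := by
    intro t ht
    rw [interior_Icc] at ht
    have hz : x + t • v ∈ X := by
      have h0 := hXcon.add_smul_sub_mem hx hy ⟨le_of_lt ht.1, le_of_lt ht.2⟩
      rwa [← hv] at h0
    have hznorm : ‖x + t • v‖ ≤ R := hub _ hz
    have hycoord : ∀ i, |xf i + t * vf i| ≤ R := by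
      intro i
      have h1 := euclid_coord_abs_le (x + t • v) i
      have e : (x + t • v) i = xf i + t * vf i := congrFun (hcoord t) i
      rw [e] at h1
      exact le_trans h1 hznorm
    have hvcoord : ∀ i, |vf i| ≤ ‖v‖ := by
      intro i
      simp only [hvf]
      exact euclid_coord_abs_le v i
    have hpm : m ≤ p t := by
      have h1 := hmf _ hz
      rw [hcoord t] at h1
      simpa only [hp] using h1
    have hp1b : |p1 t| ≤ D * ‖v‖ := by
      simp only [hp1]
      refine le_trans (abs_deriv1_le f _ vf R ‖v‖ hR0 hycoord (norm_nonneg v) hvcoord) ?_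
      exact mul_le_mul_of_nonneg_right hS1 (norm_nonneg v)
    have hp2b : |p2 t| ≤ D * ‖v‖ ^ 2 := by
      simp only [hp2]
      refine le_trans (abs_deriv2_le f _ vf R ‖v‖ hR0 hycoord (norm_nonneg v) hvcoord) ?_
      exact mul_le_mul_of_nonneg_right hS2 (by positivity)
    have hq0 : 0 ≤ q t := by rw [← hqval t]; positivity
    have hE1 : 1 ≤ Real.exp (N * q t) := Real.one_le_exp (by positivity)
    set A : ℝ := N * q1 t with hA
    clear_value A
    have hp1l := abs_le.mp hp1b
    have hp2l := abs_le.mp hp2b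
    have hp1sq : p1 t ^ 2 ≤ D ^ 2 * ‖v‖ ^ 2 := by
      nlinarith [abs_nonneg (p1 t), hp1b, sq_abs (p1 t),
        mul_nonneg hDpos.le (norm_nonneg v)]
    have hμm : μ * m = 2 * N * m * m - D * m - D ^ 2 := by
      rw [hμdef]; field_simp
    have h1 : 0 ≤ 2 * N * ‖v‖ ^ 2 * ((p t - m) * m) :=
      mul_nonneg (by positivity) (mul_nonneg (by linarith) hm.le)
    have h2 : 0 ≤ A ^ 2 * ((p t - m) * m) :=
      mul_nonneg (sq_nonneg A) (mul_nonneg (by linarith) hm.le)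
    have h3 : 0 ≤ (A * m + p1 t) ^ 2 := sq_nonneg _
    have h5 : 0 ≤ (p2 t + D * ‖v‖ ^ 2) * m := mul_nonneg (by linarith [hp2l.1]) hm.le
    have hBm : μ * ‖v‖ ^ 2 * m ≤
        ((N * (2 * ‖v‖ ^ 2) + A ^ 2) * p t + 2 * A * p1 t + p2 t) * m := by
      have e1 : μ * ‖v‖ ^ 2 * m = (2 * N * m * m - D * m - D ^ 2) * ‖v‖ ^ 2 := by
        calc μ * ‖v‖ ^ 2 * m = (μ * m) * ‖v‖ ^ 2 := by ring
          _ = (2 * N * m * m - D * m - D ^ 2) * ‖v‖ ^ 2 := by rw [hμm]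
      rw [e1]
      linarith [h1, h2, h3, h5, hp1sq]
    have hBlb : μ * ‖v‖ ^ 2 ≤ (N * (2 * ‖v‖ ^ 2) + A ^ 2) * p t + 2 * A * p1 t + p2 t :=
      le_of_mul_le_mul_right (by linarith [hBm]) hm
    have hB0 : 0 ≤ (N * (2 * ‖v‖ ^ 2) + A ^ 2) * p t + 2 * A * p1 t + p2 t :=
      le_trans (by positivity) hBlb
    have hEB := le_mul_of_one_le_left hB0 hE1
    simp only [hγ2, ← hA]
    linarith [hEB, hBlb]
  -- convexity of γ on [0,1]
  have hd1 : deriv γ = γ1 := funext fun t => (hγd t).deriv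
  have hconv : ConvexOn ℝ (Icc (0:ℝ) 1) γ := by
    apply convexOn_of_deriv2_nonneg (convex_Icc 0 1)
    · exact fun t _ => (hγd t).continuousAt.continuousWithinAt
    · exact fun t _ => (hγd t).differentiableAt.differentiableWithinAt
    · rw [hd1]
      exact fun t _ => (hγ1d t).differentiableAt.differentiableWithinAt
    · intro t ht
      have h2 : deriv^[2] γ t = γ2 t := by
        show deriv (deriv γ) t = γ2 t
        rw [hd1]
        exact (hγ1d t).deriv
      rw [h2]
      exact hγ2nonneg t ht
  have h01 : (0:ℝ) ∈ Icc (0:ℝ) 1 := ⟨le_refl 0, zero_le_one⟩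
  have h11 : (1:ℝ) ∈ Icc (0:ℝ) 1 := ⟨zero_le_one, le_refl 1⟩
  have hcc := hconv.2 h01 h11 ha hb hab
  simp only [smul_eq_mul, mul_zero, mul_one, zero_add] at hcc
  have hxy : a • x + b • y = x + b • v := by
    rw [hv]
    have hab' : a = 1 - b := by linarith
    rw [hab']
    module
  have hγ0 : γ 0 = Real.exp (N * ‖x - ξ‖ ^ 2) * MvPolynomial.eval (fun i => x i) f
      - μ / 2 * ‖x‖ ^ 2 := by
    have h0 := hγval 0
    have e : x + (0:ℝ) • v = x := by module
    rw [e] at h0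
    exact h0
  have hγ1v : γ 1 = Real.exp (N * ‖y - ξ‖ ^ 2) * MvPolynomial.eval (fun i => y i) f
      - μ / 2 * ‖y‖ ^ 2 := by
    have h0 := hγval 1
    have e : x + (1:ℝ) • v = y := by rw [hv]; module
    rw [e] at h0
    exact h0
  have hγb := hγval b
  rw [← hxy] at hγb
  rw [hγ0, hγ1v, hγb] at hcc
  simpa [hw, hxf] using hcc
end

section
/- Let f ∈ ℝ[x₁,…,xₙ] and X ⊆ ℝⁿ be compact and convex, R = max{|x| : x ∈ X}, and m ≤ min{f(x) : x ∈ X}. Then for any D > D_n(f,R) and any ξ ∈ ℝⁿ, the function φ_ξ(x) = e^{|x-ξ|²} (f(x) - m + D) is strongly convex on X. -/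
open Real Set MvPolynomial

namespace Stmt3Aux

open Polynomial

/-- Bound triple for a polynomial, its derivative and second derivative at a point. -/
structure PB (R V t : ℝ) (Q : Polynomial ℝ) (d : ℕ) : Prop where
  h0 : |Q.eval t| ≤ R ^ d
  h1 : |Q.derivative.eval t| * R ≤ (d : ℝ) * V * R ^ d
  h2 : |Q.derivative.derivative.eval t| * R ^ 2 ≤ ((d * (d - 1) : ℕ) : ℝ) * V ^ 2 * R ^ d

variable {R V t : ℝ}

lemma PB_one : PB R V t 1 0 := by
  constructor <;> simp

lemma PB_lin (hR : 0 ≤ R) (hV : 0 ≤ V) (a b : ℝ) (ha : |a + b * t| ≤ R) (hb : |b| ≤ V) :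
    PB R V t (Polynomial.C a + Polynomial.C b * Polynomial.X) 1 := by
  have hd : (Polynomial.C a + Polynomial.C b * Polynomial.X : Polynomial ℝ).derivative = Polynomial.C b := by
    simp [Polynomial.derivative_C_mul_X]
  constructor
  · simpa using ha
  · rw [hd]
    simpa using mul_le_mul hb le_rfl hR hV
  · rw [hd]
    simp

lemma nat_id (p q : ℕ) : p * (p - 1) + (2 * (p * q) + q * (q - 1)) = (p + q) * (p + q - 1) := by
  cases p <;> cases q <;> simp [Nat.succ_sub_one] <;> ring

lemma PB_mul (hR : 0 ≤ R) (hV : 0 ≤ V) {A B : Polynomial ℝ} {p q : ℕ}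
    (hA : PB R V t A p) (hB : PB R V t B q) : PB R V t (A * B) (p + q) := by
  have h0A := hA.h0; have h1A := hA.h1; have h2A := hA.h2
  have h0B := hB.h0; have h1B := hB.h1; have h2B := hB.h2
  have hRp : (0:ℝ) ≤ R ^ p := pow_nonneg hR p
  have hRq : (0:ℝ) ≤ R ^ q := pow_nonneg hR q
  constructor
  · rw [Polynomial.eval_mul, abs_mul, pow_add]
    exact mul_le_mul h0A h0B (abs_nonneg _) hRp
  · rw [Polynomial.derivative_mul, Polynomial.eval_add, Polynomial.eval_mul, Polynomial.eval_mul]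
    calc |A.derivative.eval t * B.eval t + A.eval t * B.derivative.eval t| * R
        ≤ (|A.derivative.eval t| * |B.eval t| + |A.eval t| * |B.derivative.eval t|) * R := by
          gcongr
          exact (abs_add_le _ _).trans (by rw [abs_mul, abs_mul])
      _ = (|A.derivative.eval t| * R) * |B.eval t| + |A.eval t| * (|B.derivative.eval t| * R) := by
          ring
      _ ≤ ((p : ℝ) * V * R ^ p) * R ^ q + R ^ p * ((q : ℝ) * V * R ^ q) := by
          gcongr <;> positivity
      _ = ((p + q : ℕ) : ℝ) * V * R ^ (p + q) := by
          push_cast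
          rw [pow_add]
          ring
  · rw [Polynomial.derivative_mul, Polynomial.derivative_add, Polynomial.derivative_mul, Polynomial.derivative_mul]
    simp only [Polynomial.eval_add, Polynomial.eval_mul]
    calc |A.derivative.derivative.eval t * B.eval t + A.derivative.eval t * B.derivative.eval t +
          (A.derivative.eval t * B.derivative.eval t + A.eval t * B.derivative.derivative.eval t)| * R ^ 2
        ≤ (|A.derivative.derivative.eval t| * |B.eval t| + 2 * (|A.derivative.eval t| * |B.derivative.eval t|)
            + |A.eval t| * |B.derivative.derivative.eval t|) * R ^ 2 := by
          gcongr
          calc _ ≤ |A.derivative.derivative.eval t * B.eval t| + |A.derivative.eval t * B.derivative.eval t| +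
              (|A.derivative.eval t * B.derivative.eval t| + |A.eval t * B.derivative.derivative.eval t|) :=
                (abs_add_le _ _).trans (by gcongr <;> exact abs_add_le _ _)
            _ = _ := by simp only [abs_mul]; ring
      _ = (|A.derivative.derivative.eval t| * R ^ 2) * |B.eval t|
            + 2 * ((|A.derivative.eval t| * R) * (|B.derivative.eval t| * R))
            + |A.eval t| * (|B.derivative.derivative.eval t| * R ^ 2) := by ring
      _ ≤ (((p * (p - 1) : ℕ) : ℝ) * V ^ 2 * R ^ p) * R ^ q
            + 2 * (((p : ℝ) * V * R ^ p) * ((q : ℝ) * V * R ^ q))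
            + R ^ p * (((q * (q - 1) : ℕ) : ℝ) * V ^ 2 * R ^ q) := by
          gcongr <;> positivity
      _ = (((p * (p - 1) : ℕ) : ℝ) + 2 * ((p : ℕ) * (q : ℕ) : ℕ) + ((q * (q - 1) : ℕ) : ℝ)) * V ^ 2 * R ^ (p + q) := by
          rw [pow_add]; push_cast; ring
      _ = (((p + q) * ((p + q) - 1) : ℕ) : ℝ) * V ^ 2 * R ^ (p + q) := by
          rw [← nat_id p q]; push_cast; ring

lemma PB_pow (hR : 0 ≤ R) (hV : 0 ≤ V) {A : Polynomial ℝ} (hA : PB R V t A 1) (e : ℕ) :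
    PB R V t (A ^ e) e := by
  induction e with
  | zero => simpa using PB_one
  | succ k ih =>
      have := PB_mul hR hV ih hA
      simpa [pow_succ] using this

/-- The polynomial `t ↦ f(x + t v)`. -/
noncomputable def linP {n : ℕ} (f : MvPolynomial (Fin n) ℝ) (xf vf : Fin n → ℝ) : Polynomial ℝ :=
  MvPolynomial.eval₂ (Polynomial.C : ℝ →+* Polynomial ℝ)
    (fun i => Polynomial.C (xf i) + Polynomial.C (vf i) * Polynomial.X) f

lemma linP_eval {n : ℕ} (f : MvPolynomial (Fin n) ℝ) (xf vf : Fin n → ℝ) (s : ℝ) :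
    (linP f xf vf).eval s = MvPolynomial.eval (fun i => xf i + vf i * s) f := by
  have h := MvPolynomial.eval₂_comp_left (Polynomial.evalRingHom s)
    (Polynomial.C : ℝ →+* Polynomial ℝ)
    (fun i => Polynomial.C (xf i) + Polynomial.C (vf i) * Polynomial.X) f
  have hcomp : (Polynomial.evalRingHom s).comp (Polynomial.C : ℝ →+* Polynomial ℝ)
      = RingHom.id ℝ := by
    ext r; simp
  rw [hcomp] at h
  have hg : (⇑(Polynomial.evalRingHom s) ∘ fun i =>
      Polynomial.C (xf i) + Polynomial.C (vf i) * Polynomial.X) = fun i => xf i + vf i * s := by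
    funext i; simp
  rw [hg] at h
  have : (Polynomial.evalRingHom s) (linP f xf vf) = (linP f xf vf).eval s := rfl
  rw [linP] at this ⊢
  rw [← this, h, MvPolynomial.eval₂_id]

lemma PB_monomial {n : ℕ} (xf vf : Fin n → ℝ) (hR : 0 ≤ R) (hV : 0 ≤ V)
    (hx : ∀ i, |xf i + vf i * t| ≤ R) (hv : ∀ i, |vf i| ≤ V) (ν : Fin n →₀ ℕ) :
    PB R V t (∏ i ∈ ν.support, (Polynomial.C (xf i) + Polynomial.C (vf i) * Polynomial.X) ^ ν i)
      (mdeg ν) := by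
  have : mdeg ν = ∑ i ∈ ν.support, ν i := rfl
  rw [this]
  classical
  induction ν.support using Finset.induction_on with
  | empty => simpa using (PB_one (R := R) (V := V) (t := t))
  | insert _ _ hnot ih =>
      rw [Finset.prod_insert hnot, Finset.sum_insert hnot]
      exact PB_mul hR hV (PB_pow hR hV (PB_lin hR hV _ _ (hx _) (hv _)) _) ih

lemma PB_deriv_le {Q : Polynomial ℝ} {d : ℕ} (hR : 0 < R) (hV : 0 ≤ V) (h : PB R V t Q d) :
    |Q.derivative.eval t| ≤ (d : ℝ) * R ^ (d - 1) * V := by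
  rcases d with _ | k
  · have h1 := h.h1
    simp only [Nat.cast_zero, zero_mul, pow_zero, mul_one] at h1
    have : |Q.derivative.eval t| ≤ 0 := by
      by_contra hc
      push_neg at hc
      nlinarith
    have h0 : |Q.derivative.eval t| = 0 := le_antisymm this (abs_nonneg _)
    rw [h0]
    positivity
  · have h1 := h.h1
    have : |Q.derivative.eval t| * R ≤ ((k+1 : ℕ) : ℝ) * R ^ k * V * R := by
      calc |Q.derivative.eval t| * R ≤ ((k+1 : ℕ) : ℝ) * V * R ^ (k + 1) := h1
        _ = ((k+1 : ℕ) : ℝ) * R ^ k * V * R := by rw [pow_succ]; ring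
    have := le_of_mul_le_mul_right this hR
    simpa using this

lemma PB_deriv2_le {Q : Polynomial ℝ} {d : ℕ} (hR : 0 < R) (hV : 0 ≤ V) (h : PB R V t Q d) :
    |Q.derivative.derivative.eval t| ≤ (d : ℝ) * ((d : ℝ) - 1) * R ^ (d - 2) * V ^ 2 := by
  have hR2 : (0:ℝ) < R ^ 2 := by positivity
  rcases d with _ | _ | k
  · have h2 := h.h2
    simp only [Nat.zero_eq, Nat.mul_zero, Nat.zero_mul, Nat.cast_zero, zero_mul, pow_zero,
      mul_one] at h2
    have : |Q.derivative.derivative.eval t| ≤ 0 := by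
      by_contra hc; push_neg at hc; nlinarith
    refine this.trans ?_
    simp
  · have h2 := h.h2
    norm_num at h2
    have : |Q.derivative.derivative.eval t| ≤ 0 := by
      by_contra hc; push_neg at hc; nlinarith
    refine this.trans ?_
    norm_num
  · have h2 := h.h2
    have hcast : (((k + 2) * ((k + 2) - 1) : ℕ) : ℝ) = ((k:ℝ) + 2) * ((k:ℝ) + 1) := by
      push_cast [Nat.add_sub_cancel]
      ring
    have : |Q.derivative.derivative.eval t| * R ^ 2
        ≤ (((k+2 : ℕ) : ℝ) * (((k+2 : ℕ) : ℝ) - 1) * R ^ k * V ^ 2) * R ^ 2 := by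
      calc |Q.derivative.derivative.eval t| * R ^ 2
          ≤ (((k + 2) * ((k + 2) - 1) : ℕ) : ℝ) * V ^ 2 * R ^ (k + 2) := h2
        _ = (((k+2 : ℕ) : ℝ) * (((k+2 : ℕ) : ℝ) - 1) * R ^ k * V ^ 2) * R ^ 2 := by
            rw [hcast, pow_add]; push_cast; ring
    have := le_of_mul_le_mul_right this hR2
    have hd : ((k:ℕ) + 2) - 2 = k := by omega
    calc |Q.derivative.derivative.eval t|
        ≤ ((k+2 : ℕ) : ℝ) * (((k+2 : ℕ) : ℝ) - 1) * R ^ k * V ^ 2 := this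
      _ = _ := by rw [hd]

lemma linP_deriv_bound {n : ℕ} (f : MvPolynomial (Fin n) ℝ) (xf vf : Fin n → ℝ)
    (hR : 0 < R) (hV : 0 ≤ V)
    (hx : ∀ i, |xf i + vf i * t| ≤ R) (hv : ∀ i, |vf i| ≤ V) :
    |(linP f xf vf).derivative.eval t|
      ≤ (∑ ν ∈ f.support, (mdeg ν : ℝ) * |f.coeff ν| * R ^ (mdeg ν - 1)) * V := by
  rw [linP, MvPolynomial.eval₂_eq, Polynomial.derivative_sum, Polynomial.eval_finset_sum]
  calc |∑ ν ∈ f.support, Polynomial.eval t (Polynomial.derivative (Polynomial.C (f.coeff ν) *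
          ∏ i ∈ ν.support, (Polynomial.C (xf i) + Polynomial.C (vf i) * Polynomial.X) ^ ν i))|
      ≤ ∑ ν ∈ f.support, |Polynomial.eval t (Polynomial.derivative (Polynomial.C (f.coeff ν) *
          ∏ i ∈ ν.support, (Polynomial.C (xf i) + Polynomial.C (vf i) * Polynomial.X) ^ ν i))| :=
        Finset.abs_sum_le_sum_abs _ _
    _ ≤ ∑ ν ∈ f.support, (mdeg ν : ℝ) * |f.coeff ν| * R ^ (mdeg ν - 1) * V := by
        refine Finset.sum_le_sum fun ν _ => ?_
        rw [Polynomial.derivative_C_mul, Polynomial.eval_C_mul, abs_mul]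
        have := PB_deriv_le hR hV (PB_monomial xf vf hR.le hV hx hv ν)
        calc |f.coeff ν| * |_| ≤ |f.coeff ν| * ((mdeg ν : ℝ) * R ^ (mdeg ν - 1) * V) := by
              gcongr
          _ = (mdeg ν : ℝ) * |f.coeff ν| * R ^ (mdeg ν - 1) * V := by ring
    _ = _ := by rw [Finset.sum_mul]

lemma linP_deriv2_bound {n : ℕ} (f : MvPolynomial (Fin n) ℝ) (xf vf : Fin n → ℝ)
    (hR : 0 < R) (hV : 0 ≤ V)
    (hx : ∀ i, |xf i + vf i * t| ≤ R) (hv : ∀ i, |vf i| ≤ V) :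
    |(linP f xf vf).derivative.derivative.eval t|
      ≤ (∑ ν ∈ f.support, (mdeg ν : ℝ) * ((mdeg ν : ℝ) - 1) * |f.coeff ν| * R ^ (mdeg ν - 2)) * V ^ 2 := by
  rw [linP, MvPolynomial.eval₂_eq, Polynomial.derivative_sum, Polynomial.derivative_sum,
    Polynomial.eval_finset_sum]
  calc |∑ ν ∈ f.support, Polynomial.eval t (Polynomial.derivative (Polynomial.derivative
          (Polynomial.C (f.coeff ν) *
          ∏ i ∈ ν.support, (Polynomial.C (xf i) + Polynomial.C (vf i) * Polynomial.X) ^ ν i)))|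
      ≤ ∑ ν ∈ f.support, |Polynomial.eval t (Polynomial.derivative (Polynomial.derivative
          (Polynomial.C (f.coeff ν) *
          ∏ i ∈ ν.support, (Polynomial.C (xf i) + Polynomial.C (vf i) * Polynomial.X) ^ ν i)))| :=
        Finset.abs_sum_le_sum_abs _ _
    _ ≤ ∑ ν ∈ f.support, (mdeg ν : ℝ) * ((mdeg ν : ℝ) - 1) * |f.coeff ν| * R ^ (mdeg ν - 2) * V ^ 2 := by
        refine Finset.sum_le_sum fun ν _ => ?_
        rw [Polynomial.derivative_C_mul, Polynomial.derivative_C_mul, Polynomial.eval_C_mul, abs_mul]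
        have hb := PB_deriv2_le hR hV (PB_monomial xf vf hR.le hV hx hv ν)
        have hnn : (0:ℝ) ≤ (mdeg ν : ℝ) * ((mdeg ν : ℝ) - 1) * R ^ (mdeg ν - 2) * V ^ 2 :=
          le_trans (abs_nonneg _) hb
        calc |f.coeff ν| * |_| ≤ |f.coeff ν| * ((mdeg ν : ℝ) * ((mdeg ν : ℝ) - 1) * R ^ (mdeg ν - 2) * V ^ 2) := by
              gcongr
          _ = (mdeg ν : ℝ) * ((mdeg ν : ℝ) - 1) * |f.coeff ν| * R ^ (mdeg ν - 2) * V ^ 2 := by ring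
    _ = _ := by rw [Finset.sum_mul]

lemma coord_abs_le_norm {n : ℕ} (z : EuclideanSpace ℝ (Fin n)) (i : Fin n) : |z i| ≤ ‖z‖ := by
  rw [EuclideanSpace.norm_eq]
  calc |z i| = Real.sqrt ((z i) ^ 2) := (Real.sqrt_sq_eq_abs _).symm
    _ ≤ Real.sqrt (∑ j, ‖z j‖ ^ 2) := by
        apply Real.sqrt_le_sqrt
        have : (z i) ^ 2 = ‖z i‖ ^ 2 := by rw [Real.norm_eq_abs, sq_abs]
        rw [this]
        exact Finset.single_le_sum (f := fun j => ‖z j‖ ^ 2) (fun j _ => by positivity)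
          (Finset.mem_univ i)

lemma triv_ineq (T μ a b n0 : ℝ) (hn : n0 = 0) (hab : a + b = 1) :
    T ≤ a • T + b • T - a * b * (μ / 2 * n0 ^ 2) := by
  have h : a * T + b * T = T := by rw [← add_mul, hab, one_mul]
  simp only [smul_eq_mul, hn]
  norm_num
  linarith

lemma seg_ineq (A B2i Vsq c k : ℝ) (P : Polynomial ℝ)
    (hk : ∀ s ∈ Icc (0:ℝ) 1, k ≤ Real.exp (A + B2i * s + Vsq * s ^ 2) *
      ((B2i + 2 * Vsq * s) ^ 2 * (P.eval s + c) + 2 * Vsq * (P.eval s + c)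
        + 2 * (B2i + 2 * Vsq * s) * P.derivative.eval s + P.derivative.derivative.eval s))
    {a b : ℝ} (ha : 0 ≤ a) (hb : 0 ≤ b) (hab : a + b = 1) :
    Real.exp (A + B2i * b + Vsq * b ^ 2) * (P.eval b + c)
      ≤ a * (Real.exp A * (P.eval 0 + c))
        + b * (Real.exp (A + B2i + Vsq) * (P.eval 1 + c)) - a * b * (k / 2) := by
  have hq : ∀ s : ℝ, HasDerivAt (fun u : ℝ => A + B2i * u + Vsq * u ^ 2)
      (B2i + 2 * Vsq * s) s := by
    intro s
    have h1 := ((hasDerivAt_const s A).add ((hasDerivAt_id s).const_mul B2i)).add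
      ((hasDerivAt_pow 2 s).const_mul Vsq)
    refine h1.congr_deriv ?_
    push_cast
    ring
  have hqs : ∀ s : ℝ, HasDerivAt (fun u : ℝ => B2i + 2 * Vsq * u) (2 * Vsq) s := by
    intro s
    have h1 := ((hasDerivAt_id s).const_mul (2 * Vsq)).const_add B2i
    refine h1.congr_deriv ?_
    ring
  have hP : ∀ s : ℝ, HasDerivAt (fun u : ℝ => P.eval u + c) (P.derivative.eval s) s :=
    fun s => (P.hasDerivAt s).add_const c
  have hG : ∀ s : ℝ, HasDerivAt
      (fun u : ℝ => Real.exp (A + B2i * u + Vsq * u ^ 2) * (P.eval u + c) - k / 2 * u ^ 2)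
      (Real.exp (A + B2i * s + Vsq * s ^ 2) *
        ((B2i + 2 * Vsq * s) * (P.eval s + c) + P.derivative.eval s) - k * s) s := by
    intro s
    have h1 := ((hq s).exp.mul (hP s)).sub ((hasDerivAt_pow 2 s).const_mul (k / 2))
    refine h1.congr_deriv ?_
    push_cast
    ring
  have hG1 : ∀ s : ℝ, HasDerivAt
      (fun u : ℝ => Real.exp (A + B2i * u + Vsq * u ^ 2) *
        ((B2i + 2 * Vsq * u) * (P.eval u + c) + P.derivative.eval u) - k * u)
      (Real.exp (A + B2i * s + Vsq * s ^ 2) *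
        ((B2i + 2 * Vsq * s) ^ 2 * (P.eval s + c) + 2 * Vsq * (P.eval s + c)
          + 2 * (B2i + 2 * Vsq * s) * P.derivative.eval s + P.derivative.derivative.eval s)
        - k) s := by
    intro s
    have hin : HasDerivAt (fun u : ℝ => (B2i + 2 * Vsq * u) * (P.eval u + c) + P.derivative.eval u)
        (2 * Vsq * (P.eval s + c) + (B2i + 2 * Vsq * s) * P.derivative.eval s
          + P.derivative.derivative.eval s) s := by
      have h2 := ((hqs s).mul (hP s)).add (P.derivative.hasDerivAt s)
      exact h2
    have h3 := ((hq s).exp.mul hin).sub ((hasDerivAt_id s).const_mul k)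
    refine h3.congr_deriv ?_
    ring
  have hconv : ConvexOn ℝ (Icc (0:ℝ) 1)
      (fun u : ℝ => Real.exp (A + B2i * u + Vsq * u ^ 2) * (P.eval u + c) - k / 2 * u ^ 2) := by
    refine convexOn_of_hasDerivWithinAt2_nonneg (convex_Icc 0 1)
      (fun s _ => (hG s).continuousAt.continuousWithinAt)
      (fun s _ => (hG s).hasDerivWithinAt)
      (fun s _ => (hG1 s).hasDerivWithinAt) ?_
    intro s hs
    have hs' : s ∈ Icc (0:ℝ) 1 := interior_subset hs
    have := hk s hs'
    linarith
  have key := hconv.2 (left_mem_Icc.mpr zero_le_one) (right_mem_Icc.mpr zero_le_one) ha hb hab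
  simp only [smul_eq_mul, mul_zero, mul_one, zero_add] at key
  norm_num at key
  have hb2 : a * b = b - b ^ 2 := by nlinarith
  have e : a * b * (k / 2) = b * (k / 2) - k / 2 * b ^ 2 := by rw [hb2]; ring
  nlinarith [key, e]

lemma bracket_bound (Dnv D G Q' P1 P2 S1 S2 Vn : ℝ)
    (hDn1 : 1 ≤ Dnv) (hD : Dnv < D) (hGD : D ≤ G)
    (hS1nn : 0 ≤ S1) (hS1Dn : S1 ≤ Dnv) (hS2Dn : S2 ≤ Dnv)
    (hVn : 0 ≤ Vn)
    (hP1 : |P1| ≤ S1 * Vn) (hP2 : |P2| ≤ S2 * Vn ^ 2) :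
    2 * (D - Dnv) * Vn ^ 2 ≤ Q' ^ 2 * G + 2 * Vn ^ 2 * G + 2 * Q' * P1 + P2 := by
  have hGpos : (0:ℝ) < G := by linarith
  have hP1sq : P1 ^ 2 ≤ Dnv * G * Vn ^ 2 := by
    have h1 : P1 ^ 2 ≤ S1 ^ 2 * Vn ^ 2 := by
      nlinarith [mul_self_le_mul_self (abs_nonneg P1) hP1, abs_mul_abs_self P1]
    have h2 : S1 ^ 2 ≤ Dnv * G := by nlinarith
    nlinarith [sq_nonneg Vn]
  have hP2lb : -(S2 * Vn ^ 2) ≤ P2 := (neg_le_neg hP2).trans (neg_abs_le P2)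
  have key : (2 * (D - Dnv) * Vn ^ 2) * G
      ≤ (Q' ^ 2 * G + 2 * Vn ^ 2 * G + 2 * Q' * P1 + P2) * G := by
    nlinarith [sq_nonneg (Q' * G + P1), hP1sq,
      mul_le_mul_of_nonneg_right hP2lb hGpos.le,
      mul_nonneg (mul_nonneg (by positivity : (0:ℝ) ≤ 2 * Vn ^ 2) hGpos.le)
        (sub_nonneg.2 hGD),
      mul_nonneg (mul_nonneg (sub_nonneg.2 hS2Dn) (sq_nonneg Vn)) hGpos.le]
  exact le_of_mul_le_mul_right key hGpos

end Stmt3Aux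

/-- For a polynomial `f` and a compact convex `X ⊆ ℝⁿ` with
`R = max{|x| : x ∈ X}` and `m ≤ min f(X)`, for any `D > D_n(f,R)` and `ξ ∈ ℝⁿ`,
the function `φ_ξ(x) = e^{|x-ξ|²}(f(x) - m + D)` is strongly convex on `X`. -/
theorem stmt3 {n : ℕ} (X : Set (EuclideanSpace ℝ (Fin n)))
    (hXc : IsCompact X) (hXcon : Convex ℝ X)
    (f : MvPolynomial (Fin n) ℝ)
    (R : ℝ) (hR : IsGreatest ((fun x => ‖x‖) '' X) R)
    (m : ℝ) (hmf : ∀ x ∈ X, m ≤ MvPolynomial.eval (fun i => x i) f) :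
    ∀ D : ℝ, Dn f R < D → ∀ ξ : EuclideanSpace ℝ (Fin n),
      ∃ μ > 0, StrongConvexOn X μ
        (fun x => Real.exp (‖x - ξ‖ ^ 2) * (MvPolynomial.eval (fun i => x i) f - m + D)) := by
  intro D hD ξ
  obtain ⟨⟨x₀, hx₀X, hx₀R⟩, hub⟩ := hR
  have hR0 : (0:ℝ) ≤ R := hx₀R ▸ norm_nonneg x₀
  have hnormub : ∀ z ∈ X, ‖z‖ ≤ R := fun z hz => hub (mem_image_of_mem _ hz)
  have hDn1 : (1:ℝ) ≤ Dn f R := le_max_left _ _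
  have hD1 : (1:ℝ) < D := lt_of_le_of_lt hDn1 hD
  rcases eq_or_lt_of_le hR0 with hR0eq | hRpos
  · -- degenerate case : X ⊆ {0}
    have hzero : ∀ z ∈ X, z = 0 := fun z hz =>
      norm_le_zero_iff.mp (le_of_le_of_eq (hnormub z hz) hR0eq.symm)
    refine ⟨1, one_pos, hXcon, ?_⟩
    intro x hx y hy a b ha hb hab
    rw [hzero x hx, hzero y hy]
    have h0 : a • (0 : EuclideanSpace ℝ (Fin n)) + b • 0 = 0 := by simp
    rw [h0]
    exact Stmt3Aux.triv_ineq _ _ _ _ _ (by simp) hab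
  · -- main case
    refine ⟨2 * (D - Dn f R), by linarith, hXcon, ?_⟩
    intro x hx y hy a b ha hb hab
    set μ : ℝ := 2 * (D - Dn f R) with hμ
    set v : EuclideanSpace ℝ (Fin n) := y - x with hv
    set A : ℝ := ‖x - ξ‖ ^ 2 with hA
    set B2i : ℝ := 2 * (inner ℝ (x - ξ) v : ℝ) with hB2i
    set Vsq : ℝ := ‖v‖ ^ 2 with hVsq
    set c : ℝ := D - m with hc
    set k : ℝ := μ * Vsq with hk
    set P : Polynomial ℝ := Stmt3Aux.linP f (fun i => x i) (fun i => v i) with hP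
    set S1 : ℝ := ∑ ν ∈ f.support, (mdeg ν : ℝ) * |f.coeff ν| * R ^ (mdeg ν - 1) with hS1
    set S2 : ℝ := ∑ ν ∈ f.support,
      (mdeg ν : ℝ) * ((mdeg ν : ℝ) - 1) * |f.coeff ν| * R ^ (mdeg ν - 2) with hS2
    have hS1Dn : S1 ≤ Dn f R := le_trans (le_max_left _ _) (le_max_right _ _)
    have hS2Dn : S2 ≤ Dn f R := le_trans (le_max_right _ _) (le_max_right _ _)
    have hS1nn : 0 ≤ S1 := by
      rw [hS1]
      refine Finset.sum_nonneg fun ν _ => ?_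
      positivity
    -- the identity for the quadratic exponent
    have hqid : ∀ s : ℝ, A + B2i * s + Vsq * s ^ 2 = ‖x + s • v - ξ‖ ^ 2 := by
      intro s
      have h1 : x + s • v - ξ = (x - ξ) + s • v := by abel
      rw [h1, norm_add_sq_real, real_inner_smul_right, norm_smul]
      simp only [Real.norm_eq_abs, mul_pow, sq_abs]
      rw [hA, hB2i, hVsq]
      ring
    -- the polynomial along the segment
    have hPz : ∀ s : ℝ, P.eval s = MvPolynomial.eval (fun i => (x + s • v) i) f := by
      intro s
      rw [hP, Stmt3Aux.linP_eval]
      have : (fun i => (x : Fin n → ℝ) i + (v : Fin n → ℝ) i * s)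
          = fun i => (x + s • v) i := by
        funext i
        simp only [PiLp.add_apply, PiLp.smul_apply, smul_eq_mul]
        ring
      rw [this]
    have hzmem : ∀ s ∈ Icc (0:ℝ) 1, x + s • v ∈ X := by
      intro s hs
      rw [hv]
      exact hXcon.add_smul_sub_mem hx hy hs
    -- the key lower bound on the second derivative
    have hbracket : ∀ s ∈ Icc (0:ℝ) 1, k ≤ Real.exp (A + B2i * s + Vsq * s ^ 2) *
        ((B2i + 2 * Vsq * s) ^ 2 * (P.eval s + c) + 2 * Vsq * (P.eval s + c)
          + 2 * (B2i + 2 * Vsq * s) * P.derivative.eval s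
          + P.derivative.derivative.eval s) := by
      intro s hs
      have hzX := hzmem s hs
      have hcoord : ∀ i, |(x : Fin n → ℝ) i + (v : Fin n → ℝ) i * s| ≤ R := by
        intro i
        have h1 := Stmt3Aux.coord_abs_le_norm (x + s • v) i
        have h2 : (x + s • v) i = x i + v i * s := by
          simp only [PiLp.add_apply, PiLp.smul_apply, smul_eq_mul]
          ring
        rw [h2] at h1
        exact h1.trans (hnormub _ hzX)
      have hvV : ∀ i, |(v : Fin n → ℝ) i| ≤ ‖v‖ := fun i => Stmt3Aux.coord_abs_le_norm v i
      have hP1 := Stmt3Aux.linP_deriv_bound f (fun i => x i) (fun i => v i) hRpos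
        (norm_nonneg v) hcoord hvV
      have hP2 := Stmt3Aux.linP_deriv2_bound f (fun i => x i) (fun i => v i) hRpos
        (norm_nonneg v) hcoord hvV
      rw [← hP, ← hS1] at hP1
      rw [← hP, ← hS2] at hP2
      have hPem : m ≤ P.eval s := by
        rw [hPz s]
        exact hmf _ hzX
      have hGD : D ≤ P.eval s + c := by rw [hc]; linarith
      have hGpos : (0:ℝ) < P.eval s + c := by linarith
      have hq0 : 0 ≤ A + B2i * s + Vsq * s ^ 2 := by rw [hqid s]; positivity
      have hexp : 1 ≤ Real.exp (A + B2i * s + Vsq * s ^ 2) := Real.one_le_exp hq0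
      set G : ℝ := P.eval s + c with hG
      set Q' : ℝ := B2i + 2 * Vsq * s with hQ'
      set P1 : ℝ := P.derivative.eval s with hP1d
      set P2 : ℝ := P.derivative.derivative.eval s with hP2d
      have hbr : k ≤ Q' ^ 2 * G + 2 * Vsq * G + 2 * Q' * P1 + P2 := by
        rw [hk, hμ, hVsq]
        exact Stmt3Aux.bracket_bound (Dn f R) D G Q' P1 P2 S1 S2 ‖v‖ hDn1 hD hGD
          hS1nn hS1Dn hS2Dn (norm_nonneg v) hP1 hP2
      have hknn : (0:ℝ) ≤ k := by
        rw [hk, hμ, hVsq]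
        have h2 : (0:ℝ) ≤ 2 * (D - Dn f R) := by linarith
        positivity
      have hbnn : 0 ≤ Q' ^ 2 * G + 2 * Vsq * G + 2 * Q' * P1 + P2 := le_trans hknn hbr
      calc k ≤ Q' ^ 2 * G + 2 * Vsq * G + 2 * Q' * P1 + P2 := hbr
        _ ≤ Real.exp (A + B2i * s + Vsq * s ^ 2) *
            (Q' ^ 2 * G + 2 * Vsq * G + 2 * Q' * P1 + P2) :=
          le_mul_of_one_le_left hbnn hexp
    -- apply the one-dimensional strong convexity estimate
    have seg := Stmt3Aux.seg_ineq A B2i Vsq c k P hbracket ha hb hab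
    have hab' : a = 1 - b := by linarith
    have hxy : x + b • v = a • x + b • y := by
      rw [hv, hab']
      module
    have e0 : Real.exp A * (P.eval 0 + c)
        = Real.exp (‖x - ξ‖ ^ 2) * (MvPolynomial.eval (fun i => x i) f - m + D) := by
      have h1 : P.eval 0 = MvPolynomial.eval (fun i => x i) f := by
        rw [hPz 0]
        simp
      rw [h1, hA, hc]
      ring_nf
    have e1 : Real.exp (A + B2i + Vsq) * (P.eval 1 + c)
        = Real.exp (‖y - ξ‖ ^ 2) * (MvPolynomial.eval (fun i => y i) f - m + D) := by
      have hxv : x + (1:ℝ) • v = y := by rw [hv]; simp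
      have h1 : P.eval 1 = MvPolynomial.eval (fun i => y i) f := by
        rw [hPz 1, hxv]
      have h2 : A + B2i + Vsq = ‖y - ξ‖ ^ 2 := by
        have := hqid 1
        simp only [mul_one, one_pow] at this
        rw [this, hxv]
      rw [h1, h2, hc]
      ring_nf
    have eb : Real.exp (A + B2i * b + Vsq * b ^ 2) * (P.eval b + c)
        = Real.exp (‖a • x + b • y - ξ‖ ^ 2) *
          (MvPolynomial.eval (fun i => (a • x + b • y) i) f - m + D) := by
      have h1 : P.eval b = MvPolynomial.eval (fun i => (a • x + b • y) i) f := by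
        rw [hPz b, hxy]
      have h2 : A + B2i * b + Vsq * b ^ 2 = ‖a • x + b • y - ξ‖ ^ 2 := by
        rw [hqid b, hxy]
      rw [h1, h2, hc]
      ring_nf
    rw [e0, e1, eb] at seg
    simp only [smul_eq_mul]
    have hkeq : μ / 2 * ‖x - y‖ ^ 2 = k / 2 := by
      rw [hk, hVsq, hv, norm_sub_rev]
      ring
    have habk : a * b * (μ / 2 * ‖x - y‖ ^ 2) = a * b * (k / 2) := by rw [hkeq]
    linarith [seg, habk]
end

section
/- Let f : ℝⁿ → ℝ be a C² function and X ⊆ ℝⁿ compact and convex. Suppose m < min{f(x) : x ∈ X} and that all first and second directional derivatives of f in unit directions are bounded by D in absolute value on X. Then for every ξ ∈ ℝⁿ, the function φ_ξ(x) = e^{|x-ξ|²} (f(x) - m + D) is strongly convex on X. -/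
open Real Set

lemma key_ineq (e u P H1 H2 w εv Dv : ℝ) (he : 1 ≤ e) (hw : 0 < w)
    (hε : 0 < εv) (hD : 0 < Dv) (hP : Dv + εv ≤ P)
    (hb1 : |H1| ≤ w * Dv) (hb2 : |H2| ≤ w ^ 2 * Dv) :
    0 ≤ e * (2*u*(2*u*P + H1) + (2*(w^2)*P + 2*u*H1 + H2)) - 2*εv/2*(2*(w^2)) := by
  obtain ⟨h1l, h1r⟩ := abs_le.1 hb1
  obtain ⟨h2l, h2r⟩ := abs_le.1 hb2
  have hK : 2*εv*(w^2) ≤ 2*u*(2*u*P + H1) + (2*(w^2)*P + 2*u*H1 + H2) := by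
    rcases le_or_gt 0 u with hu | hu
    · nlinarith [sq_nonneg (2*u - w), sq_nonneg u,
        mul_nonneg hu (by linarith : 0 ≤ H1 + w*Dv),
        mul_nonneg (mul_self_nonneg u) (by linarith : 0 ≤ P - (Dv + εv))]
    · nlinarith [sq_nonneg (2*u + w), sq_nonneg u,
        mul_nonneg (by linarith : 0 ≤ -u) (by linarith : 0 ≤ w*Dv - H1),
        mul_nonneg (mul_self_nonneg u) (by linarith : 0 ≤ P - (Dv + εv))]
  have hKnn : 0 ≤ 2*u*(2*u*P + H1) + (2*(w^2)*P + 2*u*H1 + H2) := by nlinarith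
  have := le_mul_of_one_le_left hKnn he
  nlinarith



/-- Let `f : ℝⁿ → ℝ` be `C²`, `X ⊆ ℝⁿ` compact convex,
`m < min f(X)`, and suppose all first and second directional derivatives of `f`
in unit directions are bounded by `D` in absolute value on `X`. Then for every
`ξ ∈ ℝⁿ` the function `φ_ξ(x) = e^{|x-ξ|²}(f(x) - m + D)` is strongly convex on `X`. -/
theorem stmt4 {n : ℕ} (X : Set (EuclideanSpace ℝ (Fin n)))
    (hXc : IsCompact X) (hXcon : Convex ℝ X)
    (f : EuclideanSpace ℝ (Fin n) → ℝ) (hf : ContDiff ℝ 2 f)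
    (m D : ℝ) (hD : 0 < D)
    (hmf : ∀ x ∈ X, m < f x)
    (hder : ∀ x ∈ X, ∀ β : EuclideanSpace ℝ (Fin n), ‖β‖ = 1 →
      |fderiv ℝ f x β| ≤ D ∧ |fderiv ℝ (fun y => fderiv ℝ f y β) x β| ≤ D) :
    ∀ ξ : EuclideanSpace ℝ (Fin n),
      ∃ μ > 0, StrongConvexOn X μ
        (fun x => Real.exp (‖x - ξ‖ ^ 2) * (f x - m + D)) := by
  intro ξ
  rcases X.eq_empty_or_nonempty with hXe | hne
  · refine ⟨1, one_pos, ?_⟩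
    rw [hXe]
    exact ⟨convex_empty, fun x hx => absurd hx (notMem_empty x)⟩
  have hdiff : Differentiable ℝ f := hf.differentiable two_ne_zero
  obtain ⟨x₀, hx₀X, hmin⟩ := hXc.exists_isMinOn hne hf.continuous.continuousOn
  set ε := f x₀ - m with hεdef
  have hε : 0 < ε := sub_pos.2 (hmf _ hx₀X)
  have hfε : ∀ z ∈ X, ε ≤ f z - m := by
    intro z hz
    have := hmin hz
    simp only [mem_setOf_eq] at this
    dsimp [ε]
    linarith [hmin hz]
  refine ⟨2 * ε, by linarith, ?_⟩
  rw [strongConvexOn_iff_convex]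
  refine ⟨hXcon, ?_⟩
  intro x hx y hy a b ha hb hab
  by_cases hxy : y = x
  · subst hxy
    rw [← add_smul, hab, one_smul, smul_eq_mul, smul_eq_mul, ← add_mul, hab, one_mul]
  -- main case
  set v := y - x with hvdef
  have hvne : v ≠ 0 := sub_ne_zero.2 hxy
  set w := ‖v‖ with hwdef
  have hw : 0 < w := norm_pos_iff.2 hvne
  set β : EuclideanSpace ℝ (Fin n) := w⁻¹ • v with hβdef
  have hβ1 : ‖β‖ = 1 := by
    rw [hβdef, norm_smul, norm_inv, Real.norm_eq_abs, abs_of_pos hw, ← hwdef,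
      inv_mul_cancel₀ hw.ne']
  have hvβ : v = w • β := by
    rw [hβdef, smul_smul, mul_inv_cancel₀ hw.ne', one_smul]
  set γ : ℝ → EuclideanSpace ℝ (Fin n) := fun t => x + t • v with hγdef
  have hγX : ∀ t ∈ Icc (0:ℝ) 1, γ t ∈ X := by
    intro t ht
    have hmem := hXcon hx hy (by linarith [ht.2] : (0:ℝ) ≤ 1 - t) ht.1 (by ring)
    have : γ t = (1 - t) • x + t • y := by
      simp only [hγdef, hvdef]
      module
    rwa [this]
  have hγ : ∀ t : ℝ, HasDerivAt γ v t := by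
    intro t
    simpa [hγdef] using ((hasDerivAt_id t).smul_const v).const_add x
  -- second derivative data
  set f1 : EuclideanSpace ℝ (Fin n) → ℝ := fun z => fderiv ℝ f z v with hf1def
  set f1β : EuclideanSpace ℝ (Fin n) → ℝ := fun z => fderiv ℝ f z β with hf1βdef
  have hfd1 : ContDiff ℝ 1 (fderiv ℝ f) := hf.fderiv_right (by norm_num)
  have hf1cd : ContDiff ℝ 1 f1 :=
    (ContinuousLinearMap.apply ℝ ℝ v).contDiff.comp hfd1
  have hf1βcd : ContDiff ℝ 1 f1β :=
    (ContinuousLinearMap.apply ℝ ℝ β).contDiff.comp hfd1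
  have hf1diff : Differentiable ℝ f1 := hf1cd.differentiable one_ne_zero
  have hf1βdiff : Differentiable ℝ f1β := hf1βcd.differentiable one_ne_zero
  have hf1eq : f1 = fun z => w * f1β z := by
    funext z
    simp only [hf1def, hf1βdef]
    rw [hvβ, map_smul, smul_eq_mul]
  -- scalar coefficients
  obtain ⟨A, hAdef⟩ : ∃ r : ℝ, r = ‖x - ξ‖^2 := ⟨_, rfl⟩
  obtain ⟨B, hBdef⟩ : ∃ r : ℝ, r = (inner ℝ (x - ξ) v : ℝ) := ⟨_, rfl⟩
  obtain ⟨C, hCdef⟩ : ∃ r : ℝ, r = w^2 := ⟨_, rfl⟩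
  obtain ⟨A', hA'def⟩ : ∃ r : ℝ, r = ‖x‖^2 := ⟨_, rfl⟩
  obtain ⟨B', hB'def⟩ : ∃ r : ℝ, r = (inner ℝ x v : ℝ) := ⟨_, rfl⟩
  have hQid : ∀ t : ℝ, ‖γ t - ξ‖^2 = A + 2*B*t + C*t^2 := by
    intro t
    have h1 : γ t - ξ = (x - ξ) + t • v := by simp only [hγdef]; abel
    rw [h1, norm_add_sq_real, real_inner_smul_right, norm_smul, Real.norm_eq_abs, mul_pow, sq_abs,
      hAdef, hBdef, hCdef, hwdef]
    ring
  have hRid : ∀ t : ℝ, ‖γ t‖^2 = A' + 2*B'*t + C*t^2 := by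
    intro t
    rw [show γ t = x + t • v from rfl, norm_add_sq_real, real_inner_smul_right, norm_smul,
      Real.norm_eq_abs, mul_pow, sq_abs, hA'def, hB'def, hCdef, hwdef]
    ring
  -- 1-D functions
  set c : ℝ := D - m with hcdef
  set h0 : ℝ → ℝ := fun t => f (γ t) with hh0def
  set h1 : ℝ → ℝ := fun t => f1 (γ t) with hh1def
  set h2 : ℝ → ℝ := fun t => fderiv ℝ f1 (γ t) v with hh2def
  have hh0 : ∀ t, HasDerivAt h0 (h1 t) t := fun t =>
    ((hdiff (γ t)).hasFDerivAt).comp_hasDerivAt t (hγ t)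
  have hh1 : ∀ t, HasDerivAt h1 (h2 t) t := fun t =>
    ((hf1diff (γ t)).hasFDerivAt).comp_hasDerivAt t (hγ t)
  set Q0 : ℝ → ℝ := fun t => A + 2*B*t + C*t^2 with hQ0def
  set Q1 : ℝ → ℝ := fun t => 2*B + 2*C*t with hQ1def
  set R0 : ℝ → ℝ := fun t => A' + 2*B'*t + C*t^2 with hR0def
  set R1 : ℝ → ℝ := fun t => 2*B' + 2*C*t with hR1def
  have hQ0' : ∀ t, HasDerivAt Q0 (Q1 t) t := by
    intro t
    have H := (((hasDerivAt_id t).const_mul (2*B)).const_add A).add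
      ((hasDerivAt_pow 2 t).const_mul C)
    refine H.congr_deriv ?_
    simp [hQ1def]; ring
  have hR0' : ∀ t, HasDerivAt R0 (R1 t) t := by
    intro t
    have H := (((hasDerivAt_id t).const_mul (2*B')).const_add A').add
      ((hasDerivAt_pow 2 t).const_mul C)
    refine H.congr_deriv ?_
    simp [hR1def]; ring
  have hQ1' : ∀ t, HasDerivAt Q1 (2*C) t := by
    intro t
    have H := ((hasDerivAt_id t).const_mul (2*C)).const_add (2*B)
    refine H.congr_deriv ?_
    ring
  have hR1' : ∀ t, HasDerivAt R1 (2*C) t := by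
    intro t
    have H := ((hasDerivAt_id t).const_mul (2*C)).const_add (2*B')
    refine H.congr_deriv ?_
    ring
  set g : ℝ → ℝ := fun t => Real.exp (Q0 t) * (h0 t + c) - 2 * ε / 2 * R0 t with hgdef
  set g1 : ℝ → ℝ := fun t =>
    Real.exp (Q0 t) * (Q1 t * (h0 t + c) + h1 t) - 2 * ε / 2 * R1 t with hg1def
  set g2 : ℝ → ℝ := fun t =>
    Real.exp (Q0 t) * (Q1 t * (Q1 t * (h0 t + c) + h1 t)
      + (2*C*(h0 t + c) + Q1 t * h1 t + h2 t)) - 2 * ε / 2 * (2*C) with hg2def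
  have hg' : ∀ t, HasDerivAt g (g1 t) t := by
    intro t
    have H := (((hQ0' t).exp).mul ((hh0 t).add_const c)).sub ((hR0' t).const_mul (2 * ε / 2))
    refine H.congr_deriv ?_
    simp only [hg1def]; ring
  have hg1' : ∀ t, HasDerivAt g1 (g2 t) t := by
    intro t
    have HIn : HasDerivAt (fun t => Q1 t * (h0 t + c) + h1 t)
        (2*C*(h0 t + c) + Q1 t * h1 t + h2 t) t := by
      have H := ((hQ1' t).mul ((hh0 t).add_const c)).add (hh1 t)
      exact H
    have H := (((hQ0' t).exp).mul HIn).sub ((hR1' t).const_mul (2 * ε / 2))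
    refine H.congr_deriv ?_
    simp only [hg2def]; ring
  -- nonnegativity of the second derivative on the interior
  have hg2nn : ∀ t ∈ interior (Icc (0:ℝ) 1), 0 ≤ g2 t := by
    intro t ht
    rw [interior_Icc] at ht
    have hzX : γ t ∈ X := hγX t (Ioo_subset_Icc_self ht)
    have hPl : D + ε ≤ h0 t + c := by
      have := hfε _ hzX
      simp only [hh0def, hcdef]
      linarith
    have hder' := hder _ hzX β hβ1
    have hb1 : |h1 t| ≤ w * D := by
      have : h1 t = w * f1β (γ t) := by rw [hh1def, hf1eq]
      rw [this, abs_mul, abs_of_pos hw]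
      exact mul_le_mul_of_nonneg_left hder'.1 hw.le
    have hb2 : |h2 t| ≤ w^2 * D := by
      have hfd : fderiv ℝ f1 (γ t) = w • fderiv ℝ f1β (γ t) := by
        rw [hf1eq]
        exact fderiv_const_mul (hf1βdiff (γ t)) w
      have : h2 t = w * (w * fderiv ℝ f1β (γ t) β) := by
        show (fderiv ℝ f1 (γ t)) v = _
        rw [hfd, hvβ]
        simp [mul_comm]
      rw [this, ← mul_assoc, ← sq, abs_mul, abs_of_pos (by positivity : (0:ℝ) < w^2)]
      exact mul_le_mul_of_nonneg_left hder'.2 (by positivity)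
    have he : 1 ≤ Real.exp (Q0 t) := by
      apply Real.one_le_exp
      rw [show Q0 t = A + 2*B*t + C*t^2 from rfl, ← hQid t]
      positivity
    have hQ1u : Q1 t = 2 * (B + C * t) := by rw [hQ1def]; ring
    simp only [hg2def]
    rw [hQ1u, hCdef]
    exact key_ineq (Real.exp (Q0 t)) (B + w^2*t) (h0 t + c) (h1 t) (h2 t) w ε D
      he hw hε hD hPl hb1 hb2
  -- convexity of g on [0,1]
  have hcg : ConvexOn ℝ (Icc (0:ℝ) 1) g :=
    convexOn_of_hasDerivWithinAt2_nonneg (convex_Icc 0 1)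
      (fun t _ => (hg' t).continuousAt.continuousWithinAt)
      (fun t _ => (hg' t).hasDerivWithinAt)
      (fun t _ => (hg1' t).hasDerivWithinAt)
      hg2nn
  -- transfer back
  have hgF : ∀ t : ℝ, g t = Real.exp (‖γ t - ξ‖^2) * (f (γ t) - m + D) - 2*ε/2 * ‖γ t‖^2 := by
    intro t
    rw [hQid t, hRid t]
    simp only [hgdef, hh0def, hcdef, hQ0def, hR0def]
    ring
  have hγ0 : γ 0 = x := by simp [hγdef]
  have hγ1 : γ 1 = y := by simp [hγdef, hvdef]
  have hγb : γ b = a • x + b • y := by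
    rw [show a = 1 - b by linarith]
    simp only [hγdef, hvdef]
    module
  have key := hcg.2 (left_mem_Icc.2 zero_le_one) (right_mem_Icc.2 zero_le_one) ha hb hab
  simp only [smul_eq_mul, mul_zero, mul_one, zero_add] at key
  have e0 := hgF 0
  have e1 := hgF 1
  have eb := hgF b
  rw [hγ0] at e0
  rw [hγ1] at e1
  rw [hγb] at eb
  simp only [smul_eq_mul]
  rw [← e0, ← e1, ← eb]
  exact key
end

section
/- Let f ∈ ℝ[x₁,…,xₙ] have degree d > 0 with leading form f_d satisfying f_d(x) > 0 for all x ≠ 0, and write f_{d*} = min{f_d(x) : |x|=1} > 0. Define ‖f‖ = Σ_ν |a_ν|, 𝕂(f) = 2‖f‖/f_{d*}, and m(f) = f_{d*} - Σ_{j=0}^{d-1} 𝕂(f)^{j-d} Σ_{|ν|=j} |a_ν|. Then m(f) > 0 and f(x) ≥ m(f)|x|^d for every x ∈ ℝⁿ with |x| ≥ 𝕂(f). -/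
open Real Set MvPolynomial

/-- `‖f‖ = Σ_ν |a_ν|`. -/
noncomputable def coeffNorm {n : ℕ} (f : MvPolynomial (Fin n) ℝ) : ℝ :=
  ∑ ν ∈ f.support, |f.coeff ν|

/-- `Σ_{|ν|=j} |a_ν|`. -/
noncomputable def coeffSum {n : ℕ} (f : MvPolynomial (Fin n) ℝ) (j : ℕ) : ℝ :=
  ∑ ν ∈ f.support.filter (fun ν => mdeg ν = j), |f.coeff ν|

lemma mdeg_eq_degree {n : ℕ} (ν : Fin n →₀ ℕ) : mdeg ν = ν.degree := by
  rfl

lemma degree_eq_sum_univ {n : ℕ} (ν : Fin n →₀ ℕ) : ν.degree = ∑ i, ν i := by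
  rw [Finsupp.degree]
  exact Finset.sum_subset (Finset.subset_univ _)
    (fun i _ hi => Finsupp.notMem_support_iff.mp hi)

lemma coord_le_norm {n : ℕ} (x : EuclideanSpace ℝ (Fin n)) (i : Fin n) : |x i| ≤ ‖x‖ := by
  rw [EuclideanSpace.norm_eq, show |x i| = Real.sqrt (x i ^ 2) by rw [Real.sqrt_sq_eq_abs]]
  apply Real.sqrt_le_sqrt
  calc x i ^ 2 = ‖x i‖ ^ 2 := by rw [Real.norm_eq_abs, sq_abs]
    _ ≤ ∑ j, ‖x j‖ ^ 2 := Finset.single_le_sum (f := fun j => ‖x j‖ ^ 2)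
        (fun j _ => sq_nonneg _) (Finset.mem_univ i)

lemma eval_homog_smul {n m : ℕ} (φ : MvPolynomial (Fin n) ℝ) (hφ : φ.IsHomogeneous m)
    (c : ℝ) (y : Fin n → ℝ) :
    MvPolynomial.eval (fun i => c * y i) φ = c ^ m * MvPolynomial.eval y φ := by
  rw [eval_eq', eval_eq', Finset.mul_sum]
  refine Finset.sum_congr rfl (fun d hd => ?_)
  have hdeg : d.degree = m := by
    rw [Finsupp.degree_eq_weight_one]; exact hφ (mem_support_iff.mp hd)
  have : ∏ i, (c * y i) ^ d i = c ^ m * ∏ i, y i ^ d i := by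
    simp_rw [mul_pow, Finset.prod_mul_distrib, Finset.prod_pow_eq_pow_sum]
    rw [← degree_eq_sum_univ, hdeg]
  rw [this]; ring

lemma eval_homog_bound {n : ℕ} (f : MvPolynomial (Fin n) ℝ) (j : ℕ) (x : Fin n → ℝ)
    (r : ℝ) (hr : 0 ≤ r) (hx : ∀ i, |x i| ≤ r) :
    |MvPolynomial.eval x (MvPolynomial.homogeneousComponent j f)| ≤ coeffSum f j * r ^ j := by
  rw [eval_eq']
  calc |∑ d ∈ (homogeneousComponent j f).support,
        coeff d (homogeneousComponent j f) * ∏ i, x i ^ d i|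
      ≤ ∑ d ∈ (homogeneousComponent j f).support,
        |coeff d (homogeneousComponent j f) * ∏ i, x i ^ d i| :=
        Finset.abs_sum_le_sum_abs _ _
    _ ≤ ∑ d ∈ (homogeneousComponent j f).support, |coeff d f| * r ^ j := by
        refine Finset.sum_le_sum (fun d hd => ?_)
        have hne := mem_support_iff.mp hd
        have hdeg : d.degree = j := by
          rw [Finsupp.degree_eq_weight_one]
          exact (homogeneousComponent_isHomogeneous j f) hne
        have hc : coeff d (homogeneousComponent j f) = coeff d f := by
          rw [coeff_homogeneousComponent, if_pos hdeg]
        rw [abs_mul, hc]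
        refine mul_le_mul_of_nonneg_left ?_ (abs_nonneg _)
        calc |∏ i, x i ^ d i| = ∏ i, |x i| ^ d i := by
              rw [Finset.abs_prod]; simp_rw [abs_pow]
          _ ≤ ∏ i, r ^ d i :=
              Finset.prod_le_prod (fun i _ => by positivity)
                (fun i _ => pow_le_pow_left₀ (abs_nonneg _) (hx i) _)
          _ = r ^ j := by
              rw [Finset.prod_pow_eq_pow_sum, ← degree_eq_sum_univ, hdeg]
    _ ≤ ∑ d ∈ f.support.filter (fun ν => mdeg ν = j), |coeff d f| * r ^ j := by
        refine Finset.sum_le_sum_of_subset_of_nonneg ?_ (fun d _ _ => by positivity)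
        intro d hd
        have hne := mem_support_iff.mp hd
        have hdeg : d.degree = j := by
          rw [Finsupp.degree_eq_weight_one]
          exact (homogeneousComponent_isHomogeneous j f) hne
        have hcf : coeff d f ≠ 0 := by
          rwa [coeff_homogeneousComponent, if_pos hdeg] at hne
        exact Finset.mem_filter.mpr ⟨mem_support_iff.mpr hcf, by rw [mdeg_eq_degree, hdeg]⟩
    _ = coeffSum f j * r ^ j := by rw [coeffSum, Finset.sum_mul]

/-- Let `f` have degree `d > 0`, leading form `f_d > 0` off `0`, and
`f_{d*} = min{f_d(x) : |x|=1} > 0`. With `𝕂(f) = 2‖f‖/f_{d*}` and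
`m(f) = f_{d*} - Σ_{j=0}^{d-1} 𝕂(f)^{j-d} Σ_{|ν|=j}|a_ν|`, one has `m(f) > 0` and
`f(x) ≥ m(f)|x|^d` whenever `|x| ≥ 𝕂(f)`. -/
theorem stmt7 {n : ℕ} (f : MvPolynomial (Fin n) ℝ) (d : ℕ)
    (hd : f.totalDegree = d) (hdpos : 0 < d)
    (hpos : ∀ x : EuclideanSpace ℝ (Fin n), x ≠ 0 →
      0 < MvPolynomial.eval (fun i => x i) (MvPolynomial.homogeneousComponent d f))
    (fstar : ℝ) (hfstarpos : 0 < fstar)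
    (hfstar : IsLeast
      ((fun x : EuclideanSpace ℝ (Fin n) =>
        MvPolynomial.eval (fun i => x i) (MvPolynomial.homogeneousComponent d f)) ''
        {x | ‖x‖ = 1}) fstar) :
    0 < fstar - ∑ j ∈ Finset.range d,
        (2 * coeffNorm f / fstar) ^ ((j : ℤ) - (d : ℤ)) * coeffSum f j ∧
    ∀ x : EuclideanSpace ℝ (Fin n), 2 * coeffNorm f / fstar ≤ ‖x‖ →
      (fstar - ∑ j ∈ Finset.range d,
          (2 * coeffNorm f / fstar) ^ ((j : ℤ) - (d : ℤ)) * coeffSum f j) * ‖x‖ ^ d ≤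
        MvPolynomial.eval (fun i => x i) f := by
  set K : ℝ := 2 * coeffNorm f / fstar with hK
  -- f ≠ 0
  have hf0 : f ≠ 0 := by
    intro h
    rw [h, totalDegree_zero] at hd
    omega
  -- coeffNorm f > 0
  have hNpos : 0 < coeffNorm f := by
    refine Finset.sum_pos (fun ν hν => abs_pos.mpr (mem_support_iff.mp hν)) ?_
    exact support_nonempty.mpr hf0
  -- coeffSum nonneg
  have hSnn : ∀ j, 0 ≤ coeffSum f j := fun j =>
    Finset.sum_nonneg (fun ν _ => abs_nonneg _)
  -- coeffSum f j ≤ coeffNorm f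
  have hSle : ∀ j, coeffSum f j ≤ coeffNorm f := fun j =>
    Finset.sum_le_sum_of_subset_of_nonneg (Finset.filter_subset _ _)
      (fun ν _ _ => abs_nonneg _)
  -- ∑_{j < d} coeffSum f j ≤ coeffNorm f
  have hsumS : ∑ j ∈ Finset.range d, coeffSum f j ≤ coeffNorm f := by
    have key : ∑ j ∈ Finset.range (d + 1), coeffSum f j = coeffNorm f := by
      rw [coeffNorm]
      exact Finset.sum_fiberwise_of_maps_to (g := fun ν => mdeg ν)
        (fun ν hν => Finset.mem_range.mpr (Nat.lt_succ_of_le (hd ▸ MvPolynomial.le_totalDegree hν)))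
        (fun ν => |coeff ν f|)
    calc ∑ j ∈ Finset.range d, coeffSum f j
        ≤ ∑ j ∈ Finset.range (d + 1), coeffSum f j :=
          Finset.sum_le_sum_of_subset_of_nonneg
            (Finset.range_subset_range.mpr (Nat.le_succ d)) (fun j _ _ => hSnn j)
      _ = coeffNorm f := key
  -- fstar ≤ coeffNorm f
  have hfN : fstar ≤ coeffNorm f := by
    obtain ⟨x₀, hx₀, hev⟩ := hfstar.1
    have hb := eval_homog_bound f d (fun i => x₀ i) 1 zero_le_one
      (fun i => by
        have := EuclideanSpace.norm_eq x₀
        have h1 : |x₀ i| ≤ ‖x₀‖ := coord_le_norm x₀ i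
        rw [hx₀] at h1; exact h1)
    replace hev : MvPolynomial.eval (fun i => x₀ i)
        (MvPolynomial.homogeneousComponent d f) = fstar := hev
    rw [hev, one_pow, mul_one] at hb
    exact le_trans (le_abs_self _) (le_trans hb (hSle d))
  have hK2 : (2 : ℝ) ≤ K := by
    rw [hK, le_div_iff₀ hfstarpos]
    nlinarith
  have hKpos : (0 : ℝ) < K := lt_of_lt_of_le two_pos hK2
  have hK1 : (1 : ℝ) ≤ K := le_trans one_le_two hK2
  -- the key bound on the error sum
  have hsum_le : ∑ j ∈ Finset.range d, K ^ ((j : ℤ) - (d : ℤ)) * coeffSum f j ≤ fstar / 2 := by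
    have step : ∀ j ∈ Finset.range d,
        K ^ ((j : ℤ) - (d : ℤ)) * coeffSum f j ≤ K⁻¹ * coeffSum f j := by
      intro j hj
      refine mul_le_mul_of_nonneg_right ?_ (hSnn j)
      have hj' : (j : ℤ) - (d : ℤ) ≤ -1 := by
        have := Finset.mem_range.mp hj; omega
      calc K ^ ((j : ℤ) - (d : ℤ)) ≤ K ^ (-1 : ℤ) := zpow_le_zpow_right₀ hK1 hj'
        _ = K⁻¹ := zpow_neg_one K
    calc ∑ j ∈ Finset.range d, K ^ ((j : ℤ) - (d : ℤ)) * coeffSum f j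
        ≤ ∑ j ∈ Finset.range d, K⁻¹ * coeffSum f j := Finset.sum_le_sum step
      _ = K⁻¹ * ∑ j ∈ Finset.range d, coeffSum f j := by rw [Finset.mul_sum]
      _ ≤ K⁻¹ * coeffNorm f := by
          exact mul_le_mul_of_nonneg_left hsumS (inv_nonneg.mpr hKpos.le)
      _ = fstar / 2 := by
          rw [hK]
          field_simp
  have hm : 0 < fstar - ∑ j ∈ Finset.range d,
      K ^ ((j : ℤ) - (d : ℤ)) * coeffSum f j := by
    have : fstar / 2 < fstar := by linarith
    linarith
  refine ⟨hm, ?_⟩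
  intro x hx
  have hxK : K ≤ ‖x‖ := hx
  have hxpos : 0 < ‖x‖ := lt_of_lt_of_le hKpos hxK
  have hxne : x ≠ 0 := fun h => by simp [h] at hxpos
  -- leading term bound
  have hlead : fstar * ‖x‖ ^ d ≤
      MvPolynomial.eval (fun i => x i) (MvPolynomial.homogeneousComponent d f) := by
    set u : EuclideanSpace ℝ (Fin n) := ‖x‖⁻¹ • x with hu
    have hnu : ‖u‖ = 1 := by
      rw [hu, norm_smul, norm_inv, norm_norm, inv_mul_cancel₀ hxpos.ne']
    have hfu : fstar ≤ MvPolynomial.eval (fun i => u i)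
        (MvPolynomial.homogeneousComponent d f) :=
      hfstar.2 ⟨u, hnu, rfl⟩
    have hxi : (fun i => x i) = (fun i => ‖x‖ * u i) := by
      funext i
      rw [hu]
      simp [PiLp.smul_apply, smul_eq_mul]
      field_simp
    rw [hxi, eval_homog_smul _ (homogeneousComponent_isHomogeneous d f)]
    have : 0 ≤ ‖x‖ ^ d := by positivity
    calc fstar * ‖x‖ ^ d = ‖x‖ ^ d * fstar := by ring
      _ ≤ ‖x‖ ^ d * MvPolynomial.eval (fun i => u i)
          (MvPolynomial.homogeneousComponent d f) :=
          mul_le_mul_of_nonneg_left hfu this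
  -- lower-degree bounds
  have hlow : ∀ j ∈ Finset.range d,
      -(K ^ ((j : ℤ) - (d : ℤ)) * coeffSum f j * ‖x‖ ^ d) ≤
      MvPolynomial.eval (fun i => x i) (MvPolynomial.homogeneousComponent j f) := by
    intro j hj
    have hjd := Finset.mem_range.mp hj
    have hb := eval_homog_bound f j (fun i => x i) ‖x‖ hxpos.le
      (fun i => coord_le_norm x i)
    -- ‖x‖^j ≤ K^{j-d} * ‖x‖^d
    have hpow : ‖x‖ ^ j ≤ K ^ ((j : ℤ) - (d : ℤ)) * ‖x‖ ^ d := by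
      have h1 : K ^ ((j : ℤ) - (d : ℤ)) = (K ^ (d - j))⁻¹ := by
        rw [← zpow_natCast K (d - j), ← zpow_neg]
        congr 1
        omega
      rw [h1]
      have hKdj : (0 : ℝ) < K ^ (d - j) := by positivity
      rw [inv_mul_eq_div, le_div_iff₀ hKdj]
      calc ‖x‖ ^ j * K ^ (d - j) ≤ ‖x‖ ^ j * ‖x‖ ^ (d - j) := by
            refine mul_le_mul_of_nonneg_left ?_ (by positivity)
            exact pow_le_pow_left₀ hKpos.le hxK _
        _ = ‖x‖ ^ d := by rw [← pow_add]; congr 1; omega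
    have habs : |MvPolynomial.eval (fun i => x i)
        (MvPolynomial.homogeneousComponent j f)| ≤
        K ^ ((j : ℤ) - (d : ℤ)) * coeffSum f j * ‖x‖ ^ d := by
      calc |MvPolynomial.eval (fun i => x i) (MvPolynomial.homogeneousComponent j f)|
          ≤ coeffSum f j * ‖x‖ ^ j := hb
        _ ≤ coeffSum f j * (K ^ ((j : ℤ) - (d : ℤ)) * ‖x‖ ^ d) :=
            mul_le_mul_of_nonneg_left hpow (hSnn j)
        _ = K ^ ((j : ℤ) - (d : ℤ)) * coeffSum f j * ‖x‖ ^ d := by ring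
    linarith [neg_abs_le (MvPolynomial.eval (fun i => x i)
      (MvPolynomial.homogeneousComponent j f))]
  -- decomposition
  have hdecomp : MvPolynomial.eval (fun i => x i) f =
      MvPolynomial.eval (fun i => x i) (MvPolynomial.homogeneousComponent d f) +
      ∑ j ∈ Finset.range d,
        MvPolynomial.eval (fun i => x i) (MvPolynomial.homogeneousComponent j f) := by
    conv_lhs => rw [← sum_homogeneousComponent f]
    rw [hd, map_sum, Finset.sum_range_succ, add_comm]
  rw [hdecomp]
  have hsum2 : ∑ j ∈ Finset.range d,
      -(K ^ ((j : ℤ) - (d : ℤ)) * coeffSum f j * ‖x‖ ^ d) ≤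
      ∑ j ∈ Finset.range d,
        MvPolynomial.eval (fun i => x i) (MvPolynomial.homogeneousComponent j f) :=
    Finset.sum_le_sum hlow
  have hexp : ∑ j ∈ Finset.range d,
      -(K ^ ((j : ℤ) - (d : ℤ)) * coeffSum f j * ‖x‖ ^ d) =
      -((∑ j ∈ Finset.range d, K ^ ((j : ℤ) - (d : ℤ)) * coeffSum f j) * ‖x‖ ^ d) := by
    rw [Finset.sum_mul, ← Finset.sum_neg_distrib]
  rw [hexp] at hsum2
  nlinarith [hlead, hsum2]
end

section
/- Let X ⊆ ℝⁿ be a convex closed set and f a polynomial of degree d > 0 whose leading form f_d vanishes only at 0 (i.e., f_d(x) ≠ 0 for x ≠ 0), and suppose inf{f(x) : x ∈ X} ≥ m for some m > 0. Then there exists N₀ ∈ ℕ such that for every integer N ≥ N₀ and every ξ ∈ ℝⁿ, the function φ(x) = e^{N|x-ξ|²} f(x) is strongly convex on X. -/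
open Real Set MvPolynomial

namespace Stmt8Aux

lemma comp_le_norm {n : ℕ} (z : EuclideanSpace ℝ (Fin n)) (i : Fin n) : |z i| ≤ ‖z‖ := by
  rw [EuclideanSpace.norm_eq]
  rw [show |z i| = Real.sqrt (|z i| ^ 2) by rw [Real.sqrt_sq_eq_abs, abs_abs]]
  apply Real.sqrt_le_sqrt
  exact Finset.single_le_sum (f := fun j => ‖z j‖ ^ 2) (fun j _ => by positivity) (Finset.mem_univ i)

lemma eval_bound {n : ℕ} (p : MvPolynomial (Fin n) ℝ) (k : ℕ) (hk : p.totalDegree ≤ k) :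
    ∃ C : ℝ, 0 ≤ C ∧ ∀ (w : Fin n → ℝ) (B : ℝ), 1 ≤ B → (∀ i, |w i| ≤ B) →
      |MvPolynomial.eval w p| ≤ C * B ^ k := by
  refine ⟨∑ s ∈ p.support, |coeff s p|, Finset.sum_nonneg (fun _ _ => abs_nonneg _), ?_⟩
  intro w B hB hw
  rw [eval_eq]
  refine (Finset.abs_sum_le_sum_abs _ _).trans ?_
  rw [Finset.sum_mul]
  apply Finset.sum_le_sum
  intro s hs
  rw [abs_mul]
  refine mul_le_mul_of_nonneg_left ?_ (abs_nonneg _)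
  rw [Finset.abs_prod]
  calc ∏ i ∈ s.support, |w i ^ s i| ≤ ∏ i ∈ s.support, B ^ s i := by
        refine Finset.prod_le_prod (fun _ _ => abs_nonneg _) (fun i _ => ?_)
        rw [abs_pow]
        exact pow_le_pow_left₀ (abs_nonneg _) (hw i) _
    _ = B ^ (∑ i ∈ s.support, s i) := by rw [Finset.prod_pow_eq_pow_sum]
    _ ≤ B ^ k := pow_le_pow_right₀ hB ((le_totalDegree hs).trans hk)

lemma totalDegree_pderiv_le' {n : ℕ} (p : MvPolynomial (Fin n) ℝ) (i : Fin n) :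
    (pderiv i p).totalDegree ≤ p.totalDegree := by
  classical
  conv_lhs => rw [p.as_sum]
  rw [map_sum]
  refine (totalDegree_finset_sum _ _).trans ?_
  apply Finset.sup_le
  intro s hs
  rw [pderiv_monomial]
  refine (totalDegree_monomial_le _ _).trans ?_
  refine le_trans ?_ (le_totalDegree hs)
  rw [Finsupp.sum_of_support_subset _ (Finsupp.support_tsub) _ (fun _ _ => rfl)]
  exact Finset.sum_le_sum fun j _ => tsub_le_self.trans (le_refl (s j))

lemma eval_homog {n : ℕ} {p : MvPolynomial (Fin n) ℝ} {k : ℕ} (hp : p.IsHomogeneous k)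
    (w : Fin n → ℝ) (t : ℝ) :
    MvPolynomial.eval (fun i => t * w i) p = t ^ k * MvPolynomial.eval w p := by
  rw [eval_eq, eval_eq, Finset.mul_sum]
  apply Finset.sum_congr rfl
  intro s hs
  have hdeg : s.degree = k := by
    by_contra h
    exact (mem_support_iff.mp hs) (hp.coeff_eq_zero h)
  have h1 : ∏ i ∈ s.support, (t * w i) ^ s i
      = t ^ (∑ i ∈ s.support, s i) * ∏ i ∈ s.support, w i ^ s i := by
    rw [← Finset.prod_pow_eq_pow_sum, ← Finset.prod_mul_distrib]
    exact Finset.prod_congr rfl fun i _ => mul_pow _ _ _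
  rw [h1]
  have hsum : ∑ i ∈ s.support, s i = k := hdeg
  rw [hsum]
  ring

noncomputable def lineq {n : ℕ} (x v : Fin n → ℝ) : MvPolynomial (Fin n) ℝ →+* Polynomial ℝ :=
  MvPolynomial.eval₂Hom Polynomial.C
    (fun i => Polynomial.C (x i) + Polynomial.C (v i) * Polynomial.X)

noncomputable def dirDeriv {n : ℕ} (v : Fin n → ℝ) (p : MvPolynomial (Fin n) ℝ) :
    MvPolynomial (Fin n) ℝ :=
  ∑ i, MvPolynomial.C (v i) * MvPolynomial.pderiv i p

lemma lineq_eval {n : ℕ} (x v : Fin n → ℝ) (p : MvPolynomial (Fin n) ℝ) (t : ℝ) :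
    (lineq x v p).eval t = MvPolynomial.eval (fun i => x i + t * v i) p := by
  have h := MvPolynomial.eval₂_comp_left (Polynomial.evalRingHom t) Polynomial.C
    (fun i => Polynomial.C (x i) + Polynomial.C (v i) * Polynomial.X) p
  have h2 : (lineq x v p).eval t = (Polynomial.evalRingHom t)
      (eval₂ Polynomial.C (fun i => Polynomial.C (x i) + Polynomial.C (v i) * Polynomial.X) p) := by
    simp only [lineq, coe_eval₂Hom]; rfl
  rw [h2, h]
  have h3 : (Polynomial.evalRingHom t).comp Polynomial.C = RingHom.id ℝ := by
    ext a; simp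
  rw [h3]
  have h4 : (⇑(Polynomial.evalRingHom t) ∘
      fun i => Polynomial.C (x i) + Polynomial.C (v i) * Polynomial.X)
      = fun i => x i + t * v i := by
    funext i
    simp only [Function.comp_apply, Polynomial.coe_evalRingHom, Polynomial.eval_add,
      Polynomial.eval_C, Polynomial.eval_mul, Polynomial.eval_X]
    ring
  rw [h4]
  rfl

lemma dirDeriv_add {n : ℕ} (v : Fin n → ℝ) (p q : MvPolynomial (Fin n) ℝ) :
    dirDeriv v (p + q) = dirDeriv v p + dirDeriv v q := by
  simp [dirDeriv, mul_add, Finset.sum_add_distrib]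

lemma lineq_derivative {n : ℕ} (x v : Fin n → ℝ) (p : MvPolynomial (Fin n) ℝ) :
    Polynomial.derivative (lineq x v p) = lineq x v (dirDeriv v p) := by
  induction p using MvPolynomial.induction_on with
  | C a =>
      simp [lineq, dirDeriv]
  | add p q hp hq =>
      rw [dirDeriv_add, map_add, map_add, map_add, hp, hq]
  | mul_X p j hp =>
      classical
      have hd : dirDeriv v (p * X j) = dirDeriv v p * X j + C (v j) * p := by
        unfold dirDeriv
        rw [Finset.sum_mul]
        have h5 : ∀ i : Fin n, C (v i) * pderiv i (p * X j)
            = C (v i) * pderiv i p * X j + (if i = j then C (v j) * p else 0) := by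
          intro i
          rw [pderiv_mul]
          by_cases hij : i = j
          · subst hij; simp [mul_add, mul_comm, mul_assoc, mul_left_comm]
          · simp [hij, pderiv_X_of_ne (Ne.symm hij), mul_assoc]
        rw [Finset.sum_congr rfl (fun i _ => h5 i), Finset.sum_add_distrib,
          Finset.sum_ite_eq' Finset.univ j (fun _ => C (v j) * p)]
        simp
      have hXj : lineq x v (X j) = Polynomial.C (x j) + Polynomial.C (v j) * Polynomial.X := by
        simp [lineq]
      have hCv : lineq x v (C (v j)) = Polynomial.C (v j) := by simp [lineq]
      rw [map_mul, Polynomial.derivative_mul, hp, hd]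
      simp only [map_add, map_mul, hXj, hCv, Polynomial.derivative_add, Polynomial.derivative_mul,
        Polynomial.derivative_C, Polynomial.derivative_X, zero_mul, zero_add, mul_one, mul_zero,
        add_zero]
      ring

lemma oneD {g g1 g2 : ℝ → ℝ} (h1 : ∀ t, HasDerivAt g (g1 t) t)
    (h2 : ∀ t, HasDerivAt g1 (g2 t) t) {K : ℝ}
    (hK : ∀ t ∈ Set.Icc (0:ℝ) 1, K ≤ g2 t) {a b : ℝ}
    (ha : 0 ≤ a) (hb : 0 ≤ b) (hab : a + b = 1) :
    g b ≤ a * g 0 + b * g 1 - a * b * (K / 2) := by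
  set h : ℝ → ℝ := fun t => g t - K / 2 * t ^ 2 with hhdef
  have hh1 : ∀ t, HasDerivAt h (g1 t - K * t) t := by
    intro t
    have hq : HasDerivAt (fun t : ℝ => K / 2 * t ^ 2) (K / 2 * (2 * t ^ 1)) t :=
      (hasDerivAt_pow 2 t).const_mul _
    have := (h1 t).sub hq
    exact this.congr_deriv (by ring)
  have hh2 : ∀ t, HasDerivAt (fun t => g1 t - K * t) (g2 t - K) t := by
    intro t
    have hl : HasDerivAt (fun t : ℝ => K * t) (K * 1) t := (hasDerivAt_id t).const_mul K
    exact ((h2 t).sub hl).congr_deriv (by ring)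
  have hderiv : deriv h = fun t => g1 t - K * t := funext fun t => (hh1 t).deriv
  have hconv : ConvexOn ℝ (Set.Icc (0:ℝ) 1) h := by
    apply convexOn_of_deriv2_nonneg (convex_Icc 0 1)
    · exact fun t _ => (hh1 t).continuousAt.continuousWithinAt
    · exact fun t _ => (hh1 t).differentiableAt.differentiableWithinAt
    · rw [hderiv]
      exact fun t _ => (hh2 t).differentiableAt.differentiableWithinAt
    · intro t ht
      have e : deriv^[2] h t = g2 t - K := by
        show deriv (deriv h) t = _
        rw [hderiv]
        exact (hh2 t).deriv
      rw [e]
      have := hK t (interior_subset ht)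
      linarith
  have h0 : (0:ℝ) ∈ Set.Icc (0:ℝ) 1 := by constructor <;> norm_num
  have h1' : (1:ℝ) ∈ Set.Icc (0:ℝ) 1 := by constructor <;> norm_num
  have key := hconv.2 h0 h1' ha hb hab
  simp only [smul_eq_mul, mul_zero, mul_one, zero_add] at key
  have hb' : a = 1 - b := by linarith
  subst hb'
  simp only [hhdef] at key
  nlinarith [key]

lemma totalDegree_sub_hc {n : ℕ} (f : MvPolynomial (Fin n) ℝ) (d : ℕ)
    (hdf : f.totalDegree = d) :
    (f - homogeneousComponent d f).totalDegree ≤ d - 1 := by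
  apply Finset.sup_le
  intro s hs
  have hco : coeff s (f - homogeneousComponent d f) ≠ 0 := mem_support_iff.mp hs
  rw [coeff_sub, coeff_homogeneousComponent] at hco
  by_cases hdeg : s.degree = d
  · simp [hdeg] at hco
  · simp only [hdeg, if_false, sub_zero] at hco
    have h1 : (s.sum fun _ e => e) ≤ d := hdf ▸ le_totalDegree (mem_support_iff.mpr hco)
    have h2 : (s.sum fun _ e => e) = s.degree := rfl
    omega

end Stmt8Aux

open Stmt8Aux

set_option maxHeartbeats 3000000 in
/-- Let `X ⊆ ℝⁿ` be closed convex and `f` a polynomial of degree `d > 0`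
whose leading form vanishes only at the origin, with `f ≥ m > 0` on `X`. Then there is
`N₀ ∈ ℕ` such that for every integer `N ≥ N₀` and every `ξ ∈ ℝⁿ`, the function
`φ(x) = e^{N|x-ξ|²} f(x)` is strongly convex on `X`. -/
theorem stmt8 {n : ℕ} (X : Set (EuclideanSpace ℝ (Fin n)))
    (hXcl : IsClosed X) (hXcon : Convex ℝ X)
    (f : MvPolynomial (Fin n) ℝ) (d : ℕ) (hd : f.totalDegree = d) (hdpos : 0 < d)
    (hld : ∀ x : EuclideanSpace ℝ (Fin n), x ≠ 0 →
      MvPolynomial.eval (fun i => x i) (MvPolynomial.homogeneousComponent d f) ≠ 0)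
    (m : ℝ) (hm : 0 < m)
    (hmf : ∀ x ∈ X, m ≤ MvPolynomial.eval (fun i => x i) f) :
    ∃ N₀ : ℕ, ∀ N : ℕ, N₀ ≤ N → ∀ ξ : EuclideanSpace ℝ (Fin n),
      ∃ μ > 0, StrongConvexOn X μ
        (fun x => Real.exp ((N : ℝ) * ‖x - ξ‖ ^ 2) * MvPolynomial.eval (fun i => x i) f) := by
  classical
  rcases Nat.eq_zero_or_pos n with hn0 | hn
  · exfalso
    subst hn0
    obtain ⟨a, rfl⟩ := MvPolynomial.C_surjective (Fin 0) f
    rw [totalDegree_C] at hd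
    omega
  set fd := homogeneousComponent d f with hfddef
  -- minimum of |fd| on the unit sphere
  have hcont : Continuous fun u : EuclideanSpace ℝ (Fin n) =>
      |MvPolynomial.eval (fun i => u i) fd| := by
    apply Continuous.abs
    exact (MvPolynomial.continuous_eval fd).comp (continuous_pi fun i => (EuclideanSpace.proj i).continuous)
  obtain ⟨u0, hu0mem, hu0min'⟩ := (isCompact_sphere (0 : EuclideanSpace ℝ (Fin n)) 1)
    |>.exists_isMinOn ⟨EuclideanSpace.single ⟨0, hn⟩ (1:ℝ), by
      simp [mem_sphere_iff_norm, EuclideanSpace.norm_single]⟩ hcont.continuousOn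
  have hu0min := isMinOn_iff.mp hu0min'
  set c0 := |MvPolynomial.eval (fun i => u0 i) fd| with hc0def
  have hu0norm : ‖u0‖ = 1 := by simpa [mem_sphere_iff_norm] using hu0mem
  have hc0 : 0 < c0 := by
    apply abs_pos.mpr
    apply hld u0
    intro h
    rw [h] at hu0norm
    simp at hu0norm
  have hlow : ∀ z : EuclideanSpace ℝ (Fin n),
      c0 * ‖z‖ ^ d ≤ |MvPolynomial.eval (fun i => z i) fd| := by
    intro z
    rcases eq_or_ne z 0 with rfl | hz
    · have : ‖(0 : EuclideanSpace ℝ (Fin n))‖ = 0 := norm_zero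
      rw [this, zero_pow hdpos.ne', mul_zero]
      exact abs_nonneg _
    · set u : EuclideanSpace ℝ (Fin n) := ‖z‖⁻¹ • z with hu
      have hznorm : 0 < ‖z‖ := norm_pos_iff.mpr hz
      have hun : ‖u‖ = 1 := by
        rw [hu, norm_smul, norm_inv, norm_norm, inv_mul_cancel₀ hznorm.ne']
      have hz' : (fun i => z i) = fun i => ‖z‖ * u i := by
        funext i
        rw [hu]
        simp only [PiLp.smul_apply, smul_eq_mul]
        field_simp
      rw [hz', eval_homog (homogeneousComponent_isHomogeneous d f) _ ‖z‖, abs_mul, abs_pow,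
        abs_of_nonneg hznorm.le]
      have hmin : c0 ≤ |MvPolynomial.eval (fun i => u i) fd| :=
        hu0min u (by simp [mem_sphere_iff_norm, hun])
      have hp : (0:ℝ) ≤ ‖z‖ ^ d := pow_nonneg hznorm.le d
      nlinarith
  -- constants
  have h1 : ∀ i : Fin n, ∃ C : ℝ, 0 ≤ C ∧ ∀ (w : Fin n → ℝ) (B : ℝ), 1 ≤ B → (∀ j, |w j| ≤ B) →
      |MvPolynomial.eval w (pderiv i f)| ≤ C * B ^ d :=
    fun i => eval_bound _ d ((totalDegree_pderiv_le' f i).trans hd.le)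
  choose Cp hCp0 hCpb using h1
  have h2 : ∀ i j : Fin n, ∃ C : ℝ, 0 ≤ C ∧ ∀ (w : Fin n → ℝ) (B : ℝ), 1 ≤ B →
      (∀ l, |w l| ≤ B) → |MvPolynomial.eval w (pderiv i (pderiv j f))| ≤ C * B ^ d :=
    fun i j => eval_bound _ d
      (((totalDegree_pderiv_le' _ i).trans (totalDegree_pderiv_le' f j)).trans hd.le)
  choose Cpp hCpp0 hCppb using h2
  obtain ⟨C3, hC30, hC3b⟩ := eval_bound (f - fd) (d-1) (totalDegree_sub_hc f d hd)
  set C1 := ∑ i, Cp i with hC1def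
  set C2 := ∑ i, ∑ j, Cpp i j with hC2def
  have hC10 : 0 ≤ C1 := Finset.sum_nonneg fun i _ => hCp0 i
  have hC20 : 0 ≤ C2 := Finset.sum_nonneg fun i _ => Finset.sum_nonneg fun j _ => hCpp0 i j
  set R : ℝ := max 1 (2 ^ d * (C3 + 1) / c0) with hRdef
  have hR1 : (1:ℝ) ≤ R := le_max_left _ _
  -- lower bound for f far away on X
  have hFlow : ∀ z ∈ X, R ≤ ‖z‖ →
      c0 / 2 * ‖z‖ ^ d ≤ MvPolynomial.eval (fun i => z i) f := by
    intro z hz hRz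
    have hFm : m ≤ MvPolynomial.eval (fun i => z i) f := hmf z hz
    set F := MvPolynomial.eval (fun i => z i) f with hFdef
    have hz1 : (1:ℝ) ≤ ‖z‖ := hR1.trans hRz
    have hsub : |F - MvPolynomial.eval (fun i => z i) fd| ≤ C3 * (1+‖z‖)^(d-1) := by
      have h6 := hC3b (fun i => z i) (1+‖z‖) (by linarith)
        (fun i => (comp_le_norm z i).trans (by linarith))
      rwa [map_sub] at h6
    have habs : c0 * ‖z‖^d ≤ |MvPolynomial.eval (fun i => z i) fd| := hlow z
    have hb1 : ((1:ℝ)+‖z‖)^(d-1) ≤ 2^(d-1) * ‖z‖^(d-1) := by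
      calc ((1:ℝ)+‖z‖)^(d-1) ≤ (2*‖z‖)^(d-1) :=
            pow_le_pow_left₀ (by positivity) (by linarith) _
        _ = 2^(d-1)*‖z‖^(d-1) := mul_pow _ _ _
    have hRbig : 2^d * (C3+1) / c0 ≤ ‖z‖ := (le_max_right _ _).trans hRz
    have hstep : C3 * (2^(d-1) * ‖z‖^(d-1)) ≤ c0/2 * ‖z‖^d := by
      have hzd : ‖z‖^d = ‖z‖^(d-1) * ‖z‖ := by
        conv_lhs => rw [show d = (d-1)+1 by omega]
        rw [pow_succ]
      rw [hzd]
      have h7 : 2^d * (C3+1) ≤ ‖z‖ * c0 := (div_le_iff₀ hc0).mp hRbig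
      have h2d : (2:ℝ)^d = 2 * 2^(d-1) := by
        rw [← pow_succ']
        congr 1
        omega
      have h8 : (2:ℝ)^(d-1) * (C3+1) ≤ c0/2 * ‖z‖ := by nlinarith
      have hp : (0:ℝ) ≤ ‖z‖^(d-1) := by positivity
      have hC3lt : C3 < C3 + 1 := by linarith
      nlinarith [pow_pos (show (0:ℝ) < 2 by norm_num) (d-1)]
    have h9 : -(C3*(1+‖z‖)^(d-1)) ≤ F - MvPolynomial.eval (fun i => z i) fd :=
      (abs_le.mp hsub).1
    have h9' : F - MvPolynomial.eval (fun i => z i) fd ≤ C3*(1+‖z‖)^(d-1) :=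
      (abs_le.mp hsub).2
    have h10 : C3*(1+‖z‖)^(d-1) ≤ C3*(2^(d-1)*‖z‖^(d-1)) := by nlinarith
    by_cases hsign : 0 ≤ MvPolynomial.eval (fun i => z i) fd
    · rw [abs_of_nonneg hsign] at habs
      linarith
    · exfalso
      push_neg at hsign
      rw [abs_of_neg hsign] at habs
      have hzp : (0:ℝ) < ‖z‖^d := pow_pos (by linarith) d
      nlinarith
  -- global quantitative claim
  set D1 : ℝ := (m + C2 * (1+R)^d) / m + (C1 * (1+R)^d / m)^2 with hD1def
  set D2 : ℝ := 1 + C2 * 2^(d+1) / c0 + (C1 * 2^(d+1) / c0)^2 with hD2def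
  have hRd0 : (0:ℝ) ≤ (1+R)^d := pow_nonneg (by linarith) d
  have hD10 : 0 ≤ D1 := by
    apply add_nonneg
    · exact div_nonneg (add_nonneg hm.le (mul_nonneg hC20 hRd0)) hm.le
    · exact sq_nonneg _
  have hD20 : 0 ≤ D2 := by
    apply add_nonneg
    apply add_nonneg
    · norm_num
    · exact div_nonneg (mul_nonneg hC20 (by positivity)) hc0.le
    · exact sq_nonneg _
  refine ⟨⌈D1 + D2⌉₊, fun N hN ξ => ?_⟩
  have h2N : D1 + D2 ≤ 2 * (N:ℝ) := by
    have hle : D1 + D2 ≤ (⌈D1 + D2⌉₊ : ℝ) := Nat.le_ceil _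
    have hle2 : ((⌈D1 + D2⌉₊ : ℕ) : ℝ) ≤ (N:ℝ) := Nat.cast_le.mpr hN
    have hN0 : (0:ℝ) ≤ (N:ℝ) := Nat.cast_nonneg N
    linarith
  have key : ∀ z ∈ X, (m + C2 * (1+‖z‖)^d) * (MvPolynomial.eval (fun i => z i) f)
      + (C1 * (1+‖z‖)^d)^2 ≤ 2 * (N:ℝ) * (MvPolynomial.eval (fun i => z i) f)^2 := by
    intro z hz
    have hFm : m ≤ MvPolynomial.eval (fun i => z i) f := hmf z hz
    set F := MvPolynomial.eval (fun i => z i) f with hFdef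
    have hF0 : 0 < F := lt_of_lt_of_le hm hFm
    set M : ℝ := 1 + ‖z‖ with hMdef
    have hM0 : (0:ℝ) ≤ M := by positivity
    have hM1 : (1:ℝ) ≤ M := by
      have := norm_nonneg z
      rw [hMdef]; linarith
    have hDD : (m + C2 * M^d) * F + (C1 * M^d)^2 ≤ (D1 + D2) * F^2 := by
      by_cases hRz : ‖z‖ ≤ R
      · have hMR : M ^ d ≤ (1+R)^d := pow_le_pow_left₀ hM0 (by rw [hMdef]; linarith) d
        have hMd0 : (0:ℝ) ≤ M^d := pow_nonneg hM0 d
        have hRd0 : (0:ℝ) ≤ (1+R)^d := by positivity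
        have hh1 : (m + C2 * M^d) * F ≤ (m + C2 * (1+R)^d)/m * F^2 := by
          have b1 : m + C2*M^d ≤ m + C2*(1+R)^d := by nlinarith
          have b2 : F ≤ F^2 / m := by
            rw [le_div_iff₀ hm]
            nlinarith
          calc (m + C2*M^d)*F ≤ (m + C2*(1+R)^d)*F := by nlinarith
            _ ≤ (m + C2*(1+R)^d) * (F^2/m) := by
                have : (0:ℝ) ≤ m + C2*(1+R)^d := by positivity
                nlinarith
            _ = (m + C2*(1+R)^d)/m * F^2 := by field_simp
        have hh2 : (C1*M^d)^2 ≤ (C1*(1+R)^d/m)^2 * F^2 := by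
          have b3 : C1*M^d ≤ C1*(1+R)^d := by nlinarith
          have b3' : (0:ℝ) ≤ C1*M^d := mul_nonneg hC10 hMd0
          have b4 : (C1*M^d)^2 ≤ (C1*(1+R)^d)^2 := by nlinarith [b3, b3']
          have h4 : (1:ℝ) ≤ F/m := (one_le_div hm).mpr hFm
          have h4' : (1:ℝ) ≤ (F/m)^2 := by nlinarith [h4]
          have b5 : (C1*(1+R)^d)^2 * 1 ≤ (C1*(1+R)^d)^2 * (F/m)^2 :=
            mul_le_mul_of_nonneg_left h4' (sq_nonneg _)
          have b6 : (C1*(1+R)^d/m)^2 * F^2 = (C1*(1+R)^d)^2 * (F/m)^2 := by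
            field_simp
          rw [b6]
          linarith
        have hfin : D1 * F^2 ≤ (D1 + D2)*F^2 := by nlinarith [sq_nonneg F]
        calc (m + C2 * M^d) * F + (C1 * M^d)^2
            ≤ (m + C2 * (1+R)^d)/m * F^2 + (C1*(1+R)^d/m)^2 * F^2 := by linarith
          _ = D1 * F^2 := by rw [hD1def]; ring
          _ ≤ (D1 + D2) * F^2 := hfin
      · push_neg at hRz
        have hz1 : (1:ℝ) ≤ ‖z‖ := hR1.trans hRz.le
        have hMd0 : (0:ℝ) ≤ M^d := pow_nonneg hM0 d
        have hMd : M ^ d ≤ 2^(d+1)/c0 * F := by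
          have h5 : M ≤ 2*‖z‖ := by rw [hMdef]; linarith
          have h6 : M^d ≤ (2*‖z‖)^d := pow_le_pow_left₀ hM0 h5 d
          rw [mul_pow] at h6
          have h7 : c0/2 * ‖z‖^d ≤ F := hFlow z hz hRz.le
          have h8 : ‖z‖^d ≤ 2/c0 * F := by
            rw [div_mul_eq_mul_div, le_div_iff₀ hc0]
            nlinarith
          have h2p : (0:ℝ) < 2^d := pow_pos (by norm_num) d
          calc M^d ≤ 2^d * ‖z‖^d := h6
            _ ≤ 2^d * (2/c0 * F) := by nlinarith
            _ = 2^(d+1)/c0 * F := by rw [pow_succ]; field_simp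
        have t1 : m * F ≤ F^2 := by nlinarith
        have t2 : C2 * M^d * F ≤ C2 * 2^(d+1)/c0 * F^2 := by
          have : C2 * (M^d) ≤ C2 * (2^(d+1)/c0 * F) := by nlinarith
          calc C2 * M^d * F ≤ C2 * (2^(d+1)/c0 * F) * F := by nlinarith
            _ = C2 * 2^(d+1)/c0 * F^2 := by ring
        have t3 : (C1*M^d)^2 ≤ (C1*2^(d+1)/c0)^2 * F^2 := by
          have b7 : C1 * M^d ≤ C1 * (2^(d+1)/c0 * F) := by nlinarith
          have b8 : (0:ℝ) ≤ C1 * M^d := by positivity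
          have b9 : (C1*M^d)^2 ≤ (C1 * (2^(d+1)/c0 * F))^2 := by nlinarith
          calc (C1*M^d)^2 ≤ (C1 * (2^(d+1)/c0 * F))^2 := b9
            _ = (C1*2^(d+1)/c0)^2 * F^2 := by ring
        calc (m + C2 * M^d) * F + (C1 * M^d)^2
            = m * F + C2 * M^d * F + (C1 * M^d)^2 := by ring
          _ ≤ F^2 + C2 * 2^(d+1)/c0 * F^2 + (C1*2^(d+1)/c0)^2 * F^2 := by linarith
          _ = D2 * F^2 := by rw [hD2def]; ring
          _ ≤ (D1 + D2) * F^2 := by nlinarith [sq_nonneg F]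
    have hfinal : (D1 + D2) * F^2 ≤ 2 * (N:ℝ) * F^2 := by nlinarith [sq_nonneg F]
    linarith
  -- Strong convexity with μ = m
  refine ⟨m, hm, hXcon, ?_⟩
  intro x hx y hy a b ha hb hab
  set v : EuclideanSpace ℝ (Fin n) := y - x with hvdef
  set xc : Fin n → ℝ := fun i => x i with hxcdef
  set vc : Fin n → ℝ := fun i => v i with hvcdef
  set q0 : Polynomial ℝ := lineq xc vc f with hq0def
  set q1 : Polynomial ℝ := lineq xc vc (dirDeriv vc f) with hq1def
  set q2 : Polynomial ℝ := lineq xc vc (dirDeriv vc (dirDeriv vc f)) with hq2def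
  set ip : ℝ := inner ℝ (x - ξ) v with hipdef
  set P : ℝ → ℝ := fun t => ‖x - ξ‖^2 + (2 * ip) * t + ‖v‖^2 * t^2 with hPdef
  set P1 : ℝ → ℝ := fun t => 2 * ip + 2 * ‖v‖^2 * t with hP1def
  set g : ℝ → ℝ := fun t => Real.exp ((N:ℝ) * P t) * q0.eval t with hgdef
  set G1 : ℝ → ℝ := fun t => Real.exp ((N:ℝ) * P t) * (((N:ℝ) * P1 t) * q0.eval t + q1.eval t)
    with hG1def
  set G2 : ℝ → ℝ := fun t => Real.exp ((N:ℝ) * P t) *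
    (((N:ℝ) * P1 t) * (((N:ℝ) * P1 t) * q0.eval t + q1.eval t) +
      ((N:ℝ) * (2 * ‖v‖^2) * q0.eval t + ((N:ℝ) * P1 t) * q1.eval t + q2.eval t)) with hG2def
  have hline : ∀ t : ℝ, (fun i => (x + t • v) i) = fun i => xc i + t * vc i := by
    intro t
    funext i
    simp [hxcdef, hvcdef]
  have hPval : ∀ t : ℝ, P t = ‖x + t • v - ξ‖^2 := by
    intro t
    have hrw : x + t • v - ξ = (x - ξ) + t • v := by abel
    rw [hrw, norm_add_sq_real, real_inner_smul_right, norm_smul]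
    simp only [hPdef, Real.norm_eq_abs]
    rw [mul_pow, sq_abs]
    rw [hipdef]
    ring
  have hq0val : ∀ t : ℝ, q0.eval t = MvPolynomial.eval (fun i => (x + t • v) i) f := by
    intro t
    rw [hq0def, lineq_eval, hline t]
  have hq0deriv : Polynomial.derivative q0 = q1 := by
    rw [hq0def, hq1def, lineq_derivative]
  have hq1deriv : Polynomial.derivative q1 = q2 := by
    rw [hq1def, hq2def, lineq_derivative]
  have hPd : ∀ t : ℝ, HasDerivAt P (P1 t) t := by
    intro t
    have ha' : HasDerivAt (fun s : ℝ => ‖x - ξ‖^2 + (2 * ip) * s) (2 * ip) t := by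
      exact ((hasDerivAt_const t (‖x - ξ‖^2)).add ((hasDerivAt_id t).const_mul (2 * ip))).congr_deriv (by simp)
    have hb' : HasDerivAt (fun s : ℝ => ‖v‖^2 * s^2) (‖v‖^2 * (2 * t^1)) t :=
      (hasDerivAt_pow 2 t).const_mul (‖v‖^2)
    have := ha'.add hb'
    have heq : P = fun s : ℝ => ‖x - ξ‖^2 + (2*ip)*s + ‖v‖^2 * s^2 := by
      funext s; rw [hPdef]
    rw [heq]
    exact this.congr_deriv (by simp only [hP1def]; ring)
  have hP1d : ∀ t : ℝ, HasDerivAt P1 (2 * ‖v‖^2) t := by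
    intro t
    have : HasDerivAt (fun s : ℝ => 2 * ip + 2 * ‖v‖^2 * s) (2 * ‖v‖^2) t := by
      exact ((hasDerivAt_const t (2*ip)).add ((hasDerivAt_id t).const_mul (2 * ‖v‖^2))).congr_deriv (by simp)
    convert this using 1
  have hexp : ∀ t : ℝ, HasDerivAt (fun s => Real.exp ((N:ℝ) * P s))
      (Real.exp ((N:ℝ) * P t) * ((N:ℝ) * P1 t)) t := by
    intro t
    exact ((hPd t).const_mul (N:ℝ)).exp
  have hgd : ∀ t : ℝ, HasDerivAt g (G1 t) t := by
    intro t
    have hmul := (hexp t).mul (q0.hasDerivAt t)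
    rw [hq0deriv] at hmul
    have heq : g = fun s => Real.exp ((N:ℝ) * P s) * q0.eval s := by funext s; rw [hgdef]
    rw [heq]
    exact hmul.congr_deriv (by simp only [hG1def]; ring)
  have hG1d : ∀ t : ℝ, HasDerivAt G1 (G2 t) t := by
    intro t
    have hin : HasDerivAt (fun s => ((N:ℝ) * P1 s) * q0.eval s + q1.eval s)
        (((N:ℝ) * (2 * ‖v‖^2)) * q0.eval t + ((N:ℝ) * P1 t) * q1.eval t + q2.eval t) t := by
      have hnp1 : HasDerivAt (fun s => (N:ℝ) * P1 s) ((N:ℝ) * (2 * ‖v‖^2)) t :=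
        (hP1d t).const_mul (N:ℝ)
      have hmm := hnp1.mul (q0.hasDerivAt t)
      rw [hq0deriv] at hmm
      have := hmm.add (q1.hasDerivAt t)
      rw [hq1deriv] at this
      exact this.congr_deriv (by ring)
    have hmul := (hexp t).mul hin
    have heq : G1 = fun s => Real.exp ((N:ℝ) * P s) * (((N:ℝ) * P1 s) * q0.eval s + q1.eval s) := by
      funext s; rw [hG1def]
    rw [heq]
    exact hmul.congr_deriv (by simp only [hG2def]; ring)
  -- the second derivative bound
  have hK : ∀ t ∈ Set.Icc (0:ℝ) 1, m * ‖x - y‖^2 ≤ G2 t := by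
    intro t ht
    set z : EuclideanSpace ℝ (Fin n) := x + t • v with hzdef
    have hzX : z ∈ X := by
      have hmem : (1 - t) • x + t • y ∈ X := hXcon hx hy (by linarith [ht.2]) ht.1 (by ring)
      have hzeq : z = (1-t) • x + t • y := by
        rw [hzdef, hvdef]
        module
      rw [hzeq]
      exact hmem
    have hFm : m ≤ MvPolynomial.eval (fun i => z i) f := hmf z hzX
    set F : ℝ := MvPolynomial.eval (fun i => z i) f with hFdef
    have hF0 : 0 < F := lt_of_lt_of_le hm hFm
    have hFq0 : q0.eval t = F := by
      rw [hq0val t, hFdef, hzdef]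
    set M : ℝ := 1 + ‖z‖ with hMdef2
    have hM1 : (1:ℝ) ≤ M := by
      have := norm_nonneg z
      rw [hMdef2]; linarith
    have hzb : ∀ i, |z i| ≤ M := fun i => (comp_le_norm z i).trans (by rw [hMdef2]; linarith)
    have hvb : ∀ i, |vc i| ≤ ‖v‖ := fun i => comp_le_norm v i
    have hzc : (fun i => xc i + t * vc i) = fun i => z i := by
      rw [← hline t, hzdef]
    -- q1 value and bound
    have hq1val : q1.eval t = ∑ i, vc i * MvPolynomial.eval (fun j => z j) (pderiv i f) := by
      rw [hq1def, lineq_eval, hzc]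
      rw [dirDeriv, map_sum]
      exact Finset.sum_congr rfl fun i _ => by rw [map_mul, eval_C]
    have hq1b : |q1.eval t| ≤ ‖v‖ * (C1 * M ^ d) := by
      rw [hq1val]
      refine (Finset.abs_sum_le_sum_abs _ _).trans ?_
      have hterm : ∀ i ∈ Finset.univ, |vc i * MvPolynomial.eval (fun j => z j) (pderiv i f)|
          ≤ ‖v‖ * (Cp i * M^d) := by
        intro i _
        rw [abs_mul]
        exact mul_le_mul (hvb i) (hCpb i (fun j => z j) M hM1 hzb) (abs_nonneg _) (norm_nonneg _)
      refine (Finset.sum_le_sum hterm).trans ?_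
      rw [← Finset.mul_sum, ← Finset.sum_mul, hC1def]
    -- q2 value and bound
    have hdd2 : dirDeriv vc (dirDeriv vc f)
        = ∑ i, ∑ j, MvPolynomial.C (vc i) * (MvPolynomial.C (vc j) * pderiv i (pderiv j f)) := by
      rw [dirDeriv]
      refine Finset.sum_congr rfl fun i _ => ?_
      rw [dirDeriv, map_sum, Finset.mul_sum]
      refine Finset.sum_congr rfl fun j _ => ?_
      rw [pderiv_C_mul]
    have hq2val : q2.eval t
        = ∑ i, ∑ j, vc i * (vc j * MvPolynomial.eval (fun l => z l) (pderiv i (pderiv j f))) := by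
      rw [hq2def, lineq_eval, hzc, hdd2, map_sum]
      refine Finset.sum_congr rfl fun i _ => ?_
      rw [map_sum]
      refine Finset.sum_congr rfl fun j _ => ?_
      rw [map_mul, map_mul, eval_C, eval_C]
    have hq2b : |q2.eval t| ≤ ‖v‖^2 * (C2 * M ^ d) := by
      rw [hq2val]
      refine (Finset.abs_sum_le_sum_abs _ _).trans ?_
      have hterm : ∀ i ∈ Finset.univ,
          |∑ j, vc i * (vc j * MvPolynomial.eval (fun l => z l) (pderiv i (pderiv j f)))|
          ≤ ∑ j, ‖v‖ * (‖v‖ * (Cpp i j * M^d)) := by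
        intro i _
        refine (Finset.abs_sum_le_sum_abs _ _).trans ?_
        refine Finset.sum_le_sum fun j _ => ?_
        rw [abs_mul, abs_mul]
        refine mul_le_mul (hvb i) ?_ (by positivity) (norm_nonneg _)
        exact mul_le_mul (hvb j) (hCppb i j (fun l => z l) M hM1 hzb) (abs_nonneg _)
          (norm_nonneg _)
      refine (Finset.sum_le_sum hterm).trans ?_
      have hsum2 : ∑ i, ∑ j, ‖v‖ * (‖v‖ * (Cpp i j * M^d))
          = ‖v‖^2 * ((∑ i, ∑ j, Cpp i j) * M^d) := by
        simp_rw [← Finset.mul_sum, ← Finset.sum_mul]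
        ring
      rw [hsum2, hC2def]
    -- key at z
    have hkey := key z hzX
    rw [← hFdef, ← hMdef2] at hkey
    -- exp(N P t) ≥ 1
    have hE1 : (1:ℝ) ≤ Real.exp ((N:ℝ) * P t) := by
      apply Real.one_le_exp
      have hPt0 : (0:ℝ) ≤ P t := by
        rw [hPval t]
        positivity
      exact mul_nonneg (Nat.cast_nonneg N) hPt0
    -- lower bound on the bracket
    set S : ℝ := ((N:ℝ) * P1 t) * (((N:ℝ) * P1 t) * q0.eval t + q1.eval t) +
      ((N:ℝ) * (2 * ‖v‖^2) * q0.eval t + ((N:ℝ) * P1 t) * q1.eval t + q2.eval t) with hSdef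
    have hSlb : m * ‖v‖^2 ≤ S := by
      have hSF : S * F = (((N:ℝ) * P1 t) * F + q1.eval t)^2 - (q1.eval t)^2
          + 2*(N:ℝ)*‖v‖^2*F^2 + (q2.eval t)*F := by
        rw [hSdef, hFq0]
        ring
      have e2 : (q1.eval t)^2 ≤ ‖v‖^2 * (C1 * M^d)^2 := by
        have h12 := hq1b
        have h13 : (0:ℝ) ≤ |q1.eval t| := abs_nonneg _
        nlinarith [sq_abs (q1.eval t)]
      have e3 : -(‖v‖^2 * (C2 * M^d)) * F ≤ q2.eval t * F := by
        have h14 : -(‖v‖^2 * (C2*M^d)) ≤ q2.eval t := neg_le_of_abs_le hq2b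
        exact mul_le_mul_of_nonneg_right h14 hF0.le
      have e4 : ‖v‖^2 * ((m + C2 * M^d) * F + (C1*M^d)^2) ≤ ‖v‖^2 * (2*(N:ℝ)*F^2) := by
        apply mul_le_mul_of_nonneg_left _ (sq_nonneg ‖v‖)
        calc (m + C2 * M^d) * F + (C1*M^d)^2 ≤ 2 * (N:ℝ) * F^2 := hkey
          _ = 2*(N:ℝ)*F^2 := by ring
      have e5 : m * ‖v‖^2 * F ≤ S * F := by
        nlinarith [sq_nonneg (((N:ℝ) * P1 t) * F + q1.eval t)]
      exact le_of_mul_le_mul_right (by linarith) hF0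
    have hG2eq : G2 t = Real.exp ((N:ℝ) * P t) * S := by rw [hG2def, hSdef]
    rw [hG2eq]
    have hvnorm : ‖x - y‖ = ‖v‖ := by rw [hvdef, norm_sub_rev]
    rw [hvnorm]
    calc m * ‖v‖^2 ≤ S := hSlb
      _ = 1 * S := (one_mul S).symm
      _ ≤ Real.exp ((N:ℝ) * P t) * S := by
          apply mul_le_mul_of_nonneg_right hE1
          have : (0:ℝ) ≤ m * ‖v‖^2 := by positivity
          linarith
  -- apply the 1-D lemma
  have hfinal := oneD hgd hG1d hK ha hb hab
  have hxy : a • x + b • y = x + b • v := by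
    have haa : a = 1 - b := by linarith
    rw [haa, hvdef]
    module
  have hgt : ∀ t : ℝ, g t = Real.exp ((N:ℝ) * ‖x + t • v - ξ‖^2)
      * MvPolynomial.eval (fun i => (x + t • v) i) f := by
    intro t
    rw [hgdef]
    show Real.exp ((N:ℝ) * P t) * q0.eval t = _
    rw [hPval t, hq0val t]
  have h0v : x + (0:ℝ) • v = x := by
    rw [zero_smul, add_zero]
  have h1v : x + (1:ℝ) • v = y := by
    rw [one_smul, hvdef]
    abel
  have hg0 : g 0 = Real.exp ((N:ℝ) * ‖x - ξ‖^2) * MvPolynomial.eval (fun i => x i) f := by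
    rw [hgt 0, h0v]
  have hg1 : g 1 = Real.exp ((N:ℝ) * ‖y - ξ‖^2) * MvPolynomial.eval (fun i => y i) f := by
    rw [hgt 1, h1v]
  have hgb : g b = Real.exp ((N:ℝ) * ‖a • x + b • y - ξ‖^2)
      * MvPolynomial.eval (fun i => (a • x + b • y) i) f := by
    rw [hgt b, ← hxy]
  rw [hg0, hg1, hgb] at hfinal
  simp only [smul_eq_mul]
  refine hfinal.trans (le_of_eq ?_)
  ring
end

section
/- Let f(x,y,z) = (y²+z²+1)[(x-1)²(x+1)² + (yz+1)² + y²]. Then f(x,y,z) ≥ 1/2 for all (x,y,z) ∈ ℝ³, yet for every N ∈ ℝ the function φ_N(x,y,z) = e^{N(x²+y²+z²)} f(x,y,z) is not convex on ℝ³. -/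
open Real Set

/-- `f(x,y,z) = (y²+z²+1)[(x-1)²(x+1)² + (yz+1)² + y²]`. -/
noncomputable def f9 (p : ℝ × ℝ × ℝ) : ℝ :=
  (p.2.1 ^ 2 + p.2.2 ^ 2 + 1) *
    ((p.1 - 1) ^ 2 * (p.1 + 1) ^ 2 + (p.2.1 * p.2.2 + 1) ^ 2 + p.2.1 ^ 2)

/-- `f ≥ 1/2` on `ℝ³`, yet for every `N ∈ ℝ` the function
`φ_N(x,y,z) = e^{N(x²+y²+z²)} f(x,y,z)` is not convex on `ℝ³`. -/
theorem stmt9 :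
    (∀ p : ℝ × ℝ × ℝ, (1 : ℝ) / 2 ≤ f9 p) ∧
    ∀ N : ℝ, ¬ ConvexOn ℝ Set.univ
      (fun p : ℝ × ℝ × ℝ =>
        Real.exp (N * (p.1 ^ 2 + p.2.1 ^ 2 + p.2.2 ^ 2)) * f9 p) := by
  constructor
  · rintro ⟨x, y, z⟩
    simp only [f9]
    nlinarith [sq_nonneg (y*z^2 + z + y), sq_nonneg ((x-1)*(x+1)), sq_nonneg y,
      sq_nonneg z, sq_nonneg (y*z+1), sq_nonneg (y*z),
      mul_nonneg (mul_nonneg (sq_nonneg (x-1)) (sq_nonneg (x+1))) (sq_nonneg y),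
      mul_nonneg (mul_nonneg (sq_nonneg (x-1)) (sq_nonneg (x+1))) (sq_nonneg z)]
  · intro N h
    set ξ : ℝ := Real.exp (N / 2) with hξ
    have hξpos : 0 < ξ := Real.exp_pos _
    have hξne : ξ ≠ 0 := ne_of_gt hξpos
    have hsq : ξ ^ 2 = Real.exp N := by
      rw [hξ, ← Real.exp_nat_mul]
      norm_num
      ring
    set p : ℝ × ℝ × ℝ := (1, ξ⁻¹, -ξ)
    set q : ℝ × ℝ × ℝ := (-1, ξ⁻¹, -ξ)
    have key := h.2 (Set.mem_univ p) (Set.mem_univ q)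
      (by norm_num : (0:ℝ) ≤ 1/2) (by norm_num : (0:ℝ) ≤ 1/2) (by norm_num)
    have hmid : (1/2 : ℝ) • p + (1/2 : ℝ) • q = (0, ξ⁻¹, -ξ) := by
      simp only [p, q, Prod.smul_mk, Prod.mk_add_mk, smul_eq_mul]
      norm_num
      constructor <;> ring
    rw [hmid] at key
    simp only [f9, p, q] at key
    have hinv : ξ⁻¹ * -ξ + 1 = 0 := by field_simp; ring
    rw [hinv] at key
    norm_num at key
    simp only [← inv_pow] at key
    -- key : exp (N * ((ξ⁻¹)^2 + ξ^2)) * ((ξ⁻¹)^2 + ξ^2 + 1) * (1 + (ξ⁻¹)^2) ≤ ...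
    have hE : (0:ℝ) < Real.exp (N * (ξ⁻¹ ^ 2 + ξ ^ 2)) := Real.exp_pos _
    have hexp1 : Real.exp (N * (1 + ξ⁻¹ ^ 2 + ξ ^ 2))
        = ξ ^ 2 * Real.exp (N * (ξ⁻¹ ^ 2 + ξ ^ 2)) := by
      rw [hsq, ← Real.exp_add]; ring_nf
    rw [hexp1] at key
    have hS : (0:ℝ) < ξ⁻¹ ^ 2 + ξ ^ 2 + 1 := by positivity
    have hinv2 : ξ⁻¹ ^ 2 * ξ ^ 2 = 1 := by field_simp
    have hipos : (0:ℝ) < ξ⁻¹ ^ 2 := by positivity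
    nlinarith [key, hinv2, mul_pos (mul_pos hE hS) hipos, hE, hS]
end

section
/- With f as in the previous example, for ξ > 0 one has φ_N(0, ξ⁻¹, -ξ) = e^{N(ξ⁻²+ξ²)}(ξ⁻²+ξ²+1)(1+ξ⁻²) and φ_N(±1, ξ⁻¹, -ξ) = e^{N(ξ⁻²+ξ²)}(ξ⁻²+ξ²+1) e^N ξ⁻², so that for ξ sufficiently large, φ_N(1, ξ⁻¹, -ξ) = φ_N(-1, ξ⁻¹, -ξ) < φ_N(0, ξ⁻¹, -ξ). -/
open Real Set

/-- `φ_N(x,y,z) = e^{N(x²+y²+z²)} f(x,y,z)`. -/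
noncomputable def phi9 (N : ℝ) (p : ℝ × ℝ × ℝ) : ℝ :=
  Real.exp (N * (p.1 ^ 2 + p.2.1 ^ 2 + p.2.2 ^ 2)) * f9 p

lemma phi9_eval (N ξ : ℝ) (hξ : 0 < ξ) :
    phi9 N (0, ξ⁻¹, -ξ) =
        Real.exp (N * (ξ⁻¹ ^ 2 + ξ ^ 2)) * (ξ⁻¹ ^ 2 + ξ ^ 2 + 1) * (1 + ξ⁻¹ ^ 2) ∧
      phi9 N (1, ξ⁻¹, -ξ) =
        Real.exp (N * (ξ⁻¹ ^ 2 + ξ ^ 2)) * (ξ⁻¹ ^ 2 + ξ ^ 2 + 1) * Real.exp N * ξ⁻¹ ^ 2 ∧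
      phi9 N (-1, ξ⁻¹, -ξ) =
        Real.exp (N * (ξ⁻¹ ^ 2 + ξ ^ 2)) * (ξ⁻¹ ^ 2 + ξ ^ 2 + 1) * Real.exp N * ξ⁻¹ ^ 2 := by
  have h1 : ξ⁻¹ * -ξ + 1 = 0 := by field_simp; norm_num
  have h2 : N * ((1:ℝ) ^ 2 + ξ⁻¹ ^ 2 + (-ξ) ^ 2) = N * (ξ⁻¹ ^ 2 + ξ ^ 2) + N := by ring
  have h3 : N * ((-1:ℝ) ^ 2 + ξ⁻¹ ^ 2 + (-ξ) ^ 2) = N * (ξ⁻¹ ^ 2 + ξ ^ 2) + N := by ring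
  refine ⟨?_, ?_, ?_⟩ <;> simp only [phi9, f9, h1, h2, h3, Real.exp_add] <;> ring

/-- For `ξ > 0`, `φ_N(0,ξ⁻¹,-ξ) = e^{N(ξ⁻²+ξ²)}(ξ⁻²+ξ²+1)(1+ξ⁻²)` and
`φ_N(±1,ξ⁻¹,-ξ) = e^{N(ξ⁻²+ξ²)}(ξ⁻²+ξ²+1) e^N ξ⁻²`; for `ξ` sufficiently large,
`φ_N(1,ξ⁻¹,-ξ) = φ_N(-1,ξ⁻¹,-ξ) < φ_N(0,ξ⁻¹,-ξ)`. -/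
theorem stmt10 (N : ℝ) :
    (∀ ξ : ℝ, 0 < ξ →
      phi9 N (0, ξ⁻¹, -ξ) =
        Real.exp (N * (ξ⁻¹ ^ 2 + ξ ^ 2)) * (ξ⁻¹ ^ 2 + ξ ^ 2 + 1) * (1 + ξ⁻¹ ^ 2) ∧
      phi9 N (1, ξ⁻¹, -ξ) =
        Real.exp (N * (ξ⁻¹ ^ 2 + ξ ^ 2)) * (ξ⁻¹ ^ 2 + ξ ^ 2 + 1) * Real.exp N * ξ⁻¹ ^ 2 ∧
      phi9 N (-1, ξ⁻¹, -ξ) =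
        Real.exp (N * (ξ⁻¹ ^ 2 + ξ ^ 2)) * (ξ⁻¹ ^ 2 + ξ ^ 2 + 1) * Real.exp N * ξ⁻¹ ^ 2) ∧
    ∃ Ξ : ℝ, ∀ ξ : ℝ, Ξ ≤ ξ →
      phi9 N (1, ξ⁻¹, -ξ) = phi9 N (-1, ξ⁻¹, -ξ) ∧
      phi9 N (1, ξ⁻¹, -ξ) < phi9 N (0, ξ⁻¹, -ξ) := by
  refine ⟨fun ξ hξ => phi9_eval N ξ hξ, Real.exp N + 1, fun ξ hξ => ?_⟩
  have hE : 0 < Real.exp N := Real.exp_pos N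
  have hξ0 : 0 < ξ := lt_of_lt_of_le (by linarith) hξ
  obtain ⟨e0, e1, e2⟩ := phi9_eval N ξ hξ0
  refine ⟨e1.trans e2.symm, ?_⟩
  rw [e0, e1]
  have hpos : 0 < Real.exp (N * (ξ⁻¹ ^ 2 + ξ ^ 2)) * (ξ⁻¹ ^ 2 + ξ ^ 2 + 1) := by
    positivity
  rw [mul_assoc _ (Real.exp N) _]
  apply mul_lt_mul_of_pos_left _ hpos
  -- exp N * ξ⁻¹ ^ 2 < 1 + ξ⁻¹ ^ 2
  have hinv : ξ⁻¹ ^ 2 = 1 / ξ ^ 2 := by field_simp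
  have hξ2 : (Real.exp N + 1) ^ 2 ≤ ξ ^ 2 := by nlinarith
  have key : Real.exp N * ξ⁻¹ ^ 2 < 1 := by
    rw [hinv]
    rw [mul_one_div, div_lt_one (by positivity)]
    nlinarith
  nlinarith [sq_nonneg ξ⁻¹]
end

section
/- Let 2 ≤ k, and f_k(x,y,z) = (y²+z²+1)^k[(x-1)²(x+1)² + (yz+1)² + y²]. Then f_k(x,y,z) → ∞ as |(x,y,z)| → ∞, f_k > 0 on ℝ³, and for every N ∈ ℝ the function e^{N(x²+y²+z²)} f_k(x,y,z) is not convex on ℝ³. -/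
open Real Set Filter

/-- `f_k(x,y,z) = (y²+z²+1)^k[(x-1)²(x+1)² + (yz+1)² + y²]`. -/
noncomputable def fk (k : ℕ) (p : ℝ × ℝ × ℝ) : ℝ :=
  (p.2.1 ^ 2 + p.2.2 ^ 2 + 1) ^ k *
    ((p.1 - 1) ^ 2 * (p.1 + 1) ^ 2 + (p.2.1 * p.2.2 + 1) ^ 2 + p.2.1 ^ 2)

lemma fk_pos' (k : ℕ) (p : ℝ × ℝ × ℝ) : 0 < fk k p := by
  obtain ⟨x, y, z⟩ := p
  unfold fk
  simp only
  have h1 : (0:ℝ) < (y ^ 2 + z ^ 2 + 1) ^ k := by positivity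
  have h2 : (0:ℝ) < (x - 1) ^ 2 * (x + 1) ^ 2 + (y * z + 1) ^ 2 + y ^ 2 := by
    rcases eq_or_ne y 0 with hy | hy
    · subst hy
      nlinarith [mul_nonneg (sq_nonneg (x - 1)) (sq_nonneg (x + 1))]
    · have hy2 : 0 < y ^ 2 := by positivity
      nlinarith [mul_nonneg (sq_nonneg (x - 1)) (sq_nonneg (x + 1)), sq_nonneg (y * z + 1)]
  exact mul_pos h1 h2

set_option maxHeartbeats 1000000 in
lemma fk_lower (k : ℕ) (hk : 2 ≤ k) (R : ℝ) (hR : 2 ≤ R) (p : ℝ × ℝ × ℝ)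
    (hp : R ≤ ‖p‖) : R ^ 2 / 4 ≤ fk k p := by
  obtain ⟨x, y, z⟩ := p
  have hnorm : ‖((x, y, z) : ℝ × ℝ × ℝ)‖ = max |x| (max |y| |z|) := by
    simp [Prod.norm_def, Real.norm_eq_abs]
  rw [hnorm] at hp
  unfold fk
  simp only
  have hA1 : (1:ℝ) ≤ (y ^ 2 + z ^ 2 + 1) ^ k := one_le_pow₀ (by nlinarith [sq_nonneg y, sq_nonneg z])
  have hg0 : (0:ℝ) ≤ (x - 1) ^ 2 * (x + 1) ^ 2 + (y * z + 1) ^ 2 + y ^ 2 := by positivity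
  have hAbig : ((y ^ 2 + z ^ 2 + 1) ^ 2 : ℝ) ≤ (y ^ 2 + z ^ 2 + 1) ^ k :=
    pow_le_pow_right₀ (by nlinarith [sq_nonneg y, sq_nonneg z]) hk
  rcases le_max_iff.1 hp with hx | hyz
  · -- R ≤ |x|
    have hx2 : R ^ 2 ≤ x ^ 2 := by
      have := pow_le_pow_left₀ (by linarith) hx 2
      rwa [sq_abs] at this
    have h4 : (4:ℝ) ≤ R ^ 2 := by nlinarith
    have h5 : (R ^ 2 - 1) ^ 2 ≤ (x ^ 2 - 1) ^ 2 := by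
      nlinarith [mul_nonneg (sub_nonneg.2 hx2) (show (0:ℝ) ≤ x ^ 2 + R ^ 2 - 2 by nlinarith)]
    have h6 : R ^ 2 / 4 ≤ (R ^ 2 - 1) ^ 2 := by nlinarith
    have hgR : R ^ 2 / 4 ≤ (x - 1) ^ 2 * (x + 1) ^ 2 + (y * z + 1) ^ 2 + y ^ 2 := by
      nlinarith [h5, h6, sq_nonneg (y * z + 1), sq_nonneg y]
    calc R ^ 2 / 4 ≤ (x - 1) ^ 2 * (x + 1) ^ 2 + (y * z + 1) ^ 2 + y ^ 2 := hgR
      _ ≤ (y ^ 2 + z ^ 2 + 1) ^ k * ((x - 1) ^ 2 * (x + 1) ^ 2 + (y * z + 1) ^ 2 + y ^ 2) :=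
        le_mul_of_one_le_left hg0 hA1
  · -- R ≤ max |y| |z|
    have hsum : R ^ 2 ≤ y ^ 2 + z ^ 2 := by
      rcases le_max_iff.1 hyz with hy | hz
      · have := pow_le_pow_left₀ (by linarith) hy 2
        rw [sq_abs] at this; nlinarith [sq_nonneg z]
      · have := pow_le_pow_left₀ (by linarith) hz 2
        rw [sq_abs] at this; nlinarith [sq_nonneg y]
    rcases le_or_gt (1/4 : ℝ) ((y * z + 1) ^ 2) with h1 | h1
    · -- (yz+1)² ≥ 1/4
      have hb2 : R ^ 2 ≤ (y ^ 2 + z ^ 2 + 1) ^ 2 := by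
        nlinarith [hsum, sq_nonneg (y ^ 2 + z ^ 2)]
      have hAR : R ^ 2 ≤ (y ^ 2 + z ^ 2 + 1) ^ k := le_trans hb2 hAbig
      have hg14 : (1/4 : ℝ) ≤ (x - 1) ^ 2 * (x + 1) ^ 2 + (y * z + 1) ^ 2 + y ^ 2 := by
        nlinarith [mul_nonneg (sq_nonneg (x - 1)) (sq_nonneg (x + 1)), sq_nonneg y]
      have := mul_le_mul hAR hg14 (by norm_num) (by positivity)
      linarith
    · -- (yz+1)² < 1/4, so yz ≤ -1/2 and y²z² ≥ 1/4
      have hw : y * z ≤ -(1/2) := by nlinarith [sq_nonneg (y * z + 1/2)]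
      have hyz2 : (1/4 : ℝ) ≤ y ^ 2 * z ^ 2 := by nlinarith [sq_nonneg (y * z + 1/2)]
      have hgy : y ^ 2 ≤ (x - 1) ^ 2 * (x + 1) ^ 2 + (y * z + 1) ^ 2 + y ^ 2 := by
        nlinarith [mul_nonneg (sq_nonneg (x - 1)) (sq_nonneg (x + 1)), sq_nonneg (y * z + 1)]
      rcases le_max_iff.1 hyz with hy | hz
      · -- |y| large : g ≥ y² ≥ R²
        have hy2 : R ^ 2 ≤ y ^ 2 := by
          have := pow_le_pow_left₀ (by linarith) hy 2
          rwa [sq_abs] at this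
        have h2 : y ^ 2 ≤ (y ^ 2 + z ^ 2 + 1) ^ k *
            ((x - 1) ^ 2 * (x + 1) ^ 2 + (y * z + 1) ^ 2 + y ^ 2) :=
          le_trans hgy (le_mul_of_one_le_left hg0 hA1)
        linarith [sq_nonneg R]
      · -- |z| large : A ≥ z⁴, g ≥ y², z⁴y² ≥ z²/4 ≥ R²/4
        have hz2 : R ^ 2 ≤ z ^ 2 := by
          have := pow_le_pow_left₀ (by linarith) hz 2
          rwa [sq_abs] at this
        have hbase : z ^ 2 ≤ y ^ 2 + z ^ 2 + 1 := by nlinarith [sq_nonneg y]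
        have hAz : (z ^ 2) ^ 2 ≤ (y ^ 2 + z ^ 2 + 1) ^ k :=
          le_trans (pow_le_pow_left₀ (by positivity) hbase 2) hAbig
        have hmm : (z ^ 2) ^ 2 * y ^ 2 ≤ (y ^ 2 + z ^ 2 + 1) ^ k *
            ((x - 1) ^ 2 * (x + 1) ^ 2 + (y * z + 1) ^ 2 + y ^ 2) :=
          mul_le_mul hAz hgy (sq_nonneg y) (by positivity)
        nlinarith [hmm, mul_le_mul_of_nonneg_left hyz2 (sq_nonneg z), hz2, hR]

/-- For `k ≥ 2`, `f_k → ∞` at infinity, `f_k > 0` on `ℝ³`, yet for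
every `N ∈ ℝ` the function `e^{N(x²+y²+z²)} f_k(x,y,z)` is not convex on `ℝ³`. -/
theorem stmt11 (k : ℕ) (hk : 2 ≤ k) :
    Filter.Tendsto (fk k) (Filter.cocompact (ℝ × ℝ × ℝ)) Filter.atTop ∧
    (∀ p : ℝ × ℝ × ℝ, 0 < fk k p) ∧
    ∀ N : ℝ, ¬ ConvexOn ℝ Set.univ
      (fun p : ℝ × ℝ × ℝ =>
        Real.exp (N * (p.1 ^ 2 + p.2.1 ^ 2 + p.2.2 ^ 2)) * fk k p) := by
  refine ⟨?_, fk_pos' k, ?_⟩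
  · -- properness
    rw [← Metric.cobounded_eq_cocompact, tendsto_atTop]
    intro C
    rw [Filter.hasBasis_cobounded_norm.eventually_iff]
    refine ⟨max 2 (2 * Real.sqrt (max C 0) + 2), trivial, fun p hp => ?_⟩
    have h2R : (2:ℝ) ≤ max 2 (2 * Real.sqrt (max C 0) + 2) := le_max_left _ _
    have hlow := fk_lower k hk _ h2R p hp
    refine le_trans ?_ hlow
    have hs : Real.sqrt (max C 0) ^ 2 = max C 0 := Real.sq_sqrt (le_max_right _ _)
    have hs0 : 0 ≤ Real.sqrt (max C 0) := Real.sqrt_nonneg _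
    have hRg : 2 * Real.sqrt (max C 0) + 2 ≤ max 2 (2 * Real.sqrt (max C 0) + 2) :=
      le_max_right _ _
    nlinarith [le_max_left C 0, hs, hs0, hRg, h2R]
  · -- non-convexity
    intro N hconv
    set t : ℝ := Real.exp (-(N/2)) / 2 with ht
    have ht0 : 0 < t := by positivity
    have htne : t ≠ 0 := ne_of_gt ht0
    have key := hconv.2 (mem_univ ((-1 : ℝ), t, -t⁻¹)) (mem_univ ((1 : ℝ), t, -t⁻¹))
      (by norm_num : (0:ℝ) ≤ 1/2) (by norm_num : (0:ℝ) ≤ 1/2) (by norm_num : (1/2:ℝ) + 1/2 = 1)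
    have hmid : ((1/2 : ℝ) • ((-1 : ℝ), t, -t⁻¹) + (1/2 : ℝ) • ((1 : ℝ), t, -t⁻¹) : ℝ × ℝ × ℝ)
        = ((0 : ℝ), t, -t⁻¹) := by
      simp only [Prod.smul_mk, Prod.mk_add_mk, smul_eq_mul, Prod.mk.injEq]
      refine ⟨by ring, by ring, by ring⟩
    rw [hmid] at key
    simp only at key
    -- compute fk values
    have htz : t * (-t⁻¹) + 1 = 0 := by field_simp; ring
    set A : ℝ := (t ^ 2 + (-t⁻¹) ^ 2 + 1) ^ k with hA
    have hApos : 0 < A := by positivity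
    have f0 : fk k ((0 : ℝ), t, -t⁻¹) = A * (1 + t ^ 2) := by
      unfold fk; simp only; rw [htz]; ring
    have f1 : fk k ((1 : ℝ), t, -t⁻¹) = A * t ^ 2 := by
      unfold fk; simp only; rw [htz]; ring
    have fm1 : fk k ((-1 : ℝ), t, -t⁻¹) = A * t ^ 2 := by
      unfold fk; simp only; rw [htz]; ring
    rw [f0, f1, fm1] at key
    set s : ℝ := t ^ 2 + (-t⁻¹) ^ 2 with hsdef
    have e0 : N * ((0:ℝ) ^ 2 + t ^ 2 + (-t⁻¹) ^ 2) = N * s := by rw [hsdef]; ring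
    have e1 : N * ((1:ℝ) ^ 2 + t ^ 2 + (-t⁻¹) ^ 2) = N + N * s := by rw [hsdef]; ring
    have em1 : N * ((-1:ℝ) ^ 2 + t ^ 2 + (-t⁻¹) ^ 2) = N + N * s := by rw [hsdef]; ring
    rw [e0, e1, em1, Real.exp_add] at key
    -- divide by exp(N*s) * A
    have hEA : 0 < Real.exp (N * s) * A := mul_pos (Real.exp_pos _) hApos
    simp only [smul_eq_mul] at key
    have key2 : (1 + t ^ 2) * (Real.exp (N * s) * A) ≤
        (Real.exp N * t ^ 2) * (Real.exp (N * s) * A) := by linarith [key]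
    have key3 : 1 + t ^ 2 ≤ Real.exp N * t ^ 2 := le_of_mul_le_mul_right key2 hEA
    -- but exp N * t² = 1/4
    have hEt : Real.exp N * t ^ 2 = 1/4 := by
      rw [ht, div_pow, pow_two, ← Real.exp_add, ← mul_div_assoc, ← Real.exp_add]
      have : N + (-(N/2) + -(N/2)) = 0 := by ring
      rw [this, Real.exp_zero]
      norm_num
    rw [hEt] at key3
    nlinarith [sq_nonneg t]
end

section
/- Let X ⊆ ℝⁿ be a closed convex set and f ∈ ℝ[x₁,…,xₙ] a polynomial with f(x) ≥ m for all x ∈ X, for some m > 0. Then there exists N₀ ∈ ℝ such that for every N ≥ N₀ the function Φ_N(x) = e^{e^{N|x|²}} f(x) is strongly convex on X. -/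
open Real Set MvPolynomial Finset

noncomputable section
namespace Stmt12Aux

variable {n : ℕ}

def wL (x v : Fin n → ℝ) (s : ℝ) : Fin n → ℝ := fun i => x i + s * v i
def QQ (x v : Fin n → ℝ) (s : ℝ) : ℝ := ∑ i, (wL x v s i) ^ 2
def QD (x v : Fin n → ℝ) (s : ℝ) : ℝ := ∑ i, 2 * wL x v s i * v i
def VV (v : Fin n → ℝ) : ℝ := ∑ i, (v i) ^ 2
def A0 (f : MvPolynomial (Fin n) ℝ) (x v : Fin n → ℝ) (s : ℝ) : ℝ :=
  MvPolynomial.eval (wL x v s) f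
def A1 (f : MvPolynomial (Fin n) ℝ) (x v : Fin n → ℝ) (s : ℝ) : ℝ :=
  ∑ i, v i * MvPolynomial.eval (wL x v s) (pderiv i f)
def A2 (f : MvPolynomial (Fin n) ℝ) (x v : Fin n → ℝ) (s : ℝ) : ℝ :=
  ∑ i, v i * ∑ j, v j * MvPolynomial.eval (wL x v s) (pderiv j (pderiv i f))
def uu (x v : Fin n → ℝ) (N : ℝ) (s : ℝ) : ℝ := Real.exp (N * QQ x v s)
def EE (x v : Fin n → ℝ) (N : ℝ) (s : ℝ) : ℝ := Real.exp (uu x v N s)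
def psi (f : MvPolynomial (Fin n) ℝ) (x v : Fin n → ℝ) (N : ℝ) (s : ℝ) : ℝ :=
  EE x v N s * A0 f x v s
def psid (f : MvPolynomial (Fin n) ℝ) (x v : Fin n → ℝ) (N : ℝ) (s : ℝ) : ℝ :=
  EE x v N s * (uu x v N s * (N * QD x v s)) * A0 f x v s + EE x v N s * A1 f x v s
def psidd (f : MvPolynomial (Fin n) ℝ) (x v : Fin n → ℝ) (N : ℝ) (s : ℝ) : ℝ :=
  EE x v N s * ((N * QD x v s * uu x v N s) ^ 2 * A0 f x v s
    + (N * uu x v N s * (2 * VV v) + N ^ 2 * (QD x v s) ^ 2 * uu x v N s) * A0 f x v s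
    + 2 * (N * QD x v s * uu x v N s) * A1 f x v s + A2 f x v s)

variable (f : MvPolynomial (Fin n) ℝ) (x v : Fin n → ℝ) (N t : ℝ)

lemma eval_poly_bound (g : MvPolynomial (Fin n) ℝ) :
    ∃ C : ℝ, 0 ≤ C ∧ ∃ D : ℕ, ∀ w : Fin n → ℝ,
      |MvPolynomial.eval w g| ≤ C * (1 + ∑ i, (w i)^2) ^ D := by
  induction g using MvPolynomial.induction_on with
  | C c => exact ⟨|c|, abs_nonneg c, 0, fun w => by simp⟩
  | add p q hp hq =>
      obtain ⟨C₁, hC₁, D₁, h₁⟩ := hp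
      obtain ⟨C₂, hC₂, D₂, h₂⟩ := hq
      refine ⟨C₁ + C₂, by linarith, max D₁ D₂, fun w => ?_⟩
      have hb : (1:ℝ) ≤ 1 + ∑ i, (w i)^2 := by
        have : (0:ℝ) ≤ ∑ i, (w i)^2 := Finset.sum_nonneg fun i _ => sq_nonneg _
        linarith
      have e₁ : (1 + ∑ i, (w i)^2) ^ D₁ ≤ (1 + ∑ i, (w i)^2) ^ (max D₁ D₂) :=
        pow_le_pow_right₀ hb (le_max_left _ _)
      have e₂ : (1 + ∑ i, (w i)^2) ^ D₂ ≤ (1 + ∑ i, (w i)^2) ^ (max D₁ D₂) :=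
        pow_le_pow_right₀ hb (le_max_right _ _)
      calc |MvPolynomial.eval w (p + q)| ≤ |MvPolynomial.eval w p| + |MvPolynomial.eval w q| := by
            rw [map_add]; exact abs_add_le _ _
        _ ≤ C₁ * (1 + ∑ i, (w i)^2) ^ (max D₁ D₂) + C₂ * (1 + ∑ i, (w i)^2) ^ (max D₁ D₂) := by
            gcongr <;> [exact (h₁ w).trans (by gcongr); exact (h₂ w).trans (by gcongr)]
        _ = (C₁ + C₂) * (1 + ∑ i, (w i)^2) ^ (max D₁ D₂) := by ring
  | mul_X p i hp =>
      obtain ⟨C, hC, D, h⟩ := hp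
      refine ⟨C, hC, D + 1, fun w => ?_⟩
      have hwi : |w i| ≤ 1 + ∑ j, (w j)^2 := by
        have h1 : (w i)^2 ≤ ∑ j, (w j)^2 :=
          Finset.single_le_sum (fun j _ => sq_nonneg (w j)) (Finset.mem_univ i)
        nlinarith [abs_nonneg (w i), sq_abs (w i)]
      have hb : (0:ℝ) ≤ 1 + ∑ i, (w i)^2 := by
        have : (0:ℝ) ≤ ∑ i, (w i)^2 := Finset.sum_nonneg fun i _ => sq_nonneg _
        linarith
      calc |MvPolynomial.eval w (p * X i)| = |MvPolynomial.eval w p| * |w i| := by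
            rw [map_mul, eval_X, abs_mul]
        _ ≤ (C * (1 + ∑ j, (w j)^2) ^ D) * (1 + ∑ j, (w j)^2) :=
            mul_le_mul (h w) hwi (abs_nonneg _) (by positivity)
        _ = C * (1 + ∑ j, (w j)^2) ^ (D + 1) := by ring

lemma pow_le_exp_mul (k : ℕ) (N S : ℝ) (hN : (k:ℝ) ≤ N) (hS : 0 ≤ S) :
    S ^ k ≤ Real.exp (N * S) := by
  rcases Nat.eq_zero_or_pos k with hk | hk
  · subst hk
    simpa using Real.one_le_exp (by positivity : (0:ℝ) ≤ N * S)
  · have hk' : (0:ℝ) < k := by exact_mod_cast hk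
    have h1 : S ≤ N * S / k := by
      rw [le_div_iff₀ hk']
      nlinarith
    have h2 : N * S / k ≤ Real.exp (N * S / k) := by
      linarith [Real.add_one_le_exp (N * S / k)]
    calc S ^ k ≤ (Real.exp (N * S / k)) ^ k := pow_le_pow_left₀ hS (h1.trans h2) k
      _ = Real.exp (k * (N * S / k)) := (Real.exp_nat_mul _ k).symm
      _ = Real.exp (N * S) := by rw [mul_div_cancel₀]; positivity

lemma exists_N0 (m C : ℝ) (hm : 0 < m) (hC : 0 ≤ C) (D : ℕ) :
    ∃ N₀ : ℝ, 1 ≤ N₀ ∧ ∀ N, N₀ ≤ N → ∀ S, 0 ≤ S →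
      1 + C * (1 + S) ^ D ≤ 2 * N * m * Real.exp (N * S) := by
  refine ⟨max (max 1 (D:ℝ)) ((1 + C * 2 ^ D) / m), le_max_of_le_left (le_max_left _ _),
    fun N hN S hS => ?_⟩
  have hN1 : 1 ≤ N := le_trans (le_max_of_le_left (le_max_left _ _)) hN
  have hND : (D:ℝ) ≤ N := le_trans (le_max_of_le_left (le_max_right _ _)) hN
  have hNm : 1 + C * 2 ^ D ≤ N * m := by
    rw [← div_le_iff₀ hm]
    exact le_trans (le_max_right _ _) hN
  have hexp1 : (1:ℝ) ≤ Real.exp (N * S) := Real.one_le_exp (by positivity)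
  have hexp2 : S ^ D ≤ Real.exp (N * S) := pow_le_exp_mul D N S hND hS
  have hpow : (1 + S) ^ D ≤ 2 ^ D * (1 + S ^ D) := by
    rcases le_total S 1 with h | h
    · calc (1 + S) ^ D ≤ 2 ^ D := pow_le_pow_left₀ (by linarith) (by linarith) D
        _ ≤ 2 ^ D * (1 + S ^ D) := by
            nlinarith [pow_nonneg hS D, pow_pos (by norm_num : (0:ℝ) < 2) D]
    · calc (1 + S) ^ D ≤ (2 * S) ^ D := pow_le_pow_left₀ (by linarith) (by linarith) D
        _ = 2 ^ D * S ^ D := mul_pow 2 S D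
        _ ≤ 2 ^ D * (1 + S ^ D) := by nlinarith [pow_pos (by norm_num : (0:ℝ) < 2) D]
  have key : 1 + S ^ D ≤ 2 * Real.exp (N * S) := by linarith
  have h2D : (0:ℝ) < 2 ^ D := pow_pos (by norm_num) D
  calc 1 + C * (1 + S) ^ D ≤ 1 + C * (2 ^ D * (1 + S ^ D)) := by nlinarith
    _ ≤ (1 + C * 2 ^ D) * (1 + S ^ D) := by nlinarith [pow_nonneg hS D]
    _ ≤ (N * m) * (1 + S ^ D) := by nlinarith [pow_nonneg hS D]
    _ ≤ (N * m) * (2 * Real.exp (N * S)) := mul_le_mul_of_nonneg_left key (by nlinarith)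
    _ = 2 * N * m * Real.exp (N * S) := by ring

lemma core_ineq (m u E A0 A1 A2 a N V c : ℝ)
    (hm : 0 < m) (hu : 1 ≤ u) (hE : 1 ≤ E) (hA0 : m ≤ A0)
    (hA1 : A1 ^ 2 ≤ V * c) (hA2 : |A2| ≤ V * c)
    (hc : 0 ≤ c) (hV : 0 ≤ V) (hN : 0 ≤ N)
    (hbig : 1 + (1/m + 1) * c ≤ 2 * N * m * u) :
    V ≤ E * ((N * a * u) ^ 2 * A0 + (N * u * (2 * V) + N ^ 2 * a ^ 2 * u) * A0
      + 2 * (N * a * u) * A1 + A2) := by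
  set t := N * a * u with ht
  have hu0 : (0:ℝ) ≤ u := by linarith
  have hA0' : (0:ℝ) ≤ A0 := le_trans hm.le hA0
  have h1 : -(A1 ^ 2) / m ≤ t ^ 2 * A0 + 2 * t * A1 := by
    rw [div_le_iff₀ hm]
    nlinarith [sq_nonneg (t * m + A1),
      mul_nonneg (mul_nonneg (sq_nonneg t) hm.le) (sub_nonneg.mpr hA0)]
  have h2 : (0:ℝ) ≤ N ^ 2 * a ^ 2 * u * A0 :=
    mul_nonneg (by positivity) hA0'
  have h3 : -(V * c) ≤ A2 := by linarith [(abs_le.mp hA2).1]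
  have h4 : 2 * N * u * V * m ≤ N * u * (2 * V) * A0 := by
    nlinarith [mul_nonneg (mul_nonneg hN hu0) hV]
  have e1 : -(V * c) / m ≤ -(A1 ^ 2) / m := by
    rw [div_le_div_iff_of_pos_right hm]; linarith
  have hbigV' : V + V * c / m + V * c ≤ 2 * N * u * V * m := by
    calc V + V * c / m + V * c = V * (1 + (1/m + 1) * c) := by field_simp; ring
      _ ≤ V * (2 * N * m * u) := mul_le_mul_of_nonneg_left hbig hV
      _ = 2 * N * u * V * m := by ring
  have e1' : -(V * c / m) ≤ -(A1 ^ 2) / m := by rw [neg_div] at e1; exact e1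
  have hbr : V ≤ t ^ 2 * A0 + (N * u * (2 * V) + N ^ 2 * a ^ 2 * u) * A0
      + 2 * t * A1 + A2 := by
    have hd : -(A1 ^ 2) / m = -(A1 ^ 2 / m) := neg_div _ _
    rw [hd] at e1' h1
    linarith
  have hbr0 : (0:ℝ) ≤ t ^ 2 * A0 + (N * u * (2 * V) + N ^ 2 * a ^ 2 * u) * A0
      + 2 * t * A1 + A2 := le_trans hV hbr
  calc V ≤ t ^ 2 * A0 + (N * u * (2 * V) + N ^ 2 * a ^ 2 * u) * A0 + 2 * t * A1 + A2 := hbr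
    _ ≤ E * _ := le_mul_of_one_le_left hbr0 hE

lemma hasDerivAt_eval_line (g : MvPolynomial (Fin n) ℝ) :
    HasDerivAt (fun s : ℝ => MvPolynomial.eval (wL x v s) g)
      (∑ i, v i * MvPolynomial.eval (wL x v t) (pderiv i g)) t := by
  induction g using MvPolynomial.induction_on with
  | C c => simpa using hasDerivAt_const t c
  | add p q hp hq =>
      simp only [map_add, mul_add, Finset.sum_add_distrib]
      exact hp.add hq
  | mul_X p i hp =>
      have hl : HasDerivAt (fun s : ℝ => wL x v s i) (v i) t := by
        simpa [wL] using (hasDerivAt_id t).mul_const (v i)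
      simp only [map_mul, eval_X]
      refine (hp.mul hl).congr_deriv ?_
      have key : ∀ j : Fin n, v j * MvPolynomial.eval (wL x v t) (pderiv j (p * X i))
          = v j * MvPolynomial.eval (wL x v t) (pderiv j p) * (wL x v t i)
            + (if i = j then v j * MvPolynomial.eval (wL x v t) p else 0) := by
        intro j
        rw [pderiv_mul, map_add, map_mul, map_mul, eval_X, pderiv_X, Pi.single_apply]
        split <;> simp <;> ring
      rw [Finset.sum_congr rfl (fun j _ => key j), Finset.sum_add_distrib, Finset.sum_ite_eq]
      simp only [Finset.mem_univ, if_true, ← Finset.sum_mul, Finset.mul_sum]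
      ring

lemma hasDerivAt_line {i : Fin n} : HasDerivAt (fun s : ℝ => wL x v s i) (v i) t := by
  simpa [wL] using (hasDerivAt_id t).mul_const (v i)

lemma hQQ : HasDerivAt (QQ x v) (QD x v t) t := by
  have h := HasDerivAt.fun_sum (fun i (_ : i ∈ Finset.univ) =>
    (hasDerivAt_line x v t (i := i)).pow 2)
  refine h.congr_deriv ?_
  unfold QD
  exact Finset.sum_congr rfl fun i _ => by norm_num

lemma hQD : HasDerivAt (QD x v) (2 * VV v) t := by
  have h := HasDerivAt.fun_sum (fun i (_ : i ∈ Finset.univ) =>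
    (((hasDerivAt_line x v t (i := i)).const_mul 2).mul_const (v i)))
  refine h.congr_deriv ?_
  simp only [VV, Finset.mul_sum]
  exact Finset.sum_congr rfl fun i _ => by ring

lemma hA0 : HasDerivAt (A0 f x v) (A1 f x v t) t := hasDerivAt_eval_line x v t f

lemma hA1 : HasDerivAt (A1 f x v) (A2 f x v t) t :=
  HasDerivAt.fun_sum fun i _ => (hasDerivAt_eval_line x v t (pderiv i f)).const_mul (v i)

lemma huu : HasDerivAt (uu x v N) (uu x v N t * (N * QD x v t)) t :=
  ((hQQ x v t).const_mul N).exp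

lemma hEE : HasDerivAt (EE x v N) (EE x v N t * (uu x v N t * (N * QD x v t))) t :=
  (huu x v N t).exp

lemma hpsi : HasDerivAt (psi f x v N) (psid f x v N t) t :=
  ((hEE x v N t).mul (hA0 f x v t))

lemma hpsid : HasDerivAt (psid f x v N) (psidd f x v N t) t := by
  have hinner : HasDerivAt (fun s => uu x v N s * (N * QD x v s))
      (uu x v N t * (N * QD x v t) * (N * QD x v t) + uu x v N t * (N * (2 * VV v))) t :=
    (huu x v N t).mul ((hQD x v t).const_mul N)
  have h1 : HasDerivAt (fun s => EE x v N s * (uu x v N s * (N * QD x v s)) * A0 f x v s)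
      ((EE x v N t * (uu x v N t * (N * QD x v t)) * (uu x v N t * (N * QD x v t))
        + EE x v N t * (uu x v N t * (N * QD x v t) * (N * QD x v t)
          + uu x v N t * (N * (2 * VV v)))) * A0 f x v t
        + EE x v N t * (uu x v N t * (N * QD x v t)) * A1 f x v t) t :=
    ((hEE x v N t).mul hinner).mul (hA0 f x v t)
  have h2 : HasDerivAt (fun s => EE x v N s * A1 f x v s)
      (EE x v N t * (uu x v N t * (N * QD x v t)) * A1 f x v t
        + EE x v N t * A2 f x v t) t :=
    (hEE x v N t).mul (hA1 f x v t)
  have h := h1.add h2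
  refine h.congr_deriv ?_
  unfold psidd
  ring

lemma convexG (hpos : ∀ s ∈ Ioo (0:ℝ) 1, VV v ≤ psidd f x v N s) :
    ConvexOn ℝ (Icc (0:ℝ) 1) (fun s => psi f x v N s - VV v / 2 * s ^ 2) := by
  set c := VV v / 2 with hc
  have hG : ∀ r : ℝ, HasDerivAt (fun s => psi f x v N s - c * s ^ 2)
      (psid f x v N r - c * (2 * r)) r := by
    intro r
    have h2 : HasDerivAt (fun s : ℝ => c * s ^ 2) (c * (2 * r)) r := by
      simpa using (hasDerivAt_pow 2 r).const_mul c
    exact (hpsi f x v N r).sub h2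
  have hGd : ∀ r : ℝ, HasDerivAt (fun s => psid f x v N s - c * (2 * s))
      (psidd f x v N r - c * 2) r := by
    intro r
    have h2 : HasDerivAt (fun s : ℝ => c * (2 * s)) (c * 2) r := by
      simpa [mul_assoc] using (hasDerivAt_id r).const_mul (c * 2)
    exact (hpsid f x v N r).sub h2
  have hdG : deriv (fun s => psi f x v N s - c * s ^ 2)
      = fun r => psid f x v N r - c * (2 * r) := funext fun r => (hG r).deriv
  apply convexOn_of_deriv2_nonneg (convex_Icc 0 1)
  · exact (Differentiable.continuous fun r => (hG r).differentiableAt).continuousOn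
  · exact fun r _ => ((hG r).differentiableAt).differentiableWithinAt
  · rw [hdG]
    exact fun r _ => ((hGd r).differentiableAt).differentiableWithinAt
  · intro r hr
    have h2 : deriv^[2] (fun s => psi f x v N s - c * s ^ 2) r = psidd f x v N r - c * 2 := by
      simp only [Function.iterate_succ, Function.iterate_zero, Function.comp, id]
      rw [hdG]
      exact (hGd r).deriv
    rw [h2]
    have := hpos r (by simpa [interior_Icc] using hr)
    rw [hc]
    linarith

end Stmt12Aux
end

open Stmt12Aux

set_option maxHeartbeats 2000000 in
/-- Let `X ⊆ ℝⁿ` be closed convex and `f` a polynomial with `f ≥ m > 0`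
on `X`. Then there exists `N₀ ∈ ℝ` such that for every `N ≥ N₀` the function
`Φ_N(x) = e^{e^{N|x|²}} f(x)` is strongly convex on `X`. -/
theorem stmt12 {n : ℕ} (X : Set (EuclideanSpace ℝ (Fin n)))
    (hXcl : IsClosed X) (hXcon : Convex ℝ X)
    (f : MvPolynomial (Fin n) ℝ) (m : ℝ) (hm : 0 < m)
    (hmf : ∀ x ∈ X, m ≤ MvPolynomial.eval (fun i => x i) f) :
    ∃ N₀ : ℝ, ∀ N : ℝ, N₀ ≤ N →
      ∃ μ > 0, StrongConvexOn X μ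
        (fun x => Real.exp (Real.exp (N * ‖x‖ ^ 2)) * MvPolynomial.eval (fun i => x i) f) := by
  classical
  set gstar : MvPolynomial (Fin n) ℝ :=
    (∑ i, (pderiv i f) ^ 2) + ∑ i : Fin n, ∑ j : Fin n,
      (1 + (pderiv j (pderiv i f)) ^ 2) with hgdef
  obtain ⟨C, hC0, D, hCD⟩ := eval_poly_bound gstar
  have hK0 : (0:ℝ) ≤ (1/m + 1) * C := by positivity
  obtain ⟨N₀, hN₀1, hN₀⟩ := exists_N0 m ((1/m + 1) * C) hm hK0 D
  refine ⟨N₀, fun N hN => ⟨1, one_pos, hXcon, ?_⟩⟩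
  intro x hx y hy a b ha hb hab
  set v : EuclideanSpace ℝ (Fin n) := y - x with hvdef
  set xc : Fin n → ℝ := fun i => x i with hxc
  set vc : Fin n → ℝ := fun i => v i with hvc
  have hN1 : (1:ℝ) ≤ N := le_trans hN₀1 hN
  have hNpos : (0:ℝ) ≤ N := by linarith
  have hpt : ∀ t : ℝ, ∀ i, (x + t • v) i = wL xc vc t i := by
    intro t i
    simp [wL, hxc, hvc, PiLp.add_apply, PiLp.smul_apply, smul_eq_mul]
  have hptfun : ∀ t : ℝ, (fun i => (x + t • v) i) = wL xc vc t := fun t => funext (hpt t)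
  have hnorm : ∀ t : ℝ, ‖x + t • v‖ ^ 2 = QQ xc vc t := by
    intro t
    rw [EuclideanSpace.norm_eq, Real.sq_sqrt (by positivity)]
    unfold QQ
    exact Finset.sum_congr rfl fun i _ => by
      rw [← hpt t i, Real.norm_eq_abs, sq_abs]
  have hpsiPhi : ∀ t : ℝ, Real.exp (Real.exp (N * ‖x + t • v‖ ^ 2))
      * MvPolynomial.eval (fun i => (x + t • v) i) f = psi f xc vc N t := by
    intro t
    rw [hnorm, hptfun]
    rfl
  have hb0 : x + (0:ℝ) • v = x := by simp
  have hb1 : x + (1:ℝ) • v = y := by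
    rw [hvdef]; simp
  have hbb : x + b • v = a • x + b • y := by
    have hab' : a = 1 - b := by linarith
    rw [hvdef, hab']
    ext i
    simp [PiLp.add_apply, PiLp.smul_apply, PiLp.sub_apply, smul_eq_mul]
    ring
  have hmem : ∀ t ∈ Icc (0:ℝ) 1, x + t • v ∈ X := by
    intro t ht
    have h := hXcon hx hy (by linarith [ht.2] : (0:ℝ) ≤ 1 - t) ht.1 (by ring)
    have hpteq : x + t • v = (1 - t) • x + t • y := by
      rw [hvdef]
      ext i
      simp [PiLp.add_apply, PiLp.smul_apply, PiLp.sub_apply, smul_eq_mul]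
      ring
    rwa [hpteq]
  have hVc0 : (0:ℝ) ≤ VV vc := Finset.sum_nonneg fun i _ => sq_nonneg _
  have hpos : ∀ t ∈ Ioo (0:ℝ) 1, VV vc ≤ psidd f xc vc N t := by
    intro t ht
    set S := QQ xc vc t with hS
    have hS0 : (0:ℝ) ≤ S := Finset.sum_nonneg fun i _ => sq_nonneg _
    have hz : x + t • v ∈ X := hmem t ⟨ht.1.le, ht.2.le⟩
    have hA0m : m ≤ A0 f xc vc t := by
      have h := hmf _ hz
      rwa [hptfun t] at h
    set c := C * (1 + S) ^ D with hcdef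
    have hc0 : (0:ℝ) ≤ c := by positivity
    have hev : MvPolynomial.eval (wL xc vc t) gstar
        = (∑ i, (MvPolynomial.eval (wL xc vc t) (pderiv i f)) ^ 2)
          + ∑ i : Fin n, ∑ j : Fin n,
            (1 + (MvPolynomial.eval (wL xc vc t) (pderiv j (pderiv i f))) ^ 2) := by
      rw [hgdef]
      simp [map_sum, map_pow, map_add, map_one]
    have hgs : (∑ i, (MvPolynomial.eval (wL xc vc t) (pderiv i f)) ^ 2)
        + (∑ i : Fin n, ∑ j : Fin n,
          |MvPolynomial.eval (wL xc vc t) (pderiv j (pderiv i f))|) ≤ c := by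
      have step1 : (∑ i : Fin n, ∑ j : Fin n,
            |MvPolynomial.eval (wL xc vc t) (pderiv j (pderiv i f))|)
          ≤ ∑ i : Fin n, ∑ j : Fin n,
            (1 + (MvPolynomial.eval (wL xc vc t) (pderiv j (pderiv i f))) ^ 2) := by
        apply Finset.sum_le_sum; intro i _
        apply Finset.sum_le_sum; intro j _
        nlinarith [sq_abs (MvPolynomial.eval (wL xc vc t) (pderiv j (pderiv i f))),
          abs_nonneg (MvPolynomial.eval (wL xc vc t) (pderiv j (pderiv i f)))]
      calc _ ≤ MvPolynomial.eval (wL xc vc t) gstar := by rw [hev]; linarith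
        _ ≤ |MvPolynomial.eval (wL xc vc t) gstar| := le_abs_self _
        _ ≤ C * (1 + ∑ i, (wL xc vc t i) ^ 2) ^ D := hCD _
        _ = c := rfl
    have habs2 : (0:ℝ) ≤ ∑ i : Fin n, ∑ j : Fin n,
        |MvPolynomial.eval (wL xc vc t) (pderiv j (pderiv i f))| :=
      Finset.sum_nonneg fun i _ => Finset.sum_nonneg fun j _ => abs_nonneg _
    have hsq1 : (0:ℝ) ≤ ∑ i, (MvPolynomial.eval (wL xc vc t) (pderiv i f)) ^ 2 :=
      Finset.sum_nonneg fun i _ => sq_nonneg _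
    have hsum1 : (∑ i, (MvPolynomial.eval (wL xc vc t) (pderiv i f)) ^ 2) ≤ c := by linarith
    have hsum2 : (∑ i : Fin n, ∑ j : Fin n,
        |MvPolynomial.eval (wL xc vc t) (pderiv j (pderiv i f))|) ≤ c := by linarith
    have hA1b : (A1 f xc vc t) ^ 2 ≤ VV vc * c := by
      have hcs := Finset.sum_mul_sq_le_sq_mul_sq Finset.univ vc
        (fun i => MvPolynomial.eval (wL xc vc t) (pderiv i f))
      calc (A1 f xc vc t) ^ 2
          ≤ (∑ i, (vc i) ^ 2) * ∑ i, (MvPolynomial.eval (wL xc vc t) (pderiv i f)) ^ 2 := hcs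
        _ ≤ VV vc * c := mul_le_mul_of_nonneg_left hsum1 hVc0
    have hij : ∀ i j, |vc i| * |vc j| ≤ VV vc := by
      intro i j
      have hi : (vc i) ^ 2 ≤ VV vc :=
        Finset.single_le_sum (fun k _ => sq_nonneg (vc k)) (Finset.mem_univ i)
      have hj : (vc j) ^ 2 ≤ VV vc :=
        Finset.single_le_sum (fun k _ => sq_nonneg (vc k)) (Finset.mem_univ j)
      nlinarith [sq_nonneg (|vc i| - |vc j|), sq_abs (vc i), sq_abs (vc j),
        abs_nonneg (vc i), abs_nonneg (vc j)]
    have hA2b : |A2 f xc vc t| ≤ VV vc * c := by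
      calc |A2 f xc vc t|
          ≤ ∑ i, |vc i * ∑ j, vc j * MvPolynomial.eval (wL xc vc t) (pderiv j (pderiv i f))| :=
            Finset.abs_sum_le_sum_abs _ _
        _ ≤ ∑ i : Fin n, ∑ j : Fin n,
            VV vc * |MvPolynomial.eval (wL xc vc t) (pderiv j (pderiv i f))| := by
            apply Finset.sum_le_sum; intro i _
            rw [abs_mul]
            calc |vc i| * |∑ j, vc j * MvPolynomial.eval (wL xc vc t) (pderiv j (pderiv i f))|
                ≤ |vc i| * ∑ j, |vc j * MvPolynomial.eval (wL xc vc t) (pderiv j (pderiv i f))| := by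
                  apply mul_le_mul_of_nonneg_left (Finset.abs_sum_le_sum_abs _ _) (abs_nonneg _)
              _ = ∑ j, |vc i| * (|vc j|
                    * |MvPolynomial.eval (wL xc vc t) (pderiv j (pderiv i f))|) := by
                  rw [Finset.mul_sum]
                  exact Finset.sum_congr rfl fun j _ => by rw [abs_mul]
              _ ≤ ∑ j : Fin n,
                    VV vc * |MvPolynomial.eval (wL xc vc t) (pderiv j (pderiv i f))| := by
                  apply Finset.sum_le_sum; intro j _
                  have h := hij i j
                  nlinarith [abs_nonneg (MvPolynomial.eval (wL xc vc t) (pderiv j (pderiv i f))),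
                    abs_nonneg (vc i), abs_nonneg (vc j)]
        _ = VV vc * ∑ i : Fin n, ∑ j : Fin n,
              |MvPolynomial.eval (wL xc vc t) (pderiv j (pderiv i f))| := by
            rw [Finset.mul_sum]
            exact Finset.sum_congr rfl fun i _ => (Finset.mul_sum _ _ _).symm
        _ ≤ VV vc * c := mul_le_mul_of_nonneg_left hsum2 hVc0
    have hu1 : (1:ℝ) ≤ uu xc vc N t := Real.one_le_exp (by positivity)
    have hE1 : (1:ℝ) ≤ EE xc vc N t := Real.one_le_exp (by linarith)
    have hbig : 1 + (1/m + 1) * c ≤ 2 * N * m * uu xc vc N t := by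
      have h := hN₀ N hN S hS0
      calc 1 + (1/m + 1) * c = 1 + ((1/m + 1) * C) * (1 + S) ^ D := by rw [hcdef]; ring
        _ ≤ 2 * N * m * Real.exp (N * S) := h
        _ = 2 * N * m * uu xc vc N t := rfl
    have hco := core_ineq m (uu xc vc N t) (EE xc vc N t) (A0 f xc vc t) (A1 f xc vc t)
      (A2 f xc vc t) (QD xc vc t) N (VV vc) c hm hu1 hE1 hA0m hA1b hA2b hc0 hVc0 hNpos hbig
    exact hco
  have hconv := convexG f xc vc N hpos
  have h01 : (0:ℝ) ∈ Icc (0:ℝ) 1 := ⟨le_refl 0, zero_le_one⟩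
  have h11 : (1:ℝ) ∈ Icc (0:ℝ) 1 := ⟨zero_le_one, le_refl 1⟩
  have hkey := hconv.2 h01 h11 ha hb hab
  simp only [smul_eq_mul, mul_zero, mul_one, zero_add] at hkey
  -- hkey : psi b - V/2 * b^2 ≤ a * (psi 0 - V/2*0^2) + b * (psi 1 - V/2*1^2)
  have e0 := hpsiPhi 0
  rw [hb0] at e0
  have e1 := hpsiPhi 1
  rw [hb1] at e1
  have eb := hpsiPhi b
  rw [hbb] at eb
  have hVxy : ‖x - y‖ ^ 2 = VV vc := by
    rw [EuclideanSpace.norm_eq, Real.sq_sqrt (by positivity)]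
    unfold VV
    refine Finset.sum_congr rfl fun i _ => ?_
    rw [Real.norm_eq_abs, sq_abs, hvc]
    simp only [hvdef, PiLp.sub_apply]
    ring
  simp only [smul_eq_mul]
  rw [eb, e0, e1, hVxy]
  have hab' : a = 1 - b := by linarith
  subst hab'
  nlinarith [hkey]
end
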